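/- arXiv:1606.01359 — 7 statements merged into one kernel-verified Lean document; each statement's English description precedes it below -/
import Mathlib

section
/- Let X and Y be nontrivial real Banach spaces, let H be a closed linear subspace of L(X,Y) containing all finite rank operators, and let δ > 0. If the dual space X* is δ-average rough and Y is alternatively octahedral, then H (with the induced operator norm) is δ-average rough. -/
open scoped BigOperators

/-- A Banach space `Z` is `δ`-average rough. -/
def IsAverageRough (Z : Type*) [NormedAddCommGroup Z] (δ : ℝ) : Prop :=
  ∀ n : ℕ, 0 < n → ∀ x : Fin n → Z, (∀ i, ‖x i‖ = 1) →
    ∀ ε > (0 : ℝ), ∀ η > (0 : ℝ), ∃ y : Z, 0 < ‖y‖ ∧ ‖y‖ < η ∧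
      (δ - ε) * ‖y‖ ≤ (1 / (n : ℝ)) * ∑ i, (‖x i + y‖ + ‖x i - y‖) - 2

/-- A Banach space `Z` is alternatively octahedral. -/
def AlternativelyOctahedral (Z : Type*) [NormedAddCommGroup Z] : Prop :=
  ∀ (n : ℕ) (x : Fin n → Z), (∀ i, ‖x i‖ = 1) →
    ∀ ε > (0 : ℝ), ∃ y : Z, ‖y‖ = 1 ∧ ∀ i, 2 - ε ≤ max ‖x i + y‖ ‖x i - y‖

/-- Scaling up a perturbation scales the norm gain at least linearly. -/
lemma scale_ineq {E : Type*} [NormedAddCommGroup E] [NormedSpace ℝ E]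
    (A g : E) (hA : ‖A‖ = 1) {l : ℝ} (hl : 1 ≤ l) :
    l * (‖A + g‖ - 1) ≤ ‖A + l • g‖ - 1 := by
  have hid : l • (A + g) = (A + l • g) + (l - 1) • A := by
    rw [smul_add, sub_smul, one_smul]; abel
  have h1 : ‖l • (A + g)‖ = l * ‖A + g‖ := by
    rw [norm_smul, Real.norm_of_nonneg (by linarith)]
  have h2 : ‖(l - 1) • A‖ = l - 1 := by
    rw [norm_smul, hA, Real.norm_of_nonneg (by linarith)]; ring
  have h3 := norm_add_le (A + l • g) ((l - 1) • A)
  rw [← hid, h1, h2] at h3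
  linarith

/-- Pairing lemma. -/
lemma pair_bound {Y : Type*} [NormedAddCommGroup Y] [NormedSpace ℝ Y]
    (w y : Y) (C θ a : ℝ) (hθ : θ = 1 ∨ θ = -1) (hy : ‖y‖ = 1)
    (hw1 : 1 ≤ ‖w‖) (hw2 : ‖w‖ ≤ 2) (hC : C ≤ ‖w‖) (ha : 0 ≤ a)
    (hali : 2 - a ≤ ‖‖w‖⁻¹ • w + θ • y‖) :
    ‖w‖ + C - 2 * a ≤ ‖w + (θ * C) • y‖ := by
  have hw0 : (0:ℝ) < ‖w‖ := by linarith
  have hwne : ‖w‖ ≠ 0 := ne_of_gt hw0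
  set Cp := max C 0 with hCp
  have hCp0 : 0 ≤ Cp := le_max_right _ _
  have hCpw : Cp ≤ ‖w‖ := max_le hC (by linarith)
  have hCCp : C ≤ Cp := le_max_left _ _
  have hθabs : |θ| = 1 := by rcases hθ with h | h <;> simp [h]
  have hid : w + (θ * Cp) • y
      = ‖w‖ • (‖w‖⁻¹ • w + θ • y) - ((‖w‖ - Cp) * θ) • y := by
    rw [smul_add, smul_smul, mul_inv_cancel₀ hwne, one_smul, smul_smul, sub_mul,
      sub_smul, mul_comm θ Cp]
    abel
  have hs1 : ‖w‖ + Cp - a * ‖w‖ ≤ ‖w + (θ * Cp) • y‖ := by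
    have h1 : ‖(‖w‖ : ℝ) • (‖w‖⁻¹ • w + θ • y)‖ - ‖((‖w‖ - Cp) * θ) • y‖
        ≤ ‖w + (θ * Cp) • y‖ := by
      rw [hid]; exact norm_sub_norm_le _ _
    have h2 : ‖(‖w‖ : ℝ) • (‖w‖⁻¹ • w + θ • y)‖ = ‖w‖ * ‖‖w‖⁻¹ • w + θ • y‖ := by
      rw [norm_smul, Real.norm_of_nonneg hw0.le]
    have h3 : ‖((‖w‖ - Cp) * θ) • y‖ = ‖w‖ - Cp := by
      rw [norm_smul, hy, mul_one, Real.norm_eq_abs, abs_mul, hθabs, mul_one,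
        abs_of_nonneg (by linarith)]
    rw [h2, h3] at h1
    nlinarith
  have hid2 : w + (θ * C) • y = (w + (θ * Cp) • y) + (θ * (C - Cp)) • y := by
    rw [mul_sub, sub_smul]; abel
  have hs2 : ‖w + (θ * Cp) • y‖ - (Cp - C) ≤ ‖w + (θ * C) • y‖ := by
    have h1 : ‖w + (θ * Cp) • y‖ - ‖(θ * (Cp - C)) • y‖ ≤ ‖w + (θ * C) • y‖ := by
      have := norm_sub_norm_le (w + (θ * Cp) • y) ((θ * (Cp - C)) • y)
      have he : (w + (θ * Cp) • y) - (θ * (Cp - C)) • y = w + (θ * C) • y := by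
        rw [mul_sub, sub_smul]; abel
      rw [he] at this
      linarith
    have h2 : ‖(θ * (Cp - C)) • y‖ = Cp - C := by
      rw [norm_smul, hy, mul_one, Real.norm_eq_abs, abs_mul, hθabs, one_mul,
        abs_of_nonneg (by linarith)]
    linarith
  nlinarith

/-- Nearly norming point for a real functional. -/
lemma near_attain {X : Type*} [NormedAddCommGroup X] [NormedSpace ℝ X]
    (g : X →L[ℝ] ℝ) {β : ℝ} (hβ : 0 < β) :
    ∃ u : X, ‖u‖ ≤ 1 ∧ ‖g‖ - β < g u := by
  obtain ⟨u, hu1, hu2⟩ := g.exists_lt_apply_of_lt_opNorm (r := ‖g‖ - β) (by linarith)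
  rw [Real.norm_eq_abs] at hu2
  rcases le_or_gt 0 (g u) with h | h
  · exact ⟨u, hu1.le, by rwa [abs_of_nonneg h] at hu2⟩
  · exact ⟨-u, by simpa using hu1.le, by rw [map_neg]; rwa [abs_of_neg h] at hu2⟩

section PerIndex

variable {X Y : Type*} [NormedAddCommGroup X] [NormedSpace ℝ X]
  [NormedAddCommGroup Y] [NormedSpace ℝ Y]

/-- Lower bound for the norm of `T up + T um`. -/
lemma w_norm_lb (T : X →L[ℝ] Y) (g : Y →L[ℝ] ℝ) (A f : X →L[ℝ] ℝ)
    (up um : X) (r ι c : ℝ)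
    (hA : ‖A‖ = 1) (hfnorm : ‖f‖ = r) (hr8 : r ≤ 1/8) (hι0 : 0 < ι)
    (hιsmall : ι ≤ 1/256)
    (hup1 : ‖up‖ ≤ 1) (hum1 : ‖um‖ ≤ 1)
    (hup2 : ‖A + f‖ - ι < (A + f) up) (hum2 : ‖A - f‖ - ι < (A - f) um)
    (hc1 : 1 - ι ≤ c) (hc2 : c ≤ 1)
    (hgT : ∀ u : X, g (T u) = c * A u) (hg : ‖g‖ = 1) :
    A up + A um - 2 * ι ≤ ‖T up + T um‖ ∧ 1 ≤ ‖T up + T um‖ ∧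
      1 - 2 * r - ι ≤ A up ∧ 1 - 2 * r - ι ≤ A um := by
  have habs : ∀ (h : X →L[ℝ] ℝ) (u : X), ‖u‖ ≤ 1 → |h u| ≤ ‖h‖ := by
    intro h u hu
    have h1 : ‖h u‖ ≤ ‖h‖ * ‖u‖ := h.le_opNorm u
    rw [Real.norm_eq_abs] at h1
    nlinarith [norm_nonneg h]
  have hfp : |f up| ≤ r := hfnorm ▸ habs f up hup1
  have hfm : |f um| ≤ r := hfnorm ▸ habs f um hum1
  have hApb : |A up| ≤ 1 := hA ▸ habs A up hup1
  have hAmb : |A um| ≤ 1 := hA ▸ habs A um hum1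
  have hnAfp : 1 - r ≤ ‖A + f‖ := by
    have h1 : ‖A‖ ≤ ‖A + f‖ + ‖f‖ := by
      calc ‖A‖ = ‖(A + f) - f‖ := by rw [add_sub_cancel_right]
        _ ≤ ‖A + f‖ + ‖f‖ := norm_sub_le _ _
    rw [hA, hfnorm] at h1; linarith
  have hnAfm : 1 - r ≤ ‖A - f‖ := by
    have h1 : ‖A‖ ≤ ‖A - f‖ + ‖f‖ := by
      calc ‖A‖ = ‖(A - f) + f‖ := by rw [sub_add_cancel]
        _ ≤ ‖A - f‖ + ‖f‖ := norm_add_le _ _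
    rw [hA, hfnorm] at h1; linarith
  have h1 : ‖A + f‖ - ι < A up + f up := by
    rwa [ContinuousLinearMap.add_apply] at hup2
  have h2 : ‖A - f‖ - ι < A um - f um := by
    rwa [ContinuousLinearMap.sub_apply] at hum2
  have hpp : 1 - 2 * r - ι ≤ A up := by
    cases' abs_le.mp hfp with ha hb; linarith
  have hpm : 1 - 2 * r - ι ≤ A um := by
    cases' abs_le.mp hfm with ha hb; linarith
  have hApnn : (0:ℝ) ≤ A up := by linarith
  have hAmnn : (0:ℝ) ≤ A um := by linarith
  have hgw : g (T up + T um) = c * (A up + A um) := by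
    rw [map_add, hgT, hgT]; ring
  have hgw_le : g (T up + T um) ≤ ‖T up + T um‖ := by
    have h3 : ‖g (T up + T um)‖ ≤ ‖g‖ * ‖T up + T um‖ := g.le_opNorm _
    rw [Real.norm_eq_abs, hg, one_mul] at h3
    exact le_trans (le_abs_self _) h3
  have h5 : (1 - ι) * (A up + A um) ≤ c * (A up + A um) :=
    mul_le_mul_of_nonneg_right hc1 (by linarith)
  have h6 : A up + A um - 2 * ι ≤ (1 - ι) * (A up + A um) := by
    have hb1 := (abs_le.mp hApb).2
    have hb2 := (abs_le.mp hAmb).2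
    nlinarith [hι0.le]
  have hwlb : A up + A um - 2 * ι ≤ ‖T up + T um‖ := by
    rw [hgw] at hgw_le
    linarith
  exact ⟨hwlb, by linarith, hpp, hpm⟩

set_option maxHeartbeats 1000000 in
/-- The key per-index estimate. -/
lemma per_index (T : X →L[ℝ] Y) (g : Y →L[ℝ] ℝ) (A f : X →L[ℝ] ℝ)
    (up um : X) (y₀ : Y) (r ι c : ℝ)
    (hA : ‖A‖ = 1) (hfnorm : ‖f‖ = r) (hr8 : r ≤ 1/8) (hι0 : 0 < ι)
    (hιsmall : ι ≤ 1/256)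
    (hup1 : ‖up‖ ≤ 1) (hum1 : ‖um‖ ≤ 1)
    (hup2 : ‖A + f‖ - ι < (A + f) up) (hum2 : ‖A - f‖ - ι < (A - f) um)
    (hc1 : 1 - ι ≤ c) (hc2 : c ≤ 1)
    (hgT : ∀ u : X, g (T u) = c * A u) (hg : ‖g‖ = 1)
    (hT1 : ‖T‖ = 1) (hy₀ : ‖y₀‖ = 1)
    (hmax : 2 - ι ≤ max ‖(‖T up + T um‖⁻¹ : ℝ) • (T up + T um) + y₀‖
      ‖(‖T up + T um‖⁻¹ : ℝ) • (T up + T um) - y₀‖) :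
    ‖A + f‖ + ‖A - f‖ - 8 * ι
      ≤ ‖T + f.smulRight y₀‖ + ‖T - f.smulRight y₀‖ := by
  obtain ⟨hwlb, hw1, hpp, hpm⟩ := w_norm_lb T g A f up um r ι c hA hfnorm hr8 hι0
    hιsmall hup1 hum1 hup2 hum2 hc1 hc2 hgT hg
  set S : X →L[ℝ] Y := f.smulRight y₀ with hS_def
  set w : Y := T up + T um with hw_def
  have habs : ∀ (h : X →L[ℝ] ℝ) (u : X), ‖u‖ ≤ 1 → |h u| ≤ ‖h‖ := by
    intro h u hu
    have h1 : ‖h u‖ ≤ ‖h‖ * ‖u‖ := h.le_opNorm u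
    rw [Real.norm_eq_abs] at h1
    nlinarith [norm_nonneg h]
  have hfp : |f up| ≤ r := hfnorm ▸ habs f up hup1
  have hfm : |f um| ≤ r := hfnorm ▸ habs f um hum1
  have h1 : ‖A + f‖ - ι < A up + f up := by
    rwa [ContinuousLinearMap.add_apply] at hup2
  have h2 : ‖A - f‖ - ι < A um - f um := by
    rwa [ContinuousLinearMap.sub_apply] at hum2
  have hw2 : ‖w‖ ≤ 2 := by
    rw [hw_def]
    calc ‖T up + T um‖ ≤ ‖T up‖ + ‖T um‖ := norm_add_le _ _
      _ ≤ ‖T‖ * ‖up‖ + ‖T‖ * ‖um‖ := add_le_add (T.le_opNorm _) (T.le_opNorm _)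
      _ ≤ 2 := by rw [hT1]; nlinarith
  set C : ℝ := f up - f um with hC_def
  have hCw : C ≤ ‖w‖ := by
    cases' abs_le.mp hfp with hfp1 hfp2
    cases' abs_le.mp hfm with hfm1 hfm2
    have : C ≤ 2 * r := by rw [hC_def]; linarith
    linarith
  have hSapp : ∀ u : X, S u = f u • y₀ := fun u => rfl
  have hopb : ∀ (a b : X), ‖a‖ ≤ 1 → ‖b‖ ≤ 1 →
      ‖(T + S) a + (T - S) b‖ ≤ ‖T + S‖ + ‖T - S‖ := by
    intro a b ha hb
    calc ‖(T + S) a + (T - S) b‖ ≤ ‖(T + S) a‖ + ‖(T - S) b‖ := norm_add_le _ _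
      _ ≤ ‖T + S‖ * ‖a‖ + ‖T - S‖ * ‖b‖ :=
        add_le_add ((T + S).le_opNorm _) ((T - S).le_opNorm _)
      _ ≤ ‖T + S‖ + ‖T - S‖ := by
        nlinarith [norm_nonneg (T + S), norm_nonneg (T - S)]
  rcases le_max_iff.mp hmax with hal | hal
  · have hpair := pair_bound w y₀ C 1 ι (Or.inl rfl) hy₀ hw1 hw2 hCw hι0.le
      (by rwa [one_smul])
    have he : (T + S) up + (T - S) um = w + (1 * C) • y₀ := by
      rw [ContinuousLinearMap.add_apply, ContinuousLinearMap.sub_apply, hSapp, hSapp,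
        hw_def, hC_def, one_mul, sub_smul]
      abel
    have hop := hopb up um hup1 hum1
    rw [he] at hop
    linarith
  · have hpair := pair_bound w y₀ C (-1) ι (Or.inr rfl) hy₀ hw1 hw2 hCw hι0.le
      (by rw [neg_one_smul, ← sub_eq_add_neg]; exact hal)
    have he : (T + S) um + (T - S) up = w + ((-1) * C) • y₀ := by
      rw [ContinuousLinearMap.add_apply, ContinuousLinearMap.sub_apply, hSapp, hSapp,
        hw_def, hC_def, neg_one_mul, neg_sub, sub_smul]
      abel
    have hop := hopb um up hum1 hup1
    rw [he] at hop
    linarith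

end PerIndex
set_option maxHeartbeats 2000000 in
theorem averageRough_of_dual_averageRough_of_altOctahedral
    (X Y : Type*) [NormedAddCommGroup X] [NormedSpace ℝ X] [CompleteSpace X] [Nontrivial X]
    [NormedAddCommGroup Y] [NormedSpace ℝ Y] [CompleteSpace Y] [Nontrivial Y]
    (H : Submodule ℝ (X →L[ℝ] Y)) (hHclosed : IsClosed (H : Set (X →L[ℝ] Y)))
    (hHfin : ∀ T : X →L[ℝ] Y, FiniteDimensional ℝ (LinearMap.range (T : X →ₗ[ℝ] Y)) → T ∈ H)
    (δ : ℝ) (hδ : 0 < δ)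
    (hX : IsAverageRough (StrongDual ℝ X) δ)
    (hY : AlternativelyOctahedral Y) :
    IsAverageRough H δ := by
  intro n hn x hx ε hε η hη
  have hn' : (0:ℝ) < (n:ℝ) := by exact_mod_cast hn
  -- constants
  set r : ℝ := min η 1 / 8 with hr_def
  have hr0 : 0 < r := by positivity
  have hrη : r < η := by
    have : min η 1 ≤ η := min_le_left _ _
    have : r ≤ η / 8 := by rw [hr_def]; linarith
    linarith
  have hr8 : r ≤ 1 / 8 := by
    have : min η 1 ≤ 1 := min_le_right _ _
    rw [hr_def]; linarith
  set ι : ℝ := min ε 1 * r / 32 with hι_def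
  have hι0 : 0 < ι := by
    have : 0 < min ε 1 := lt_min hε one_pos
    positivity
  have hιε : 32 * ι ≤ ε * r := by
    have h1 : min ε 1 ≤ ε := min_le_left _ _
    rw [hι_def]; nlinarith
  have hιsmall : ι ≤ 1 / 256 := by
    have h1 : min ε 1 ≤ 1 := min_le_right _ _
    rw [hι_def]; nlinarith
  -- the operators
  set T : Fin n → X →L[ℝ] Y := fun i => (x i : X →L[ℝ] Y) with hT_def
  have hT : ∀ i, ‖T i‖ = 1 := fun i => hx i
  -- nearly norming points and dual functionals
  have hpick : ∀ i, ∃ xi : X, ‖xi‖ ≤ 1 ∧ 1 - ι < ‖T i xi‖ := by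
    intro i
    obtain ⟨u, hu1, hu2⟩ := (T i).exists_lt_apply_of_lt_opNorm (r := 1 - ι)
      (by rw [hT i]; linarith)
    exact ⟨u, hu1.le, hu2⟩
  choose xs hxs1 hxs2 using hpick
  have hTxs : ∀ i, T i (xs i) ≠ 0 := by
    intro i h
    have := hxs2 i
    rw [h, norm_zero] at this
    linarith
  choose ys hys1 hys2 using fun i => exists_dual_vector ℝ (T i (xs i)) (norm_ne_zero_iff.mpr (hTxs i))
  set xst : Fin n → StrongDual ℝ X := fun i => (ys i).comp (T i) with hxst_def
  have hxst_le : ∀ i, ‖xst i‖ ≤ 1 := by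
    intro i
    calc ‖xst i‖ ≤ ‖ys i‖ * ‖T i‖ := ContinuousLinearMap.opNorm_comp_le _ _
    _ = 1 := by rw [hys1 i, hT i, one_mul]
  have hxst_ge : ∀ i, 1 - ι < ‖xst i‖ := by
    intro i
    have h1 : xst i (xs i) = ‖T i (xs i)‖ := by
      simp only [hxst_def, ContinuousLinearMap.comp_apply]
      exact hys2 i
    have h2 : xst i (xs i) ≤ ‖xst i‖ * ‖xs i‖ := le_trans (le_abs_self _)
      (by rw [← Real.norm_eq_abs]; exact (xst i).le_opNorm _)
    have h3 := hxs2 i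
    have h4 : ‖xst i‖ * ‖xs i‖ ≤ ‖xst i‖ * 1 := by
      have := (norm_nonneg (xst i))
      nlinarith [hxs1 i]
    linarith [h1 ▸ h2, h4]
  have hxst_pos : ∀ i, (0:ℝ) < ‖xst i‖ := by
    intro i; have := hxst_ge i; linarith [hιsmall]
  -- normalized functionals
  set A : Fin n → StrongDual ℝ X := fun i => (‖xst i‖⁻¹ : ℝ) • xst i with hA_def
  have hA : ∀ i, ‖A i‖ = 1 := by
    intro i
    rw [hA_def]
    simp only
    rw [norm_smul, Real.norm_eq_abs, abs_of_nonneg (inv_nonneg.mpr (norm_nonneg _)),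
      inv_mul_cancel₀ (ne_of_gt (hxst_pos i))]
  have hxstA : ∀ i (u : X), xst i u = ‖xst i‖ * A i u := by
    intro i u
    rw [hA_def]
    simp only [ContinuousLinearMap.coe_smul', Pi.smul_apply, smul_eq_mul]
    field_simp
    exact (mul_div_cancel_right₀ _ (ne_of_gt (hxst_pos i))).symm
  -- apply average roughness of the dual
  obtain ⟨f₀, hf₀0, hf₀r, hf₀⟩ := hX n hn A hA (ε/4) (by positivity) r hr0
  set l : ℝ := r / ‖f₀‖ with hl_def
  have hl1 : 1 ≤ l := by
    rw [hl_def, le_div_iff₀ hf₀0]; linarith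
  set f : StrongDual ℝ X := l • f₀ with hf_def
  have hfnorm : ‖f‖ = r := by
    rw [hf_def, norm_smul, Real.norm_eq_abs, abs_of_pos (by linarith : (0:ℝ) < l), hl_def]
    field_simp
  -- key sum estimate for the scaled functional
  have hlf : l * ‖f₀‖ = r := by
    rw [hl_def]; field_simp
  have hsum_f : 2 * n + (δ - ε/4) * (n * r) ≤ ∑ i, (‖A i + f‖ + ‖A i - f‖) := by
    set G₀ : ℝ := ∑ i, (‖A i + f₀‖ + ‖A i - f₀‖) with hG₀
    have hper : ∀ i, 2 + l * (‖A i + f₀‖ + ‖A i - f₀‖ - 2) ≤ ‖A i + f‖ + ‖A i - f‖ := by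
      intro i
      have h1 := scale_ineq (A i) f₀ (hA i) hl1
      have h2 := scale_ineq (A i) (-f₀) (hA i) hl1
      rw [smul_neg] at h2
      simp only [← sub_eq_add_neg] at h2
      rw [← hf_def] at h1 h2
      nlinarith [h1, h2]
    have hf₀n : (δ - ε/4) * ‖f₀‖ * n ≤ G₀ - 2 * n := by
      have h2 : (n:ℝ) * ((1/(n:ℝ)) * G₀ - 2) = G₀ - 2 * n := by
        field_simp
      have h3 := mul_le_mul_of_nonneg_left hf₀ hn'.le
      rw [h2] at h3
      nlinarith [h3]
    have hstep : (δ - ε/4) * (n * r) ≤ l * (G₀ - 2 * n) := by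
      have he : l * ((δ - ε/4) * ‖f₀‖ * n) = (δ - ε/4) * (n * r) := by
        rw [← hlf]; ring
      calc (δ - ε/4) * (n * r) = l * ((δ - ε/4) * ‖f₀‖ * n) := he.symm
        _ ≤ l * (G₀ - 2 * n) := mul_le_mul_of_nonneg_left hf₀n (by linarith)
    have hsum1 : ∑ i, (2 + l * (‖A i + f₀‖ + ‖A i - f₀‖ - 2))
        ≤ ∑ i, (‖A i + f‖ + ‖A i - f‖) :=
      Finset.sum_le_sum fun i _ => hper i
    have hsum2 : ∑ i, (2 + l * (‖A i + f₀‖ + ‖A i - f₀‖ - 2))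
        = 2 * n + l * (G₀ - 2 * n) := by
      rw [hG₀, Finset.sum_add_distrib, ← Finset.mul_sum, Finset.sum_sub_distrib]
      simp only [Finset.sum_const, Finset.card_univ, Fintype.card_fin, nsmul_eq_mul]
      ring
    rw [hsum2] at hsum1
    linarith
  -- near attaining points for both signs
  choose up hup1 hup2 using fun i => near_attain (A i + f) hι0
  choose um hum1 hum2 using fun i => near_attain (A i - f) hι0
  have hc1 : ∀ i, 1 - ι ≤ ‖xst i‖ := fun i => (hxst_ge i).le
  have hgT : ∀ i (u : X), ys i (T i u) = ‖xst i‖ * A i u := by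
    intro i u
    have e1 : ys i (T i u) = xst i u := by
      rw [hxst_def]; simp [ContinuousLinearMap.comp_apply]
    rw [e1, hxstA i]
  have hwfacts := fun i => w_norm_lb (T i) (ys i) (A i) f (up i) (um i) r ι (‖xst i‖)
    (hA i) hfnorm hr8 hι0 hιsmall (hup1 i) (hum1 i) (hup2 i) (hum2 i)
    (hc1 i) (hxst_le i) (hgT i) (hys1 i)
  have hwne : ∀ i, T i (up i) + T i (um i) ≠ 0 := by
    intro i h
    have := (hwfacts i).2.1
    rw [h, norm_zero] at this
    linarith
  obtain ⟨y₀, hy₀, hmax⟩ := hY n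
    (fun i => (‖T i (up i) + T i (um i)‖⁻¹ : ℝ) • (T i (up i) + T i (um i)))
    (fun i => norm_smul_inv_norm (𝕜 := ℝ) (hwne i)) ι hι0
  set S : X →L[ℝ] Y := f.smulRight y₀ with hS_def
  have hSnorm : ‖S‖ = r := by
    rw [hS_def, ContinuousLinearMap.norm_smulRight_apply, hy₀, mul_one, hfnorm]
  have hSH : S ∈ H := by
    apply hHfin
    have hle : LinearMap.range (S : X →ₗ[ℝ] Y) ≤ Submodule.span ℝ {y₀} := by
      rintro v ⟨u, rfl⟩
      have h : (S : X →ₗ[ℝ] Y) u = f u • y₀ := rfl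
      rw [h]
      exact Submodule.smul_mem _ _ (Submodule.mem_span_singleton_self y₀)
    exact Submodule.finiteDimensional_of_le hle
  have key : ∀ i, ‖A i + f‖ + ‖A i - f‖ - 8 * ι ≤ ‖T i + S‖ + ‖T i - S‖ :=
    fun i => per_index (T i) (ys i) (A i) f (up i) (um i) y₀ r ι (‖xst i‖)
      (hA i) hfnorm hr8 hι0 hιsmall (hup1 i) (hum1 i) (hup2 i) (hum2 i)
      (hc1 i) (hxst_le i) (hgT i) (hys1 i) (hT i) hy₀ (hmax i)
  have hsumT : (∑ i, (‖A i + f‖ + ‖A i - f‖)) - 8 * ι * n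
      ≤ ∑ i, (‖T i + S‖ + ‖T i - S‖) := by
    have h1 : ∑ i, (‖A i + f‖ + ‖A i - f‖ - 8 * ι) ≤ ∑ i, (‖T i + S‖ + ‖T i - S‖) :=
      Finset.sum_le_sum fun i _ => key i
    have h2 : ∑ i, (‖A i + f‖ + ‖A i - f‖ - 8 * ι)
        = (∑ i, (‖A i + f‖ + ‖A i - f‖)) - 8 * ι * n := by
      rw [Finset.sum_sub_distrib, Finset.sum_const, Finset.card_univ, Fintype.card_fin,
        nsmul_eq_mul]
      ring
    linarith
  refine ⟨⟨S, hSH⟩, ?_, ?_, ?_⟩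
  · rw [Submodule.coe_norm, hSnorm]; exact hr0
  · rw [Submodule.coe_norm, hSnorm]; exact hrη
  · have hcoe : ∀ i, ‖x i + ⟨S, hSH⟩‖ + ‖x i - ⟨S, hSH⟩‖ = ‖T i + S‖ + ‖T i - S‖ := by
      intro i
      rw [Submodule.coe_norm, Submodule.coe_norm]
      rfl
    rw [Submodule.coe_norm]
    simp only [hcoe]
    have hfinal : 2 * n + (δ - ε) * (n * r) ≤ ∑ i, (‖T i + S‖ + ‖T i - S‖) := by
      have h8 : 8 * ι * n ≤ (ε * r / 4) * n := by nlinarith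
      nlinarith [hsum_f, hsumT]
    have hdiv : (δ - ε) * r ≤ (1 / (n:ℝ)) * (∑ i, (‖T i + S‖ + ‖T i - S‖)) - 2 := by
      have h : (δ - ε) * r + 2 ≤ 1/(n:ℝ) * (∑ i, (‖T i + S‖ + ‖T i - S‖)) := by
        rw [div_mul_eq_mul_div, one_mul, le_div_iff₀ hn']
        nlinarith [hfinal]
      linarith
    rw [hSnorm]
    exact hdiv
end

section
/- Let X and Y be nontrivial real Banach spaces, let H be a closed linear subspace of L(X,Y) containing all finite rank operators, and let δ > 0. If the dual space X* is alternatively octahedral and Y is δ-average rough, then H (with the induced operator norm) is δ-average rough. -/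
open scoped BigOperators

/-- A Banach space `Z` is `δ`-rough. -/
def IsRough (Z : Type*) [NormedAddCommGroup Z] (δ : ℝ) : Prop :=
  ∀ x : Z, ‖x‖ = 1 →
    ∀ ε > (0 : ℝ), ∀ η > (0 : ℝ), ∃ y : Z, 0 < ‖y‖ ∧ ‖y‖ < η ∧
      (δ - ε) * ‖y‖ ≤ ‖x + y‖ + ‖x - y‖ - 2

/-- A Banach space `Z` is non-rough if it is `ε`-rough for no `ε > 0`. -/
def NonRough (Z : Type*) [NormedAddCommGroup Z] : Prop :=
  ¬ ∃ ε > (0 : ℝ), IsRough Z ε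

/-- A Banach space `Z` is octahedral. -/
def Octahedral (Z : Type*) [NormedAddCommGroup Z] : Prop :=
  ∀ (n : ℕ) (x : Fin n → Z), (∀ i, ‖x i‖ = 1) →
    ∀ ε > (0 : ℝ), ∃ y : Z, ‖y‖ = 1 ∧ ∀ i, 2 - ε ≤ ‖x i + y‖

/-- A Banach space `X` is weakly `δ`-average rough: every non-empty relatively weak*
open subset of the closed unit ball of the dual has diameter at least `δ`. -/
def WeaklyAverageRough (X : Type*) [NormedAddCommGroup X] [NormedSpace ℝ X] (δ : ℝ) : Prop :=
  ∀ V : Set (WeakDual ℝ X), IsOpen V →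
    ∀ U : Set (StrongDual ℝ X),
      U = {f : StrongDual ℝ X | ‖f‖ ≤ 1} ∩
            {f : StrongDual ℝ X | StrongDual.toWeakDual f ∈ V} →
      U.Nonempty → δ ≤ Metric.diam U


/-- Convexity scaling: for a unit vector `u` and `c ≥ 1`. -/
private lemma dar_aux_conv {Y : Type*} [NormedAddCommGroup Y] [NormedSpace ℝ Y] (u v : Y) (hu : ‖u‖ = 1)
    {c : ℝ} (hc : 1 ≤ c) :
    c * (‖u + v‖ + ‖u - v‖ - 2) ≤ ‖u + c • v‖ + ‖u - c • v‖ - 2 := by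
  have hc0 : 0 < c := lt_of_lt_of_le one_pos hc
  have hcc : c⁻¹ * c = 1 := inv_mul_cancel₀ hc0.ne'
  have hci : c⁻¹ ≤ 1 := by
    rw [inv_le_one_iff₀]; right; exact hc
  have hci0 : 0 ≤ c⁻¹ := by positivity
  have e1 : u + v = c⁻¹ • (u + c • v) + (1 - c⁻¹) • u := by
    rw [smul_add, smul_smul, hcc, one_smul, sub_smul, one_smul]; abel
  have e2 : u - v = c⁻¹ • (u - c • v) + (1 - c⁻¹) • u := by
    rw [smul_sub, smul_smul, hcc, one_smul, sub_smul, one_smul]; abel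
  have h1 : ‖u + v‖ ≤ c⁻¹ * ‖u + c • v‖ + (1 - c⁻¹) := by
    calc ‖u + v‖ ≤ ‖c⁻¹ • (u + c • v)‖ + ‖(1 - c⁻¹) • u‖ := by rw [e1]; exact norm_add_le _ _
      _ = c⁻¹ * ‖u + c • v‖ + (1 - c⁻¹) := by
          rw [norm_smul, norm_smul, Real.norm_eq_abs, Real.norm_eq_abs, hu,
            abs_of_nonneg hci0, abs_of_nonneg (by linarith), mul_one]
  have h2 : ‖u - v‖ ≤ c⁻¹ * ‖u - c • v‖ + (1 - c⁻¹) := by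
    calc ‖u - v‖ ≤ ‖c⁻¹ • (u - c • v)‖ + ‖(1 - c⁻¹) • u‖ := by rw [e2]; exact norm_add_le _ _
      _ = c⁻¹ * ‖u - c • v‖ + (1 - c⁻¹) := by
          rw [norm_smul, norm_smul, Real.norm_eq_abs, Real.norm_eq_abs, hu,
            abs_of_nonneg hci0, abs_of_nonneg (by linarith), mul_one]
  have h4 : ‖u + v‖ + ‖u - v‖ - 2 ≤ c⁻¹ * (‖u + c • v‖ + ‖u - c • v‖ - 2) := by
    have : c⁻¹ * (‖u + c • v‖ + ‖u - c • v‖ - 2)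
        = c⁻¹ * ‖u + c • v‖ + c⁻¹ * ‖u - c • v‖ - 2 * c⁻¹ := by ring
    linarith
  calc c * (‖u + v‖ + ‖u - v‖ - 2)
      ≤ c * (c⁻¹ * (‖u + c • v‖ + ‖u - c • v‖ - 2)) := by
        exact mul_le_mul_of_nonneg_left h4 hc0.le
    _ = ‖u + c • v‖ + ‖u - c • v‖ - 2 := by
        rw [← mul_assoc, mul_inv_cancel₀ hc0.ne', one_mul]

private lemma dar_avg_sum_sub {n : ℕ} (hn : 0 < n) (A : Fin n → ℝ) (C : ℝ) :
    (1/(n:ℝ)) * ∑ i, (A i - C) = (1/(n:ℝ)) * ∑ i, A i - C := by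
  have hn' : (n:ℝ) ≠ 0 := Nat.cast_ne_zero.mpr hn.ne'
  rw [Finset.sum_sub_distrib, Finset.sum_const, Finset.card_univ, Fintype.card_fin,
    mul_sub, nsmul_eq_mul]
  congr 1
  field_simp
private lemma dar_exact_rough {Y : Type*} [NormedAddCommGroup Y] [NormedSpace ℝ Y] {δ : ℝ}
    (hY : IsAverageRough Y δ) (n : ℕ) (hn : 0 < n) (u : Fin n → Y) (hu : ∀ i, ‖u i‖ = 1)
    (ε : ℝ) (hε : 0 < ε) (r : ℝ) (hr : 0 < r) :
    ∃ y : Y, ‖y‖ = r ∧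
      (δ - ε) * r ≤ (1 / (n : ℝ)) * ∑ i, (‖u i + y‖ + ‖u i - y‖) - 2 := by
  obtain ⟨y₀, hy0, hyr, hkey⟩ := hY n hn u hu ε hε r hr
  set c : ℝ := r / ‖y₀‖ with hcdef
  have hy0' : ‖y₀‖ ≠ 0 := hy0.ne'
  have hc1 : 1 ≤ c := (one_le_div hy0).mpr hyr.le
  have hc0 : 0 < c := lt_of_lt_of_le one_pos hc1
  refine ⟨c • y₀, ?_, ?_⟩
  · rw [norm_smul, Real.norm_eq_abs, abs_of_pos hc0, hcdef, div_mul_cancel₀ _ hy0']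
  · have h1 : (δ - ε) * r ≤ c * ((1/(n:ℝ)) * ∑ i, (‖u i + y₀‖ + ‖u i - y₀‖) - 2) := by
      have h := mul_le_mul_of_nonneg_left hkey hc0.le
      calc (δ - ε) * r = c * ((δ - ε) * ‖y₀‖) := by
            rw [hcdef]; field_simp
        _ ≤ _ := h
    refine h1.trans ?_
    have hninv : (0:ℝ) ≤ 1/(n:ℝ) := by positivity
    rw [← dar_avg_sum_sub hn (fun i => ‖u i + y₀‖ + ‖u i - y₀‖) 2,
        ← dar_avg_sum_sub hn (fun i => ‖u i + c • y₀‖ + ‖u i - c • y₀‖) 2,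
        ← mul_assoc, mul_comm c (1/(n:ℝ)), mul_assoc, Finset.mul_sum]
    refine mul_le_mul_of_nonneg_left (Finset.sum_le_sum fun i _ => ?_) hninv
    exact dar_aux_conv (u i) y₀ (hu i) hc1

private lemma dar_step_g {X Y : Type*} [NormedAddCommGroup X] [NormedSpace ℝ X] [NormedAddCommGroup Y]
    [NormedSpace ℝ Y] (T : X →L[ℝ] Y) (hT : ‖T‖ = 1) {α : ℝ} (hα0 : 0 < α) (hα : α ≤ 1/4) :
    ∃ g : X →L[ℝ] ℝ, ‖g‖ = 1 ∧ ∀ z : X, 1 - 2*α ≤ g z → 1 - 3*α ≤ ‖T z‖ := by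
  obtain ⟨x, hx1, hx2⟩ := T.exists_lt_apply_of_lt_opNorm (show 1 - α < ‖T‖ by rw [hT]; linarith)
  have hTx0 : T x ≠ 0 := by
    intro h; rw [h, norm_zero] at hx2; linarith
  obtain ⟨ys, hys1, hys2⟩ := exists_dual_vector ℝ (T x) (norm_ne_zero_iff.mpr hTx0)
  set g' : X →L[ℝ] ℝ := ys.comp T with hg'def
  have hg'x : g' x = ‖T x‖ := by simpa [hg'def] using hys2
  have hg'le : ‖g'‖ ≤ 1 := by
    calc ‖g'‖ ≤ ‖ys‖ * ‖T‖ := ys.opNorm_comp_le T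
      _ = 1 := by rw [hys1, hT, mul_one]
  have hg'ge : 1 - α ≤ ‖g'‖ := by
    have h1 : ‖T x‖ ≤ ‖g' x‖ := by
      rw [Real.norm_eq_abs, ← hg'x]; exact le_abs_self _
    have h2 : ‖g' x‖ ≤ ‖g'‖ := g'.unit_le_opNorm x hx1.le
    linarith
  have hg'pos : 0 < ‖g'‖ := by linarith
  refine ⟨‖g'‖⁻¹ • g', ?_, ?_⟩
  · rw [norm_smul ‖g'‖⁻¹ g', Real.norm_eq_abs, abs_of_pos (show (0:ℝ) < ‖g'‖⁻¹ by positivity),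
      inv_mul_cancel₀ hg'pos.ne']
  · intro z hz
    have happ : (‖g'‖⁻¹ • g') z = ‖g'‖⁻¹ * g' z := rfl
    rw [happ] at hz
    have hz0 : 0 ≤ ‖g'‖⁻¹ * g' z := le_trans (by linarith) hz
    have hgz : 1 - 3*α ≤ g' z := by
      have := mul_le_mul_of_nonneg_left hz hg'pos.le
      rw [← mul_assoc, mul_inv_cancel₀ hg'pos.ne', one_mul] at this
      nlinarith
    have : g' z ≤ ‖T z‖ := by
      have h1 : g' z ≤ ‖g' z‖ := le_abs_self _
      have h2 : ‖ys (T z)‖ ≤ ‖ys‖ * ‖T z‖ := ys.le_opNorm _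
      have h3 : g' z = ys (T z) := rfl
      rw [hys1, one_mul] at h2
      rw [h3] at h1
      linarith
    linarith

private lemma dar_step_z {X : Type*} [NormedAddCommGroup X] [NormedSpace ℝ X]
    (g f : X →L[ℝ] ℝ) (hg : ‖g‖ = 1) (hf : ‖f‖ = 1) {α : ℝ} (hα0 : 0 < α)
    (hmax : 2 - α ≤ max ‖g + f‖ ‖g - f‖) :
    ∃ z : X, ‖z‖ ≤ 1 ∧ 1 - 2*α ≤ g z ∧ 1 - 2*α ≤ |f z| := by
  have bound : ∀ (h : X →L[ℝ] ℝ), ‖h‖ = 1 → ∀ z : X, ‖z‖ ≤ 1 → -1 ≤ h z ∧ h z ≤ 1 := by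
    intro h hh z hz
    have := h.unit_le_opNorm z hz
    rw [hh, Real.norm_eq_abs] at this
    exact abs_le.mp this
  have key : ∀ F : X →L[ℝ] ℝ, 2 - α ≤ ‖F‖ → ∃ z : X, ‖z‖ ≤ 1 ∧ 2 - 2*α ≤ F z := by
    intro F hF
    obtain ⟨z₀, hz₀, hz₀2⟩ := F.exists_lt_apply_of_lt_opNorm (show 2 - 2*α < ‖F‖ by linarith)
    rcases le_or_gt 0 (F z₀) with h | h
    · rw [Real.norm_eq_abs, abs_of_nonneg h] at hz₀2
      exact ⟨z₀, hz₀.le, by linarith⟩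
    · refine ⟨-z₀, by simpa using hz₀.le, ?_⟩
      rw [Real.norm_eq_abs, abs_of_neg h] at hz₀2
      rw [map_neg]; linarith
  rcases le_max_iff.mp hmax with h | h
  · obtain ⟨z, hz1, hz2⟩ := key (g + f) h
    have hgz := bound g hg z hz1
    have hfz := bound f hf z hz1
    have hsum : g z + f z = (g + f) z := rfl
    refine ⟨z, hz1, by linarith, ?_⟩
    have : 1 - 2*α ≤ f z := by linarith
    exact le_trans this (le_abs_self _)
  · obtain ⟨z, hz1, hz2⟩ := key (g - f) h
    have hgz := bound g hg z hz1
    have hfz := bound f hf z hz1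
    have hsum : g z - f z = (g - f) z := rfl
    refine ⟨z, hz1, by linarith, ?_⟩
    have : 1 - 2*α ≤ -(f z) := by linarith
    exact le_trans this (neg_le_abs _)

private lemma dar_per_op {X Y : Type*} [NormedAddCommGroup X] [NormedSpace ℝ X] [NormedAddCommGroup Y]
    [NormedSpace ℝ Y] (T : X →L[ℝ] Y) (f : X →L[ℝ] ℝ) (hf : ‖f‖ = 1) (y : Y)
    (z : X) (hz : ‖z‖ ≤ 1) {α : ℝ} (hα0 : 0 < α) (hα : α ≤ 1/4)
    (hTz : 1 - 3*α ≤ ‖T z‖) (hTz1 : ‖T z‖ ≤ 1) (hfz : 1 - 2*α ≤ |f z|) :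
    ‖(‖T z‖⁻¹ • T z) + y‖ + ‖(‖T z‖⁻¹ • T z) - y‖ - (6*α + 4*α*‖y‖)
      ≤ ‖T + f.smulRight y‖ + ‖T - f.smulRight y‖ := by
  set b : ℝ := ‖T z‖ with hbdef
  set t : ℝ := |f z| with htdef
  set u : Y := b⁻¹ • T z with hudef
  set r : ℝ := ‖y‖ with hrdef
  have hb0 : 0 < b := by linarith
  have ht1 : t ≤ 1 := by
    have := f.unit_le_opNorm z hz
    rw [hf, Real.norm_eq_abs] at this
    exact this
  have hr0 : 0 ≤ r := norm_nonneg y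
  have hbu : b • u = T z := by
    rw [hudef, smul_smul, mul_inv_cancel₀ hb0.ne', one_smul]
  -- (1) operator norms dominate values at z
  have h1 : ‖T z + f z • y‖ ≤ ‖T + f.smulRight y‖ := by
    have := (T + f.smulRight y).unit_le_opNorm z hz
    simpa using this
  have h2 : ‖T z - f z • y‖ ≤ ‖T - f.smulRight y‖ := by
    have := (T - f.smulRight y).unit_le_opNorm z hz
    simpa using this
  -- (2) replace f z by t = |f z|
  have h3 : ‖T z + t • y‖ + ‖T z - t • y‖ = ‖T z + f z • y‖ + ‖T z - f z • y‖ := by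
    rcases abs_cases (f z) with ⟨ht, _⟩ | ⟨ht, _⟩
    · rw [htdef, ht]
    · rw [htdef, ht, neg_smul]
      rw [show T z + -(f z • y) = T z - f z • y by abel, show T z - -(f z • y) = T z + f z • y by abel]
      ring
  -- (3) move from t•y to y
  have h4p : ‖T z + y‖ ≤ ‖T z + t • y‖ + (1 - t) * r := by
    have e : T z + y = (T z + t • y) + (1 - t) • y := by
      rw [sub_smul, one_smul]; abel
    calc ‖T z + y‖ ≤ ‖T z + t • y‖ + ‖(1 - t) • y‖ := by rw [e]; exact norm_add_le _ _
      _ = ‖T z + t • y‖ + (1 - t) * r := by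
          rw [norm_smul, Real.norm_eq_abs, abs_of_nonneg (by linarith)]
  have h4m : ‖T z - y‖ ≤ ‖T z - t • y‖ + (1 - t) * r := by
    have e : T z - y = (T z - t • y) + -((1 - t) • y) := by
      rw [sub_smul, one_smul]; abel
    calc ‖T z - y‖ ≤ ‖T z - t • y‖ + ‖-((1 - t) • y)‖ := by rw [e]; exact norm_add_le _ _
      _ = ‖T z - t • y‖ + (1 - t) * r := by
          rw [norm_neg, norm_smul, Real.norm_eq_abs, abs_of_nonneg (by linarith)]
  -- (4) move from T z to u
  have hu1 : ‖u‖ = 1 := by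
    rw [hudef, norm_smul, Real.norm_eq_abs, abs_of_pos (show (0:ℝ) < b⁻¹ by positivity),
      ← hbdef, inv_mul_cancel₀ hb0.ne']
  have huz : ‖u - T z‖ = 1 - b := by
    calc ‖u - T z‖ = ‖u - b • u‖ := by rw [hbu]
      _ = ‖(1 - b) • u‖ := by rw [sub_smul, one_smul]
      _ = 1 - b := by
          rw [norm_smul, Real.norm_eq_abs, abs_of_nonneg (by linarith), hu1, mul_one]
  have h5p : ‖u + y‖ ≤ ‖T z + y‖ + (1 - b) := by
    calc ‖u + y‖ = ‖(T z + y) + (u - T z)‖ := by congr 1; abel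
      _ ≤ ‖T z + y‖ + ‖u - T z‖ := norm_add_le _ _
      _ = ‖T z + y‖ + (1 - b) := by rw [huz]
  have h5m : ‖u - y‖ ≤ ‖T z - y‖ + (1 - b) := by
    calc ‖u - y‖ = ‖(T z - y) + (u - T z)‖ := by congr 1; abel
      _ ≤ ‖T z - y‖ + ‖u - T z‖ := norm_add_le _ _
      _ = ‖T z - y‖ + (1 - b) := by rw [huz]
  have hmul : (1 - t) * r ≤ 2*α*r := mul_le_mul_of_nonneg_right (by linarith) hr0
  linarith

theorem stmt1
    (X Y : Type*) [NormedAddCommGroup X] [NormedSpace ℝ X] [CompleteSpace X] [Nontrivial X]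
    [NormedAddCommGroup Y] [NormedSpace ℝ Y] [CompleteSpace Y] [Nontrivial Y]
    (H : Submodule ℝ (X →L[ℝ] Y)) (hHclosed : IsClosed (H : Set (X →L[ℝ] Y)))
    (hHfin : ∀ T : X →L[ℝ] Y, FiniteDimensional ℝ (LinearMap.range (T : X →ₗ[ℝ] Y)) → T ∈ H)
    (δ : ℝ) (hδ : 0 < δ)
    (hX : AlternativelyOctahedral (StrongDual ℝ X)) (hY : IsAverageRough Y δ) :
    IsAverageRough H δ := by
  intro n hn T hT ε hε η hη
  set r : ℝ := η / 2 with hrdef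
  have hr0 : 0 < r := by positivity
  set α : ℝ := min (ε * r / (12 + 8 * r)) (1/4) with hαdef
  have h12 : (0:ℝ) < 12 + 8 * r := by linarith
  have hα0 : 0 < α := lt_min (by positivity) (by norm_num)
  have hα4 : α ≤ 1/4 := min_le_right _ _
  have hαm : α * 12 + α * (8 * r) ≤ ε * r := by
    have h1 : α ≤ ε * r / (12 + 8 * r) := min_le_left _ _
    have h2 : α * (12 + 8 * r) ≤ (ε * r / (12 + 8 * r)) * (12 + 8 * r) :=
      mul_le_mul_of_nonneg_right h1 h12.le
    rw [div_mul_cancel₀ _ h12.ne'] at h2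
    linarith
  have hTn : ∀ i, ‖((T i : X →L[ℝ] Y))‖ = 1 := fun i => hT i
  have hstep1 : ∀ i, ∃ g : StrongDual ℝ X, ‖g‖ = 1 ∧
      ∀ z : X, 1 - 2*α ≤ g z → 1 - 3*α ≤ ‖(T i : X →L[ℝ] Y) z‖ :=
    fun i => dar_step_g (T i : X →L[ℝ] Y) (hTn i) hα0 hα4
  choose g hg1 hg2 using hstep1
  obtain ⟨f, hf1, hf2⟩ := hX n g hg1 α hα0
  have hstep2 : ∀ i, ∃ z : X, ‖z‖ ≤ 1 ∧ 1 - 2*α ≤ (g i) z ∧ 1 - 2*α ≤ |f z| :=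
    fun i => dar_step_z (g i) f (hg1 i) hf1 hα0 (hf2 i)
  choose z hz1 hz2 hz3 using hstep2
  have hTz : ∀ i, 1 - 3*α ≤ ‖(T i : X →L[ℝ] Y) (z i)‖ := fun i => hg2 i (z i) (hz2 i)
  have hTzpos : ∀ i, 0 < ‖(T i : X →L[ℝ] Y) (z i)‖ := fun i => by
    have := hTz i; linarith
  have hTz1 : ∀ i, ‖(T i : X →L[ℝ] Y) (z i)‖ ≤ 1 := fun i => by
    have := ((T i : X →L[ℝ] Y)).unit_le_opNorm (z i) (hz1 i)
    rw [hTn i] at this; exact this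
  set u : Fin n → Y :=
    fun i => ‖(T i : X →L[ℝ] Y) (z i)‖⁻¹ • (T i : X →L[ℝ] Y) (z i) with hudef
  have hu1 : ∀ i, ‖u i‖ = 1 := fun i => by
    rw [hudef]
    rw [norm_smul, Real.norm_eq_abs, abs_of_pos (inv_pos.mpr (hTzpos i)), inv_mul_cancel₀ (hTzpos i).ne']
  obtain ⟨y, hyr, hykey⟩ := dar_exact_rough hY n hn u hu1 (ε/2) (half_pos hε) r hr0
  set S : X →L[ℝ] Y := f.smulRight y with hSdef
  have hSnorm : ‖S‖ = r := by
    rw [hSdef, ContinuousLinearMap.norm_smulRight_apply, hf1, one_mul, hyr]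
  have hSmem : S ∈ H := by
    apply hHfin
    have hle : LinearMap.range (S : X →ₗ[ℝ] Y) ≤ Submodule.span ℝ {y} := by
      rintro w ⟨xx, rfl⟩
      exact Submodule.mem_span_singleton.mpr ⟨f xx, rfl⟩
    haveI : FiniteDimensional ℝ (Submodule.span ℝ ({y} : Set Y)) :=
      FiniteDimensional.span_of_finite ℝ (Set.finite_singleton y)
    exact Submodule.finiteDimensional_of_le hle
  refine ⟨⟨S, hSmem⟩, ?_, ?_, ?_⟩
  · show 0 < ‖S‖
    rw [hSnorm]; exact hr0
  · show ‖S‖ < η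
    rw [hSnorm, hrdef]; linarith
  · have hcoe : ∀ i, ‖T i + (⟨S, hSmem⟩ : H)‖ + ‖T i - (⟨S, hSmem⟩ : H)‖
        = ‖(T i : X →L[ℝ] Y) + S‖ + ‖(T i : X →L[ℝ] Y) - S‖ := fun i => rfl
    have hyH : ‖(⟨S, hSmem⟩ : H)‖ = r := hSnorm
    rw [hyH]
    have hperi : ∀ i, ‖u i + y‖ + ‖u i - y‖ - (6*α + 4*α*r) ≤
        ‖(T i : X →L[ℝ] Y) + S‖ + ‖(T i : X →L[ℝ] Y) - S‖ := by
      intro i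
      have h := dar_per_op (T i : X →L[ℝ] Y) f hf1 y (z i) (hz1 i) hα0 hα4
        (hTz i) (hTz1 i) (hz3 i)
      rw [hyr] at h
      simp only [hudef]
      exact h
    have hsum : ∑ i, (‖u i + y‖ + ‖u i - y‖ - (6*α + 4*α*r))
        ≤ ∑ i, (‖(T i : X →L[ℝ] Y) + S‖ + ‖(T i : X →L[ℝ] Y) - S‖) :=
      Finset.sum_le_sum fun i _ => hperi i
    have hninv : (0:ℝ) ≤ 1/(n:ℝ) := by positivity
    have hsum2 : (1/(n:ℝ)) * ∑ i, (‖u i + y‖ + ‖u i - y‖) - (6*α + 4*α*r)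
        ≤ (1/(n:ℝ)) * ∑ i, (‖(T i : X →L[ℝ] Y) + S‖ + ‖(T i : X →L[ℝ] Y) - S‖) := by
      rw [← dar_avg_sum_sub hn (fun i => ‖u i + y‖ + ‖u i - y‖) (6*α + 4*α*r)]
      exact mul_le_mul_of_nonneg_left hsum hninv
    simp only [hcoe]
    have hfinal : (δ - ε) * r ≤ (δ - ε/2) * r - (6*α + 4*α*r) := by nlinarith
    calc (δ - ε) * r ≤ (δ - ε/2) * r - (6*α + 4*α*r) := hfinal
      _ ≤ ((1/(n:ℝ)) * ∑ i, (‖u i + y‖ + ‖u i - y‖) - 2) - (6*α + 4*α*r) := by linarith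
      _ ≤ (1/(n:ℝ)) * ∑ i, (‖(T i : X →L[ℝ] Y) + S‖ + ‖(T i : X →L[ℝ] Y) - S‖) - 2 := by
          linarith
end

section
/- Let X and Y be nontrivial real Banach spaces, let H be a closed linear subspace of L(X,Y) containing all finite rank operators, and let δ > 0. If the dual space X* is δ-rough, then H (with the induced operator norm) is δ-rough. -/
open scoped BigOperators

private lemma exists_norming {W : Type*} [NormedAddCommGroup W] [NormedSpace ℝ W]
    (f : W →L[ℝ] ℝ) {θ : ℝ} (hθ : 0 < θ) : ∃ x : W, ‖x‖ ≤ 1 ∧ ‖f‖ - θ < f x := by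
  rcases lt_or_ge (‖f‖ - θ) 0 with h | h
  · exact ⟨0, by simp, by simpa using h⟩
  · obtain ⟨x, hx1, hx2⟩ := f.exists_lt_apply_of_lt_opNorm (show ‖f‖ - θ < ‖f‖ by linarith)
    rcases le_or_gt (f x) 0 with hfx | hfx
    · refine ⟨-x, by simpa using hx1.le, ?_⟩
      rw [map_neg]
      rw [Real.norm_eq_abs, abs_of_nonpos hfx] at hx2
      linarith
    · exact ⟨x, hx1.le, by rwa [Real.norm_eq_abs, abs_of_pos hfx] at hx2⟩

set_option maxHeartbeats 1000000 in
theorem stmt2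
    (X Y : Type*) [NormedAddCommGroup X] [NormedSpace ℝ X] [CompleteSpace X] [Nontrivial X]
    [NormedAddCommGroup Y] [NormedSpace ℝ Y] [CompleteSpace Y] [Nontrivial Y]
    (H : Submodule ℝ (X →L[ℝ] Y)) (hHclosed : IsClosed (H : Set (X →L[ℝ] Y)))
    (hHfin : ∀ T : X →L[ℝ] Y, FiniteDimensional ℝ (LinearMap.range (T : X →ₗ[ℝ] Y)) → T ∈ H)
    (δ : ℝ) (hδ : 0 < δ)
    (hX : IsRough (StrongDual ℝ X) δ) :
    IsRough H δ := by
  intro T hT ε hε η hη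
  obtain ⟨e, he0, heε, heδ, he1⟩ : ∃ e : ℝ, 0 < e ∧ e ≤ ε ∧ e ≤ δ ∧ e ≤ 1 :=
    ⟨min ε (min δ 1), lt_min hε (lt_min hδ one_pos), min_le_left _ _,
      le_trans (min_le_right _ _) (min_le_left _ _),
      le_trans (min_le_right _ _) (min_le_right _ _)⟩
  suffices hs : ∃ y : H, 0 < ‖y‖ ∧ ‖y‖ < η ∧ (δ - e) * ‖y‖ ≤ ‖T + y‖ + ‖T - y‖ - 2 by
    obtain ⟨y, h1, h2, h3⟩ := hs
    refine ⟨y, h1, h2, le_trans ?_ h3⟩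
    exact mul_le_mul_of_nonneg_right (by linarith) (norm_nonneg _)
  -- parameters
  obtain ⟨t, ht0, htη, ht1⟩ : ∃ t : ℝ, 0 < t ∧ t < η ∧ t ≤ 1/2 := by
    have htmin : 0 < min η 1 := lt_min hη one_pos
    refine ⟨min η 1 / 2, by positivity, lt_of_lt_of_le (half_lt_self htmin) (min_le_left _ _), ?_⟩
    have h := min_le_right η 1; linarith
  have hte : t * e ≤ 1/2 := by
    have h := mul_le_mul ht1 he1 he0.le (by norm_num : (0:ℝ) ≤ 1/2)
    linarith only [h]
  set α : ℝ := t * e / 16 with hα_def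
  have hα0 : 0 < α := by positivity
  have hα1 : α ≤ 1/32 := by rw [hα_def]; linarith only [hte]
  -- norm of T in the ambient space
  have hTn : ‖(T : X →L[ℝ] Y)‖ = 1 := by rw [← Submodule.coe_norm]; exact hT
  -- choose a point almost norming T
  obtain ⟨x₀, hx₀1, hx₀2⟩ := (T : X →L[ℝ] Y).exists_lt_apply_of_lt_opNorm
    (show 1 - α < ‖(T : X →L[ℝ] Y)‖ by rw [hTn]; linarith)
  have hTx₀pos : 0 < ‖(T : X →L[ℝ] Y) x₀‖ := by linarith
  have hTx₀ne : (T : X →L[ℝ] Y) x₀ ≠ 0 := norm_pos_iff.mp hTx₀pos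
  obtain ⟨g, hg1, hg2⟩ := exists_dual_vector ℝ ((T : X →L[ℝ] Y) x₀) hTx₀pos.ne'
  have hg2' : g ((T : X →L[ℝ] Y) x₀) = ‖(T : X →L[ℝ] Y) x₀‖ := by exact_mod_cast hg2
  -- the functional x* = g ∘ T, normalized
  obtain ⟨s, u, hslb, hs1, hu1, hTapp⟩ :
      ∃ (s : ℝ) (u : StrongDual ℝ X), 1 - α < s ∧ s ≤ 1 ∧ ‖u‖ = 1 ∧
        ∀ x : X, g ((T : X →L[ℝ] Y) x) = s * u x := by
    set xs : X →L[ℝ] ℝ := g.comp (T : X →L[ℝ] Y) with hxs_def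
    have hs1 : ‖xs‖ ≤ 1 := by
      calc ‖xs‖ ≤ ‖g‖ * ‖(T : X →L[ℝ] Y)‖ := g.opNorm_comp_le _
      _ = 1 := by rw [hg1, hTn, one_mul]
    have hxsx₀ : xs x₀ = ‖(T : X →L[ℝ] Y) x₀‖ := hg2'
    have hslb : 1 - α < ‖xs‖ := by
      have h1 : xs x₀ ≤ ‖xs‖ * ‖x₀‖ :=
        le_trans (le_trans (le_abs_self _) (le_of_eq (Real.norm_eq_abs _).symm)) (xs.le_opNorm x₀)
      have h2 : ‖xs‖ * ‖x₀‖ ≤ ‖xs‖ := mul_le_of_le_one_right (norm_nonneg xs) hx₀1.le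
      rw [hxsx₀] at h1
      linarith
    have hs0 : 0 < ‖xs‖ := by linarith
    refine ⟨‖xs‖, ‖xs‖⁻¹ • xs, hslb, hs1, ?_, ?_⟩
    · have h := norm_smul (‖xs‖⁻¹) xs
      rw [h, Real.norm_eq_abs, abs_inv, abs_of_pos hs0, inv_mul_cancel₀ hs0.ne']
    · intro x
      have h1 : g ((T : X →L[ℝ] Y) x) = xs x := rfl
      have h2 : xs x = (‖xs‖ • (‖xs‖⁻¹ • xs)) x := by rw [smul_inv_smul₀ hs0.ne']
      rw [h1, h2, ContinuousLinearMap.smul_apply, smul_eq_mul]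
  have hs0 : 0 < s := by linarith
  -- apply roughness of X* at u
  have hε₁ : (0:ℝ) < e/8 := by linarith
  obtain ⟨v, hv0, hvη, hineq⟩ := hX u hu1 (e/8) hε₁ (t*e/16) (by positivity)
  set r : ℝ := ‖v‖ with hr_def
  have hr16 : r ≤ t*e/16 := hvη.le
  -- norming points for u+v and u-v
  obtain ⟨x₁, hx₁1, hx₁2⟩ := exists_norming (u + v) (mul_pos hε₁ hv0)
  obtain ⟨x₂, hx₂1, hx₂2⟩ := exists_norming (u - v) (mul_pos hε₁ hv0)
  -- the rank-one perturbation
  obtain ⟨Sop, hSmem, hSn, hSapp⟩ :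
      ∃ Sop : X →L[ℝ] Y, Sop ∈ H ∧ ‖Sop‖ = t ∧ ∀ x : X, g (Sop x) = (t/r) * v x := by
    set y₀ : Y := ‖(T : X →L[ℝ] Y) x₀‖⁻¹ • ((T : X →L[ℝ] Y) x₀) with hy₀_def
    have hy₀n : ‖y₀‖ = 1 := by
      have h := norm_smul (‖(T : X →L[ℝ] Y) x₀‖⁻¹) ((T : X →L[ℝ] Y) x₀)
      rw [hy₀_def, h, Real.norm_eq_abs, abs_inv, abs_of_pos hTx₀pos,
        inv_mul_cancel₀ hTx₀pos.ne']
    have hgy₀ : g y₀ = 1 := by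
      rw [hy₀_def, map_smul, hg2', smul_eq_mul, inv_mul_cancel₀ hTx₀pos.ne']
    refine ⟨(t/r) • (v.smulRight y₀), ?_, ?_, ?_⟩
    · apply hHfin
      have hle : LinearMap.range (((t/r) • (v.smulRight y₀) : X →L[ℝ] Y) : X →ₗ[ℝ] Y)
          ≤ Submodule.span ℝ {y₀} := by
        rintro z ⟨x, rfl⟩
        have hz : (((t/r) • (v.smulRight y₀) : X →L[ℝ] Y) : X →ₗ[ℝ] Y) x
            = ((t/r) * v x) • y₀ := by
          simp [ContinuousLinearMap.smulRight_apply, smul_smul]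
        rw [hz]
        exact Submodule.smul_mem _ _ (Submodule.mem_span_singleton_self y₀)
      haveI : FiniteDimensional ℝ (Submodule.span ℝ ({y₀} : Set Y)) :=
        FiniteDimensional.span_of_finite ℝ (Set.finite_singleton y₀)
      exact Submodule.finiteDimensional_of_le hle
    · have h := norm_smul (t/r) (v.smulRight y₀)
      rw [h, ContinuousLinearMap.norm_smulRight_apply, hy₀n, ← hr_def,
        Real.norm_eq_abs, abs_of_pos (div_pos ht0 hv0), mul_one, div_mul_cancel₀ t hv0.ne']
    · intro x
      rw [ContinuousLinearMap.smul_apply, ContinuousLinearMap.smulRight_apply, map_smul,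
        map_smul, hgy₀, smul_eq_mul, smul_eq_mul, mul_one]
  -- operator norm lower bounds
  have hbnd : ∀ (A : X →L[ℝ] Y) (x : X), ‖x‖ ≤ 1 → g (A x) ≤ ‖A‖ := by
    intro A x hx
    calc g (A x) ≤ ‖g (A x)‖ := le_trans (le_abs_self _) (le_of_eq (Real.norm_eq_abs _).symm)
    _ ≤ ‖g‖ * ‖A x‖ := g.le_opNorm _
    _ = ‖A x‖ := by rw [hg1, one_mul]
    _ ≤ ‖A‖ * ‖x‖ := A.le_opNorm x
    _ ≤ ‖A‖ := mul_le_of_le_one_right (norm_nonneg A) hx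
  have h1 : s * u x₁ + (t/r) * v x₁ ≤ ‖(T : X →L[ℝ] Y) + Sop‖ := by
    have h := hbnd ((T : X →L[ℝ] Y) + Sop) x₁ hx₁1
    rwa [ContinuousLinearMap.add_apply, map_add, hTapp, hSapp] at h
  have h2 : s * u x₂ - (t/r) * v x₂ ≤ ‖(T : X →L[ℝ] Y) - Sop‖ := by
    have h := hbnd ((T : X →L[ℝ] Y) - Sop) x₂ hx₂1
    rwa [ContinuousLinearMap.sub_apply, map_sub, hTapp, hSapp] at h
  -- basic scalar estimates
  have habs : ∀ (w : X →L[ℝ] ℝ) (x : X), ‖x‖ ≤ 1 → |w x| ≤ ‖w‖ := by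
    intro w x hx
    calc |w x| = ‖w x‖ := (Real.norm_eq_abs _).symm
    _ ≤ ‖w‖ * ‖x‖ := w.le_opNorm x
    _ ≤ ‖w‖ := mul_le_of_le_one_right (norm_nonneg w) hx
  have hu1b : u x₁ ≤ 1 := by
    have h := habs u x₁ hx₁1; rw [hu1] at h; exact le_trans (le_abs_self _) h
  have hu2b : u x₂ ≤ 1 := by
    have h := habs u x₂ hx₂1; rw [hu1] at h; exact le_trans (le_abs_self _) h
  have hv1b' : v x₁ ≤ r := le_trans (le_abs_self _) (habs v x₁ hx₁1)
  have hv2b' : -r ≤ v x₂ := by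
    have h := habs v x₂ hx₂1
    have h2 := neg_abs_le (v x₂)
    rw [← hr_def] at h
    linarith
  have hnuv : 1 - r ≤ ‖u + v‖ := by
    have h : ‖u‖ ≤ ‖u + v‖ + ‖v‖ := by simpa using norm_add_le (u + v) (-v)
    rw [hu1, ← hr_def] at h; linarith
  have hnuv' : 1 - r ≤ ‖u - v‖ := by
    have h : ‖u‖ ≤ ‖u - v‖ + ‖v‖ := by simpa using norm_add_le (u - v) v
    rw [hu1, ← hr_def] at h; linarith
  have hx₁2' : ‖u + v‖ - e/8 * r < u x₁ + v x₁ := by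
    have h : (u + v) x₁ = u x₁ + v x₁ := rfl
    rw [← h]; exact hx₁2
  have hx₂2' : ‖u - v‖ - e/8 * r < u x₂ - v x₂ := by
    have h : (u - v) x₂ = u x₂ - v x₂ := rfl
    rw [← h]; exact hx₂2
  have hineq' : (δ - e/8) * r ≤ ‖u + v‖ + ‖u - v‖ - 2 := hineq
  -- key scalar consequences
  have key1 : (δ - 3*(e/8)) * r ≤ v x₁ - v x₂ := by
    linarith only [hx₁2', hx₂2', hineq', hu1b, hu2b]
  have key2 : 1 - e/8 * r - 2*r ≤ u x₁ := by linarith only [hx₁2', hnuv, hv1b']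
  have key3 : 1 - e/8 * r - 2*r ≤ u x₂ := by linarith only [hx₂2', hnuv', hv2b']
  have hrsmall : r ≤ 1/32 := by linarith only [hr16, hte]
  have huusum : 2 - 2*(e/8 * r) - 4*r ≤ u x₁ + u x₂ := by linarith only [key2, key3]
  have her2 : e * r ≤ r := by
    have h := mul_le_mul_of_nonneg_right he1 hv0.le
    linarith only [h]
  have huupos : 0 ≤ u x₁ + u x₂ := by linarith only [key2, key3, her2, hrsmall, hv0]
  -- combine
  have h3 : (1 - α) * (u x₁ + u x₂) ≤ s * (u x₁ + u x₂) :=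
    mul_le_mul_of_nonneg_right hslb.le huupos
  have h4 : t * (δ - 3*(e/8)) ≤ (t/r) * (v x₁ - v x₂) := by
    have hh := mul_le_mul_of_nonneg_left key1 (div_pos ht0 hv0).le
    have heq : (t/r) * ((δ - 3*(e/8)) * r) = t * (δ - 3*(e/8)) := by field_simp
    rw [heq] at hh
    exact hh
  have hsum : (1 - α) * (u x₁ + u x₂) + t * (δ - 3*(e/8))
      ≤ ‖(T : X →L[ℝ] Y) + Sop‖ + ‖(T : X →L[ℝ] Y) - Sop‖ := by
    linarith only [h1, h2, h3, h4]
  have hfin1 : (u x₁ + u x₂) - 2*α ≤ (1 - α) * (u x₁ + u x₂) := by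
    have ha := mul_le_mul_of_nonneg_left hu1b hα0.le
    have hb := mul_le_mul_of_nonneg_left hu2b hα0.le
    have hc : α * (u x₁ + u x₂) ≤ 2 * α := by linarith only [ha, hb]
    linarith only [hc]
  have hb1 : e/4 * r + 4*r ≤ (17/4) * (t*e/16) := by linarith only [her2, hr16]
  have hgoal : (δ - e) * t ≤ ‖(T : X →L[ℝ] Y) + Sop‖ + ‖(T : X →L[ℝ] Y) - Sop‖ - 2 := by
    have hte0 : (0:ℝ) ≤ t * e := by positivity
    linarith only [hsum, hfin1, hb1, huusum, hα_def.le, hα_def.ge, hte0]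
  -- final packaging
  refine ⟨⟨Sop, hSmem⟩, ?_, ?_, ?_⟩
  · show (0:ℝ) < ‖(⟨Sop, hSmem⟩ : H)‖
    rw [Submodule.coe_norm]
    simpa [hSn] using ht0
  · show ‖(⟨Sop, hSmem⟩ : H)‖ < η
    rw [Submodule.coe_norm]
    simpa [hSn] using htη
  · have hc1 : ‖T + (⟨Sop, hSmem⟩ : H)‖ = ‖(T : X →L[ℝ] Y) + Sop‖ := by
      rw [Submodule.coe_norm]; rfl
    have hc2 : ‖T - (⟨Sop, hSmem⟩ : H)‖ = ‖(T : X →L[ℝ] Y) - Sop‖ := by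
      rw [Submodule.coe_norm]; rfl
    have hc3 : ‖(⟨Sop, hSmem⟩ : H)‖ = t := by rw [Submodule.coe_norm]; exact hSn
    rw [hc1, hc2, hc3]
    exact hgoal
end

section
/- Let X and Y be nontrivial real Banach spaces, let H be a closed linear subspace of L(X,Y) containing all finite rank operators, and let δ > 0. If Y is δ-rough, then H (with the induced operator norm) is δ-rough. -/
open scoped BigOperators

set_option maxHeartbeats 1000000


private lemma aux_exists_unit {X Y : Type*} [NormedAddCommGroup X] [NormedSpace ℝ X]
    [NormedAddCommGroup Y] [NormedSpace ℝ Y] (T : X →L[ℝ] Y) (hT : ‖T‖ = 1)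
    {c : ℝ} (hc0 : 0 ≤ c) (hc : c < 1) : ∃ x : X, ‖x‖ = 1 ∧ c < ‖T x‖ := by
  by_contra h
  push_neg at h
  have hle : ‖T‖ ≤ c := by
    apply ContinuousLinearMap.opNorm_le_bound T hc0
    intro x
    rcases eq_or_ne x 0 with rfl | hx
    · simp
    · have hxn : (0:ℝ) < ‖x‖ := norm_pos_iff.mpr hx
      have h1 : ‖(‖x‖⁻¹ • x)‖ = 1 := by
        rw [norm_smul, norm_inv, norm_norm, inv_mul_cancel₀ hxn.ne']
      have h2 := h _ h1
      rw [map_smul, norm_smul, norm_inv, norm_norm] at h2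
      have h4 := mul_le_mul_of_nonneg_left h2 hxn.le
      rw [← mul_assoc, mul_inv_cancel₀ hxn.ne', one_mul] at h4
      linarith only [h2, h4]
  linarith only [hT ▸ hle, hc]

private theorem stmt3_aux
    (X Y : Type*) [NormedAddCommGroup X] [NormedSpace ℝ X] [CompleteSpace X] [Nontrivial X]
    [NormedAddCommGroup Y] [NormedSpace ℝ Y] [CompleteSpace Y] [Nontrivial Y]
    (H : Submodule ℝ (X →L[ℝ] Y)) (hHclosed : IsClosed (H : Set (X →L[ℝ] Y)))
    (hHfin : ∀ T : X →L[ℝ] Y, FiniteDimensional ℝ (LinearMap.range (T : X →ₗ[ℝ] Y)) → T ∈ H)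
    (δ : ℝ) (hδ : 0 < δ)
    (hY : ∀ x : Y, ‖x‖ = 1 →
      ∀ ε > (0 : ℝ), ∀ η > (0 : ℝ), ∃ y : Y, 0 < ‖y‖ ∧ ‖y‖ < η ∧
        (δ - ε) * ‖y‖ ≤ ‖x + y‖ + ‖x - y‖ - 2) :
    ∀ x : ↥H, ‖x‖ = 1 →
      ∀ ε > (0 : ℝ), ∀ η > (0 : ℝ), ∃ y : ↥H, 0 < ‖y‖ ∧ ‖y‖ < η ∧
        (δ - ε) * ‖y‖ ≤ ‖x + y‖ + ‖x - y‖ - 2 := by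
  intro T hT ε hε η hη
  set r : ℝ := η / 2 with hrdef
  have hr0 : 0 < r := by positivity
  set α : ℝ := min (ε * r / 8) 4⁻¹ with hαdef
  have hα0 : 0 < α := lt_min (by positivity) (by norm_num)
  have hα4 : α ≤ 4⁻¹ := min_le_right _ _
  have hα8 : α ≤ ε * r / 8 := min_le_left _ _
  have hTnorm : ‖(T : X →L[ℝ] Y)‖ = 1 := by rw [← Submodule.coe_norm, hT]
  obtain ⟨x, hx1, hxT⟩ := aux_exists_unit (T : X →L[ℝ] Y) hTnorm
    (c := 1 - α) (by linarith only [hα4]) (by linarith only [hα0])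
  set t : ℝ := ‖(T : X →L[ℝ] Y) x‖ with htdef
  have ht0 : 0 < t := lt_of_le_of_lt (by linarith only [hα4]) hxT
  have ht1 : t ≤ 1 := by
    have := (T : X →L[ℝ] Y).unit_le_opNorm x (le_of_eq hx1)
    rwa [hTnorm] at this
  set z : Y := t⁻¹ • (T : X →L[ℝ] Y) x with hzdef
  have hz1 : ‖z‖ = 1 := by
    rw [hzdef, norm_smul, norm_inv, norm_norm, ← htdef, inv_mul_cancel₀ ht0.ne']
  have htz : t • z = (T : X →L[ℝ] Y) x := by
    rw [hzdef, smul_smul, mul_inv_cancel₀ ht0.ne', one_smul]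
  obtain ⟨y, hy0, hysmall, hyineq⟩ := hY z hz1 (ε/2) (half_pos hε) (α/2) (half_pos hα0)
  have hb1 : (1:ℝ) - ‖y‖ ≤ ‖z + y‖ := by
    have h := norm_sub_norm_le z (-y)
    rw [sub_neg_eq_add, norm_neg, hz1] at h
    linarith only [h]
  have hb2 : (1:ℝ) - ‖y‖ ≤ ‖z - y‖ := by
    have h := norm_sub_norm_le z y
    rw [hz1] at h
    linarith only [h]
  have hzadd : z + y ≠ 0 := by
    intro hcontra
    rw [hcontra, norm_zero] at hb1
    linarith only [hb1, hysmall, hα4]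
  have hzsub : z - y ≠ 0 := by
    intro hcontra
    rw [hcontra, norm_zero] at hb2
    linarith only [hb2, hysmall, hα4]
  obtain ⟨g₁, hg₁n, hg₁⟩ := exists_dual_vector ℝ (z + y) (norm_ne_zero_iff.mpr hzadd)
  obtain ⟨g₂, hg₂n, hg₂⟩ := exists_dual_vector ℝ (z - y) (norm_ne_zero_iff.mpr hzsub)
  obtain ⟨f, hfn, hfx⟩ := exists_dual_vector ℝ x (by
    intro hc; rw [hc] at hx1; norm_num at hx1)
  simp only [RCLike.ofReal_real_eq_id, id] at hg₁ hg₂ hfx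
  rw [hx1] at hfx
  set u : Y := ‖y‖⁻¹ • y with hudef
  have hu1 : ‖u‖ = 1 := by
    rw [hudef, norm_smul, norm_inv, norm_norm, inv_mul_cancel₀ hy0.ne']
  set S0 : X →L[ℝ] Y := f.smulRight (r • u) with hS0def
  have hS0x : S0 x = r • u := by
    rw [hS0def, ContinuousLinearMap.smulRight_apply, hfx, one_smul]
  have hS0H : S0 ∈ H := by
    apply hHfin
    have hle : LinearMap.range ((S0 : X →L[ℝ] Y) : X →ₗ[ℝ] Y) ≤ (ℝ ∙ u) := by
      rintro v ⟨w, rfl⟩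
      simp only [hS0def, ContinuousLinearMap.coe_coe, ContinuousLinearMap.smulRight_apply]
      exact Submodule.smul_mem _ _ (Submodule.smul_mem _ _ (Submodule.mem_span_singleton_self u))
    exact Submodule.finiteDimensional_of_le hle
  have hS0norm : ‖S0‖ = r := by
    rw [hS0def, ContinuousLinearMap.norm_smulRight_apply, hfn, norm_smul,
      Real.norm_eq_abs, abs_of_pos hr0, hu1]
    ring
  clear_value r α t z u S0
  refine ⟨⟨S0, hS0H⟩, ?_, ?_, ?_⟩
  · rw [Submodule.coe_norm]; simpa [hS0norm] using hr0
  · rw [Submodule.coe_norm]; rw [hS0norm, hrdef]; linarith only [hη]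
  · have keynorm : ∀ (g : Y →L[ℝ] ℝ) (v : Y), ‖g‖ = 1 → g v ≤ ‖v‖ := by
      intro g v hg
      calc g v ≤ |g v| := le_abs_self _
        _ = ‖g v‖ := (Real.norm_eq_abs _).symm
        _ ≤ ‖g‖ * ‖v‖ := g.le_opNorm v
        _ = ‖v‖ := by rw [hg, one_mul]
    have hg₁y : g₁ y ≤ ‖y‖ := keynorm g₁ y hg₁n
    have hg₂y : g₂ y ≤ ‖y‖ := keynorm g₂ y hg₂n
    have hg₂y' : -‖y‖ ≤ g₂ y := by
      have := keynorm g₂ (-y) hg₂n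
      rw [map_neg, norm_neg] at this
      linarith only [this]
    have hg₁z_le : g₁ z ≤ 1 := by have := keynorm g₁ z hg₁n; rwa [hz1] at this
    have hg₂z_le : g₂ z ≤ 1 := by have := keynorm g₂ z hg₂n; rwa [hz1] at this
    have h1 : g₁ z + g₁ y = ‖z + y‖ := by rw [← map_add]; exact hg₁
    have h2 : g₂ z - g₂ y = ‖z - y‖ := by rw [← map_sub]; exact hg₂
    have hg₁z_ge : 1 - 2 * ‖y‖ ≤ g₁ z := by linarith only [h1, hb1, hg₁y]
    have hg₂z_ge : 1 - 2 * ‖y‖ ≤ g₂ z := by linarith only [h2, hb2, hg₂y']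
    have hdiff : (δ - ε/2) * ‖y‖ ≤ g₁ y - g₂ y := by linarith only [h1, h2, hyineq, hg₁z_le, hg₂z_le]
    have hdiffu : δ - ε/2 ≤ g₁ u - g₂ u := by
      have e1 : g₁ u - g₂ u = ‖y‖⁻¹ * (g₁ y - g₂ y) := by
        rw [hudef, map_smul, map_smul, smul_eq_mul, smul_eq_mul]
        ring
      rw [e1, ← div_eq_inv_mul, le_div_iff₀ hy0]
      exact hdiff
    -- norm lower bounds via evaluating at x
    have happ1 : ((T : X →L[ℝ] Y) + S0) x = t • z + r • u := by
      rw [ContinuousLinearMap.add_apply, ← htz, hS0x]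
    have happ2 : ((T : X →L[ℝ] Y) - S0) x = t • z - r • u := by
      rw [ContinuousLinearMap.sub_apply, ← htz, hS0x]
    have hplus : t * g₁ z + r * g₁ u ≤ ‖(T : X →L[ℝ] Y) + S0‖ := by
      have hk := keynorm g₁ (((T : X →L[ℝ] Y) + S0) x) hg₁n
      rw [happ1, map_add, map_smul, map_smul, smul_eq_mul, smul_eq_mul] at hk
      have hb := ((T : X →L[ℝ] Y) + S0).unit_le_opNorm x (le_of_eq hx1)
      rw [happ1] at hb
      linarith only [hk, hb]
    have hminus : t * g₂ z - r * g₂ u ≤ ‖(T : X →L[ℝ] Y) - S0‖ := by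
      have hk := keynorm g₂ (((T : X →L[ℝ] Y) - S0) x) hg₂n
      rw [happ2, map_sub, map_smul, map_smul, smul_eq_mul, smul_eq_mul] at hk
      have hb := ((T : X →L[ℝ] Y) - S0).unit_le_opNorm x (le_of_eq hx1)
      rw [happ2] at hb
      linarith only [hk, hb]
    -- put it together
    have hyα : ‖y‖ ≤ α / 2 := le_of_lt hysmall
    have hgz1 : 1 - α ≤ g₁ z := by linarith only [hg₁z_ge, hyα]
    have hgz2 : 1 - α ≤ g₂ z := by linarith only [hg₂z_ge, hyα]
    have hα1 : 0 ≤ 1 - α := by linarith only [hα4]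
    have hp1 : (1 - α) * (1 - α) ≤ t * g₁ z :=
      mul_le_mul (le_of_lt hxT) hgz1 hα1 (by linarith only [hα1, hxT])
    have hp2 : (1 - α) * (1 - α) ≤ t * g₂ z :=
      mul_le_mul (le_of_lt hxT) hgz2 hα1 (by linarith only [hα1, hxT])
    have haux : 1 - 2 * α ≤ (1 - α) * (1 - α) := by nlinarith only [sq_nonneg α]
    have hsq : 2 - 4 * α ≤ t * g₁ z + t * g₂ z := by linarith only [hp1, hp2, haux]
    have hru : r * (δ - ε/2) ≤ r * g₁ u - r * g₂ u := by
      have := mul_le_mul_of_nonneg_left hdiffu hr0.le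
      linarith only [this]
    have hnorm_add : ‖T + (⟨S0, hS0H⟩ : ↥H)‖ = ‖(T : X →L[ℝ] Y) + S0‖ := rfl
    have hnorm_sub : ‖T - (⟨S0, hS0H⟩ : ↥H)‖ = ‖(T : X →L[ℝ] Y) - S0‖ := rfl
    have hnorm_S : ‖(⟨S0, hS0H⟩ : ↥H)‖ = r := by rw [Submodule.coe_norm]; exact hS0norm
    rw [hnorm_add, hnorm_sub, hnorm_S]
    have e : (δ - ε) * r = r * (δ - ε/2) - (ε * r)/2 := by ring
    rw [e]
    linarith only [hplus, hminus, hsq, hru, hα8]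

theorem stmt3
    (X Y : Type*) [NormedAddCommGroup X] [NormedSpace ℝ X] [CompleteSpace X] [Nontrivial X]
    [NormedAddCommGroup Y] [NormedSpace ℝ Y] [CompleteSpace Y] [Nontrivial Y]
    (H : Submodule ℝ (X →L[ℝ] Y)) (hHclosed : IsClosed (H : Set (X →L[ℝ] Y)))
    (hHfin : ∀ T : X →L[ℝ] Y, FiniteDimensional ℝ (LinearMap.range (T : X →ₗ[ℝ] Y)) → T ∈ H)
    (δ : ℝ) (hδ : 0 < δ)
    (hY : IsRough Y δ) :
    IsRough H δ :=
  stmt3_aux X Y H hHclosed hHfin δ hδ hY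
end

section
/- Let 1 < p < ∞, let n ∈ ℕ, and let a₁ = (α₁,β₁), …, aₙ = (αₙ,βₙ) be elements of the unit sphere of ℓ_p² such that α₁,…,αₙ ≥ 0 and β₁ ≥ β₂ ≥ … ≥ βₙ. Then for all signs θ₁,…,θₙ ∈ {−1,1}, the vector θ₁·(a₁+aₙ)/2 + θ₂·(a₂−a₁)/2 + ⋯ + θₙ·(aₙ−aₙ₋₁)/2 lies in the closed unit ball of ℓ_p². -/
open scoped BigOperators

noncomputable section

namespace AuxSign

/-- the "upper boundary" function of the `ℓ_p` unit disc. -/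
def g (p t : ℝ) : ℝ := (1 - |t| ^ p) ^ (1 / p)

lemma g_neg (p t : ℝ) : g p (-t) = g p t := by simp [g]

lemma abs_rpow_le_one {p t : ℝ} (hp : 1 < p) (ht : |t| ≤ 1) : |t| ^ p ≤ 1 :=
  Real.rpow_le_one (abs_nonneg t) ht (by linarith)

lemma g_nonneg {p t : ℝ} (hp : 1 < p) (ht : |t| ≤ 1) : 0 ≤ g p t :=
  Real.rpow_nonneg (by linarith [abs_rpow_le_one hp ht]) _

lemma g_rpow {p t : ℝ} (hp : 1 < p) (ht : |t| ≤ 1) : g p t ^ p = 1 - |t| ^ p := by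
  rw [g, one_div, Real.rpow_inv_rpow (by linarith [abs_rpow_le_one hp ht]) (by positivity)]

lemma g_anti {p u v : ℝ} (hp : 1 < p) (hv : |v| ≤ 1) (huv : |u| ≤ |v|) : g p v ≤ g p u := by
  have h1 : |u| ^ p ≤ |v| ^ p := Real.rpow_le_rpow (abs_nonneg u) huv (by linarith)
  exact Real.rpow_le_rpow (by linarith [abs_rpow_le_one hp hv]) (by linarith) (by positivity)

lemma g_one {p : ℝ} (hp : 1 < p) : g p 1 = 0 := by
  rw [g]
  simp only [abs_one, Real.one_rpow, sub_self]
  exact Real.zero_rpow (by positivity)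

lemma g_neg_one {p : ℝ} (hp : 1 < p) : g p (-1) = 0 := by rw [g_neg]; exact g_one hp

end AuxSign
namespace AuxSign

abbrev E (p : ℝ) := PiLp (ENNReal.ofReal p) (fun _ : Fin 2 => ℝ)

lemma norm_formula {p : ℝ} (hp : 1 < p) [Fact (1 ≤ ENNReal.ofReal p)] (v : E p) :
    ‖v‖ = (|v 0| ^ p + |v 1| ^ p) ^ (1 / p) := by
  have htr : (ENNReal.ofReal p).toReal = p := ENNReal.toReal_ofReal (by linarith)
  rw [PiLp.norm_eq_sum (by rw [htr]; linarith) v, htr, Fin.sum_univ_two]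
  simp [Real.norm_eq_abs]

lemma norm_le_one_iff {p : ℝ} (hp : 1 < p) [Fact (1 ≤ ENNReal.ofReal p)] (v : E p) :
    ‖v‖ ≤ 1 ↔ |v 0| ^ p + |v 1| ^ p ≤ 1 := by
  have hS : 0 ≤ |v 0| ^ p + |v 1| ^ p := by
    have := Real.rpow_nonneg (abs_nonneg (v 0)) p
    have := Real.rpow_nonneg (abs_nonneg (v 1)) p
    linarith
  rw [norm_formula hp v]
  constructor
  · intro h
    have h2 : ((|v 0| ^ p + |v 1| ^ p) ^ (1 / p)) ^ p ≤ 1 ^ p :=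
      Real.rpow_le_rpow (Real.rpow_nonneg hS _) h (by linarith)
    rwa [one_div, Real.rpow_inv_rpow hS (by positivity), Real.one_rpow] at h2
  · intro h
    exact Real.rpow_le_one hS h (by positivity)

lemma norm_eq_one_sum {p : ℝ} (hp : 1 < p) [Fact (1 ≤ ENNReal.ofReal p)] {v : E p}
    (h : ‖v‖ = 1) : |v 0| ^ p + |v 1| ^ p = 1 := by
  have hS : 0 ≤ |v 0| ^ p + |v 1| ^ p := by
    have := Real.rpow_nonneg (abs_nonneg (v 0)) p
    have := Real.rpow_nonneg (abs_nonneg (v 1)) p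
    linarith
  have := norm_formula hp v
  rw [h] at this
  have h2 : ((|v 0| ^ p + |v 1| ^ p) ^ (1 / p)) ^ p = 1 ^ p := by rw [← this]
  rwa [one_div, Real.rpow_inv_rpow hS (by positivity), Real.one_rpow] at h2

lemma le_g {p x y : ℝ} (hp : 1 < p) (h : |x| ^ p + |y| ^ p ≤ 1) (hx : 0 ≤ x) :
    x ≤ g p y := by
  have h1 : |x| ^ p ≤ 1 - |y| ^ p := by linarith
  calc x = (|x| ^ p) ^ (1 / p) := by
        rw [one_div, Real.rpow_rpow_inv (abs_nonneg x) (by positivity), abs_of_nonneg hx]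
    _ ≤ (1 - |y| ^ p) ^ (1 / p) :=
        Real.rpow_le_rpow (Real.rpow_nonneg (abs_nonneg x) p) h1 (by positivity)

lemma fst_eq_g {p : ℝ} (hp : 1 < p) [Fact (1 ≤ ENNReal.ofReal p)] {v : E p}
    (h : ‖v‖ = 1) (h0 : 0 ≤ v 0) : v 0 = g p (v 1) := by
  have hs := norm_eq_one_sum hp h
  have h1 : |v 0| ^ p = 1 - |v 1| ^ p := by linarith
  rw [g, ← h1, one_div, Real.rpow_rpow_inv (abs_nonneg _) (by positivity), abs_of_nonneg h0]

lemma snd_abs_le_one {p : ℝ} (hp : 1 < p) [Fact (1 ≤ ENNReal.ofReal p)] {v : E p}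
    (h : ‖v‖ = 1) : |v 1| ≤ 1 := by
  have hs := norm_eq_one_sum hp h
  by_contra hc
  push_neg at hc
  have h1 : (1:ℝ) ^ p ≤ |v 1| ^ p := Real.rpow_le_rpow (by norm_num) hc.le (by linarith)
  have h2 := Real.rpow_nonneg (abs_nonneg (v 0)) p
  rw [Real.one_rpow] at h1
  have h3 : |v 1| ^ p < |v 1| ^ p := by
    calc |v 1| ^ p ≤ 1 := by linarith
    _ < |v 1| ^ p := by
        have : (1:ℝ) < |v 1| ^ p := by
          have := Real.one_lt_rpow_iff_of_pos (x := |v 1|) (by linarith) (y := p)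
          exact this.mpr (Or.inl ⟨hc, by linarith⟩)
        linarith
  exact absurd h3 (lt_irrefl _)

def mk (p x y : ℝ) : E p := (WithLp.equiv (ENNReal.ofReal p) (∀ _ : Fin 2, ℝ)).symm ![x, y]

@[simp] lemma mk_fst (p x y : ℝ) : mk p x y 0 = x := by
  rw [mk]; rfl

@[simp] lemma mk_snd (p x y : ℝ) : mk p x y 1 = y := by
  rw [mk]; rfl

lemma g_concave {p : ℝ} (hp : 1 < p) [Fact (1 ≤ ENNReal.ofReal p)] :
    ConcaveOn ℝ (Set.Icc (-1 : ℝ) 1) (g p) := by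
  refine ⟨convex_Icc _ _, ?_⟩
  intro x hx y hy s t hs ht hst
  simp only [smul_eq_mul]
  have hx1 : |x| ≤ 1 := abs_le.mpr ⟨hx.1, hx.2⟩
  have hy1 : |y| ≤ 1 := abs_le.mpr ⟨hy.1, hy.2⟩
  set u : E p := mk p (g p x) x with hu
  set w : E p := mk p (g p y) y with hw
  have hnu : ‖u‖ ≤ 1 := by
    rw [norm_le_one_iff hp, hu, mk_fst, mk_snd,
      abs_of_nonneg (g_nonneg hp hx1), g_rpow hp hx1]
    linarith
  have hnw : ‖w‖ ≤ 1 := by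
    rw [norm_le_one_iff hp, hw, mk_fst, mk_snd,
      abs_of_nonneg (g_nonneg hp hy1), g_rpow hp hy1]
    linarith
  have hcomb : ‖s • u + t • w‖ ≤ 1 := by
    calc ‖s • u + t • w‖ ≤ ‖s • u‖ + ‖t • w‖ := norm_add_le _ _
      _ = |s| * ‖u‖ + |t| * ‖w‖ := by rw [norm_smul, norm_smul]; rfl
      _ = s * ‖u‖ + t * ‖w‖ := by rw [abs_of_nonneg hs, abs_of_nonneg ht]
      _ ≤ s * 1 + t * 1 := by
          gcongr
      _ = 1 := by linarith
  have happ0 : (s • u + t • w) 0 = s * g p x + t * g p y := by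
    simp [hu, hw, PiLp.add_apply, PiLp.smul_apply, smul_eq_mul]
  have happ1 : (s • u + t • w) 1 = s * x + t * y := by
    simp [hu, hw, PiLp.add_apply, PiLp.smul_apply, smul_eq_mul]
  have hsum := (norm_le_one_iff hp _).mp hcomb
  rw [happ0, happ1] at hsum
  have hge : 0 ≤ s * g p x + t * g p y := by
    have := g_nonneg hp hx1
    have := g_nonneg hp hy1
    positivity
  exact le_g hp hsum hge

end AuxSign
namespace AuxSign

/-- concavity pair inequality: if `a ≤ c`, `a ≤ d` and `c + d = a + b` then
`g a + g b ≤ g c + g d`. -/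
lemma C1 {p : ℝ} (hp : 1 < p) [Fact (1 ≤ ENNReal.ofReal p)] {a b c d : ℝ}
    (ha : a ∈ Set.Icc (-1:ℝ) 1) (hb : b ∈ Set.Icc (-1:ℝ) 1)
    (hac : a ≤ c) (had : a ≤ d) (hsum : c + d = a + b) :
    g p a + g p b ≤ g p c + g p d := by
  have hab : a ≤ b := by linarith
  rcases eq_or_lt_of_le hab with h | h
  · have hca : c = a := by linarith
    have hda : d = a := by linarith
    rw [hca, hda, ← h]
  · set lam := (b - c) / (b - a) with hlam
    have hba : 0 < b - a := by linarith
    have hcb : c ≤ b := by linarith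
    have hdb : d ≤ b := by linarith
    have hl0 : 0 ≤ lam := div_nonneg (by linarith) hba.le
    have hl1 : lam ≤ 1 := by
      rw [hlam, div_le_one hba]; linarith
    have hlamm : lam * (b - a) = b - c := div_mul_cancel₀ _ (ne_of_gt hba)
    have hc_eq : c = lam * a + (1 - lam) * b := by nlinarith [hlamm]
    have hd_eq : d = (1 - lam) * a + lam * b := by nlinarith [hlamm]
    have hcon := (g_concave hp).2
    have h1 := hcon ha hb (a := lam) (b := 1 - lam) hl0 (by linarith) (by ring)
    have h2 := hcon ha hb (a := 1 - lam) (b := lam) (by linarith) hl0 (by ring)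
    simp only [smul_eq_mul] at h1 h2
    rw [← hc_eq] at h1
    rw [← hd_eq] at h2
    linarith

/-- P3: for `p₄ ≤ p₃ ≤ p₂ ≤ p₁` in `[-1,1]` with `p₁ + p₄ = p₂ + p₃`,
`g p₃ ≤ g p₁ + g p₂ + g p₄`. -/
lemma P3 {p : ℝ} (hp : 1 < p) [Fact (1 ≤ ENNReal.ofReal p)] {p₁ p₂ p₃ p₄ : ℝ}
    (h1 : p₁ ∈ Set.Icc (-1:ℝ) 1) (h2 : p₂ ∈ Set.Icc (-1:ℝ) 1)
    (h3 : p₃ ∈ Set.Icc (-1:ℝ) 1) (h4 : p₄ ∈ Set.Icc (-1:ℝ) 1)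
    (h43 : p₄ ≤ p₃) (h32 : p₃ ≤ p₂) (h21 : p₂ ≤ p₁) (hsum : p₁ + p₄ = p₂ + p₃) :
    g p p₃ ≤ g p p₁ + g p p₂ + g p p₄ := by
  have hg1 : 0 ≤ g p p₁ := g_nonneg hp (abs_le.mpr ⟨h1.1, h1.2⟩)
  have hg4 : 0 ≤ g p p₄ := g_nonneg hp (abs_le.mpr ⟨h4.1, h4.2⟩)
  rcases le_or_gt p₂ 0 with hneg | hpos
  · -- then |p₃| ≥ |p₂|, so g p₃ ≤ g p₂
    have habs : |p₂| ≤ |p₃| := by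
      rw [abs_of_nonpos hneg, abs_of_nonpos (le_trans h32 hneg)]; linarith
    have := g_anti hp (abs_le.mpr ⟨h3.1, h3.2⟩) habs
    linarith
  · set D := p₁ - p₂ with hD
    have hD0 : 0 ≤ D := by linarith
    have hD2 : D ≤ 2 := by
      have := h1.2; have := h2.1; simp only [hD]; linarith
    -- step 1 : g p₃ ≤ g (D - 1) + g p₄  via C1 with (a,b,c,d) = (-1, p₃, D-1, p₄)
    have hstep1 : g p (-1) + g p p₃ ≤ g p (D - 1) + g p p₄ := by
      refine C1 hp ⟨le_refl _, by norm_num⟩ h3 (by linarith) h4.1 (by linarith)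
    rw [g_neg_one hp] at hstep1
    -- step 2 : g (D - 1) ≤ g p₂ since |D - 1| ≥ 1 - D ≥ p₂ = |p₂|
    have hstep2 : g p (D - 1) ≤ g p p₂ := by
      have habs : |p₂| ≤ |D - 1| := by
        have h1d : p₂ ≤ 1 - D := by simp only [hD]; linarith [h1.2]
        rw [abs_of_pos hpos]
        calc p₂ ≤ 1 - D := h1d
          _ ≤ |1 - D| := le_abs_self _
          _ = |D - 1| := abs_sub_comm _ _
      exact g_anti hp (abs_le.mpr ⟨by linarith, by linarith⟩) habs
    linarith

end AuxSign
namespace AuxSign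

def altSum : List ℝ → ℝ
  | [] => 0
  | a :: l => a - altSum l

@[simp] lemma altSum_nil : altSum [] = 0 := rfl
@[simp] lemma altSum_cons (a : ℝ) (l : List ℝ) : altSum (a :: l) = a - altSum l := rfl

lemma blemma {p : ℝ} (hp : 1 < p) [Fact (1 ≤ ENNReal.ofReal p)] :
    ∀ (n : ℕ) (l : List ℝ), l.length = n → Odd l.length → l.Chain' (· ≤ ·) →
    (∀ x ∈ l, x ∈ Set.Icc (-1:ℝ) 1) → ∀ lo hi : ℝ, l.head? = some lo →
    l.getLast? = some hi →
    (lo ∈ Set.Icc (-1:ℝ) 1 ∧ hi ∈ Set.Icc (-1:ℝ) 1) ∧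
    (lo ≤ altSum l ∧ altSum l ≤ hi) ∧
    altSum (l.map (g p)) ≤ g p (altSum l) ∧
    g p hi + g p lo - g p (hi + lo - altSum l) ≤ altSum (l.map (g p)) := by
  intro n
  induction n using Nat.strong_induction_on with
  | _ n IH =>
    intro l hlen hodd hchain hmem lo hi hhead hlast
    rcases l with _ | ⟨a, l1⟩
    · simp at hhead
    rcases l1 with _ | ⟨b, l2⟩
    · -- singleton case
      rw [List.head?_cons] at hhead
      obtain rfl : a = lo := Option.some.inj hhead
      rw [List.getLast?_singleton] at hlast
      obtain rfl : a = hi := Option.some.inj hlast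
      have haI : a ∈ Set.Icc (-1:ℝ) 1 := hmem a (by simp)
      have hA : altSum [a] = a := by simp [altSum]
      have hX : altSum ([a].map (g p)) = g p a := by simp [altSum]
      refine ⟨⟨haI, haI⟩, ⟨by rw [hA], by rw [hA]⟩, by rw [hA, hX], ?_⟩
      rw [hA, hX]
      have : a + a - a = a := by ring
      rw [this]
      linarith
    rcases l2 with _ | ⟨c, l''⟩
    · -- length 2 : contradicts parity
      exfalso
      simp only [List.length_cons, List.length_nil] at hodd
      rw [Nat.odd_iff] at hodd
      omega
    · -- main case \ l = a :: b :: c :: l''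
      rw [List.head?_cons] at hhead
      obtain rfl : a = lo := Option.some.inj hhead
      simp only [List.Chain', List.isChain_cons_cons] at hchain
      obtain ⟨hab, hchain⟩ := hchain
      obtain ⟨hbc, hchain'⟩ := hchain
      have hlt : (c :: l'').length < n := by
        rw [← hlen]; simp [List.length_cons]
      have hodd' : Odd (c :: l'').length := by
        simp only [List.length_cons] at hodd ⊢
        rw [Nat.odd_iff] at hodd ⊢
        omega
      have hmem' : ∀ x ∈ (c :: l''), x ∈ Set.Icc (-1:ℝ) 1 := by
        intro x hx
        exact hmem x (by simp [hx])
      have hlast' : (c :: l'').getLast? = some hi := by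
        rw [List.getLast?_cons_cons, List.getLast?_cons_cons] at hlast
        exact hlast
      obtain ⟨⟨hcI, hhiI⟩, ⟨hA'1, hA'2⟩, hB2, hB3⟩ :=
        IH (c :: l'').length hlt (c :: l'') rfl hodd' hchain' hmem' c hi rfl hlast'
      have haI : a ∈ Set.Icc (-1:ℝ) 1 := hmem a (by simp)
      have hbI : b ∈ Set.Icc (-1:ℝ) 1 := hmem b (by simp)
      set A' := altSum (c :: l'') with hA'def
      set X' := altSum ((c :: l'').map (g p)) with hX'def
      have hA : altSum (a :: b :: c :: l'') = a - b + A' := by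
        simp only [altSum_cons, hA'def]; ring
      have hX : altSum ((a :: b :: c :: l'').map (g p)) = g p a - g p b + X' := by
        simp only [List.map_cons, altSum_cons, hX'def]; ring
      have hA'I : A' ∈ Set.Icc (-1:ℝ) 1 := ⟨by linarith [hcI.1], by linarith [hhiI.2]⟩
      have h1a : a ≤ altSum (a :: b :: c :: l'') := by rw [hA]; linarith
      have h1b : altSum (a :: b :: c :: l'') ≤ hi := by rw [hA]; linarith
      have hAI : altSum (a :: b :: c :: l'') ∈ Set.Icc (-1:ℝ) 1 :=
        ⟨by linarith [haI.1], by linarith [hhiI.2]⟩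
      refine ⟨⟨haI, hhiI⟩, ⟨h1a, h1b⟩, ?_, ?_⟩
      · -- upper bound
        have hC : g p a + g p A' ≤ g p b + g p (altSum (a :: b :: c :: l'')) := by
          refine C1 hp haI hA'I hab h1a ?_
          rw [hA]; ring
        rw [hX]
        linarith
      · -- lower bound
        set Z : ℝ := hi + a - altSum (a :: b :: c :: l'') with hZdef
        have hZ : Z = hi + b - A' := by rw [hZdef, hA]; ring
        set Z' : ℝ := hi + c - A' with hZ'def
        have hZ'I : Z' ∈ Set.Icc (-1:ℝ) 1 :=
          ⟨by rw [hZ'def]; linarith [hcI.1], by rw [hZ'def]; linarith [hhiI.2]⟩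
        have hbZ : b ≤ Z := by rw [hZ]; linarith
        have hC2 : g p b + g p Z' ≤ g p c + g p Z := by
          refine C1 hp hbI hZ'I hbc hbZ ?_
          rw [hZ, hZ'def]; ring
        have hB3' : g p hi + g p c - g p Z' ≤ X' := by
          have : hi + c - A' = Z' := by rw [hZ'def]
          rw [← this] at hB3 ⊢
          exact hB3
        rw [hX]
        linarith

end AuxSign
namespace AuxSign

lemma blemma_abs {p : ℝ} (hp : 1 < p) [Fact (1 ≤ ENNReal.ofReal p)] (l : List ℝ)
    (hodd : Odd l.length) (hchain : l.Chain' (· ≤ ·))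
    (hmem : ∀ x ∈ l, x ∈ Set.Icc (-1:ℝ) 1) {lo hi : ℝ}
    (hhead : l.head? = some lo) (hlast : l.getLast? = some hi) :
    |altSum (l.map (g p))| ≤ g p (altSum l) ∧ altSum l ∈ Set.Icc (-1:ℝ) 1 := by
  obtain ⟨⟨hloI, hhiI⟩, ⟨h1a, h1b⟩, hB2, hB3⟩ :=
    blemma hp l.length l rfl hodd hchain hmem lo hi hhead hlast
  set A := altSum l with hAdef
  set X := altSum (l.map (g p)) with hXdef
  have hAI : A ∈ Set.Icc (-1:ℝ) 1 := ⟨by linarith [hloI.1], by linarith [hhiI.2]⟩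
  set Z : ℝ := hi + lo - A with hZdef
  have hZI : Z ∈ Set.Icc (-1:ℝ) 1 := ⟨by rw [hZdef]; linarith [hloI.1], by rw [hZdef]; linarith [hhiI.2]⟩
  have hP3 : g p Z ≤ g p hi + g p lo + g p A := by
    rcases le_total Z A with hZA | hAZ
    · have := P3 hp hhiI hAI hZI hloI (by rw [hZdef]; linarith) hZA h1b (by rw [hZdef]; ring)
      linarith
    · have hneg := P3 hp (p₁ := -lo) (p₂ := -A) (p₃ := -Z) (p₄ := -hi)
        ⟨by linarith [hloI.2], by linarith [hloI.1]⟩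
        ⟨by linarith [hAI.2], by linarith [hAI.1]⟩
        ⟨by linarith [hZI.2], by linarith [hZI.1]⟩
        ⟨by linarith [hhiI.2], by linarith [hhiI.1]⟩
        (by rw [hZdef]; linarith) (by linarith) (by linarith) (by rw [hZdef]; ring)
      rw [g_neg, g_neg, g_neg, g_neg] at hneg
      linarith
  refine ⟨abs_le.mpr ⟨by linarith, hB2⟩, hAI⟩

lemma listlemma {p : ℝ} (hp : 1 < p) (t θ : ℕ → ℝ)
    (hanti : ∀ i j : ℕ, i ≤ j → t j ≤ t i)
    (hθ : ∀ i, θ i = 1 ∨ θ i = -1) :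
    ∀ n : ℕ, ∃ (l : List ℕ) (k : ℕ),
      Odd l.length ∧ l.Chain' (fun i j => t i ≤ t j) ∧
      l.head? = some k ∧ t n ≤ t k ∧ (θ n = θ 0 → t k = t n) ∧
      altSum (l.map t) =
        θ 0 * (θ 0 * ((t 0 + t n) / 2) +
          ∑ i ∈ Finset.range n, θ (i + 1) * ((t (i + 1) - t i) / 2)) ∧
      altSum (l.map (fun i => g p (t i))) =
        θ 0 * (θ 0 * ((g p (t 0) + g p (t n)) / 2) +
          ∑ i ∈ Finset.range n, θ (i + 1) * ((g p (t (i + 1)) - g p (t i)) / 2)) := by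
  have hsq : θ 0 * θ 0 = 1 := by rcases hθ 0 with h | h <;> rw [h] <;> norm_num
  intro n
  induction n with
  | zero =>
    refine ⟨[0], 0, ⟨0, by simp⟩, List.isChain_singleton _, rfl, le_refl _, fun _ => rfl, ?_, ?_⟩
    · simp only [List.map_cons, List.map_nil, altSum_cons, altSum_nil,
        Finset.sum_range_zero]
      calc t 0 - 0 = (θ 0 * θ 0) * t 0 := by rw [hsq]; ring
        _ = θ 0 * (θ 0 * ((t 0 + t 0) / 2) + 0) := by ring
    · simp only [List.map_cons, List.map_nil, altSum_cons, altSum_nil,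
        Finset.sum_range_zero]
      calc g p (t 0) - 0 = (θ 0 * θ 0) * g p (t 0) := by rw [hsq]; ring
        _ = θ 0 * (θ 0 * ((g p (t 0) + g p (t 0)) / 2) + 0) := by ring
  | succ n ihn =>
    obtain ⟨l, k, hodd, hchain, hhead, hk1, hk2, hS1, hS2⟩ := ihn
    have hdisj : θ (n + 1) = θ 0 ∨ θ (n + 1) = -θ 0 := by
      rcases hθ (n + 1) with h | h <;> rcases hθ 0 with h' | h' <;> rw [h, h'] <;> norm_num
    have hstep : (θ 0 * ((t 0 + t (n+1)) / 2) +
          ∑ i ∈ Finset.range (n+1), θ (i + 1) * ((t (i + 1) - t i) / 2)) =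
        (θ 0 * ((t 0 + t n) / 2) +
          ∑ i ∈ Finset.range n, θ (i + 1) * ((t (i + 1) - t i) / 2)) +
        (θ 0 + θ (n+1)) * ((t (n+1) - t n) / 2) := by
      rw [Finset.sum_range_succ]; ring
    have hstepg : (θ 0 * ((g p (t 0) + g p (t (n+1))) / 2) +
          ∑ i ∈ Finset.range (n+1), θ (i + 1) * ((g p (t (i + 1)) - g p (t i)) / 2)) =
        (θ 0 * ((g p (t 0) + g p (t n)) / 2) +
          ∑ i ∈ Finset.range n, θ (i + 1) * ((g p (t (i + 1)) - g p (t i)) / 2)) +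
        (θ 0 + θ (n+1)) * ((g p (t (n+1)) - g p (t n)) / 2) := by
      rw [Finset.sum_range_succ]; ring
    rcases hdisj with heq | hne
    · -- θ (n+1) = θ 0 : multiplier is 2 θ 0
      have hmul : θ 0 * (θ 0 + θ (n+1)) = 2 := by rw [heq]; linear_combination 2 * hsq
      have hgoal_eq : θ 0 * (θ 0 * ((t 0 + t (n+1)) / 2) +
            ∑ i ∈ Finset.range (n+1), θ (i + 1) * ((t (i + 1) - t i) / 2)) =
          θ 0 * (θ 0 * ((t 0 + t n) / 2) +
            ∑ i ∈ Finset.range n, θ (i + 1) * ((t (i + 1) - t i) / 2)) +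
          (t (n+1) - t n) := by
        rw [hstep]
        have hexp : θ 0 * ((θ 0 * ((t 0 + t n) / 2) +
              ∑ i ∈ Finset.range n, θ (i + 1) * ((t (i + 1) - t i) / 2)) +
            (θ 0 + θ (n+1)) * ((t (n+1) - t n) / 2)) =
            θ 0 * (θ 0 * ((t 0 + t n) / 2) +
              ∑ i ∈ Finset.range n, θ (i + 1) * ((t (i + 1) - t i) / 2)) +
            (θ 0 * (θ 0 + θ (n+1))) * ((t (n+1) - t n) / 2) := by ring
        rw [hexp, hmul]; ring
      have hgoal_eqg : θ 0 * (θ 0 * ((g p (t 0) + g p (t (n+1))) / 2) +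
            ∑ i ∈ Finset.range (n+1), θ (i + 1) * ((g p (t (i + 1)) - g p (t i)) / 2)) =
          θ 0 * (θ 0 * ((g p (t 0) + g p (t n)) / 2) +
            ∑ i ∈ Finset.range n, θ (i + 1) * ((g p (t (i + 1)) - g p (t i)) / 2)) +
          (g p (t (n+1)) - g p (t n)) := by
        rw [hstepg]
        have hexp : θ 0 * ((θ 0 * ((g p (t 0) + g p (t n)) / 2) +
              ∑ i ∈ Finset.range n, θ (i + 1) * ((g p (t (i + 1)) - g p (t i)) / 2)) +
            (θ 0 + θ (n+1)) * ((g p (t (n+1)) - g p (t n)) / 2)) =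
            θ 0 * (θ 0 * ((g p (t 0) + g p (t n)) / 2) +
              ∑ i ∈ Finset.range n, θ (i + 1) * ((g p (t (i + 1)) - g p (t i)) / 2)) +
            (θ 0 * (θ 0 + θ (n+1))) * ((g p (t (n+1)) - g p (t n)) / 2) := by ring
        rw [hexp, hmul]; ring
      have hθn2 : θ n = θ 0 ∨ θ n = -θ 0 := by
        rcases hθ n with h | h <;> rcases hθ 0 with h' | h' <;> rw [h, h'] <;> norm_num
      rcases hθn2 with hkeq | hkne
      · -- replace the head of the list
        have htk : t k = t n := hk2 hkeq
        rcases l with _ | ⟨k', tail⟩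
        · simp at hhead
        have hk' : k' = k := by
          rw [List.head?_cons] at hhead; exact Option.some.inj hhead
        subst hk'
        refine ⟨(n+1) :: tail, n+1, by simpa using hodd, ?_, rfl, le_refl _,
          fun _ => rfl, ?_, ?_⟩
        · simp only [List.Chain', List.isChain_cons] at hchain ⊢
          refine ⟨fun y hy => ?_, hchain.2⟩
          have h1 : t (n+1) ≤ t n := hanti n (n+1) (by omega)
          have h2 : t k' ≤ t y := hchain.1 y hy
          rw [htk] at h2
          linarith
        · have h1 : altSum ((k' :: tail).map t) = t k' - altSum (tail.map t) := by simp
          have h2 : altSum (((n+1) :: tail).map t) = t (n+1) - altSum (tail.map t) := by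
            simp
          rw [h2, hgoal_eq, ← hS1, h1, htk]; ring
        · have h1 : altSum ((k' :: tail).map (fun i => g p (t i))) =
              g p (t k') - altSum (tail.map (fun i => g p (t i))) := by simp
          have h2 : altSum (((n+1) :: tail).map (fun i => g p (t i))) =
              g p (t (n+1)) - altSum (tail.map (fun i => g p (t i))) := by simp
          rw [h2, hgoal_eqg, ← hS2, h1, htk]; ring
      · -- prepend two new elements
        refine ⟨(n+1) :: n :: l, n+1, ?_, ?_, rfl, le_refl _, fun _ => rfl, ?_, ?_⟩
        · obtain ⟨w, hw⟩ := hodd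
          exact ⟨w + 1, by simp only [List.length_cons]; omega⟩
        · simp only [List.Chain', List.isChain_cons_cons]
          refine ⟨hanti n (n+1) (by omega), ?_⟩
          rw [List.isChain_cons]
          refine ⟨fun y hy => ?_, hchain⟩
          rw [hhead] at hy
          simp only [Option.mem_def, Option.some.injEq] at hy
          subst hy
          exact hk1
        · have h2 : altSum (((n+1) :: n :: l).map t) =
              t (n+1) - (t n - altSum (l.map t)) := by simp
          rw [h2, hgoal_eq, hS1]; ring
        · have h2 : altSum (((n+1) :: n :: l).map (fun i => g p (t i))) =
              g p (t (n+1)) - (g p (t n) - altSum (l.map (fun i => g p (t i)))) := by simp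
          rw [h2, hgoal_eqg, hS2]; ring
    · -- θ (n+1) = -θ 0 : nothing changes
      have hmul : θ 0 + θ (n+1) = 0 := by rw [hne]; ring
      refine ⟨l, k, hodd, hchain, hhead, le_trans (hanti n (n+1) (by omega)) hk1, ?_, ?_, ?_⟩
      · intro habs
        exfalso
        rw [hne] at habs
        rcases hθ 0 with h | h <;> rw [h] at habs <;> norm_num at habs
      · rw [hstep, hmul, hS1]; ring
      · rw [hstepg, hmul, hS2]; ring

end AuxSign
open AuxSign in
/-- Lemma: for unit vectors `a₁, …, aₙ₊₁` in `ℓ_p²` with nonnegative first coordinates and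
nonincreasing second coordinates, every sign combination
`θ₁(a₁+aₙ₊₁)/2 + θ₂(a₂-a₁)/2 + ⋯ + θₙ₊₁(aₙ₊₁-aₙ)/2` lies in the closed unit ball. -/
theorem sign_combination_mem_closedBall (p : ℝ) (hp : 1 < p) [Fact (1 ≤ ENNReal.ofReal p)]
    (m : ℕ) (a : Fin (m + 1) → PiLp (ENNReal.ofReal p) (fun _ : Fin 2 => ℝ))
    (ha : ∀ i, ‖a i‖ = 1)
    (hα : ∀ i, 0 ≤ a i 0)
    (hβ : ∀ i j : Fin (m + 1), i ≤ j → a j 1 ≤ a i 1)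
    (θ : Fin (m + 1) → ℝ) (hθ : ∀ i, θ i = 1 ∨ θ i = -1) :
    ‖θ 0 • ((2 : ℝ)⁻¹ • (a 0 + a (Fin.last m))) +
      ∑ i : Fin m, θ i.succ • ((2 : ℝ)⁻¹ • (a i.succ - a i.castSucc))‖ ≤ 1 := by
  have hp0 : (0:ℝ) < p := by linarith
  set v : PiLp (ENNReal.ofReal p) (fun _ : Fin 2 => ℝ) :=
    θ 0 • ((2 : ℝ)⁻¹ • (a 0 + a (Fin.last m))) +
      ∑ i : Fin m, θ i.succ • ((2 : ℝ)⁻¹ • (a i.succ - a i.castSucc)) with hvdef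
  set tf : ℕ → ℝ := fun n => a ⟨min n m, Nat.lt_succ_of_le (Nat.min_le_right n m)⟩ 1
    with htf
  set θf : ℕ → ℝ := fun n => θ ⟨min n m, Nat.lt_succ_of_le (Nat.min_le_right n m)⟩
    with hθfdef
  have hfin : ∀ i : Fin (m+1), tf i.val = a i 1 := by
    intro i
    simp only [htf]
    exact congrArg (fun j => (a j) 1) (Fin.ext (by simp only [Fin.val_mk]; omega))
  have hθfin : ∀ i : Fin (m+1), θf i.val = θ i := by
    intro i
    simp only [hθfdef]
    congr 1
    exact Fin.ext (by simp only [Fin.val_mk]; omega)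
  have hanti : ∀ i j : ℕ, i ≤ j → tf j ≤ tf i := by
    intro i j hij
    simp only [htf]
    exact hβ _ _ (by simp [Fin.mk_le_mk]; omega)
  have hbd : ∀ i : ℕ, tf i ∈ Set.Icc (-1:ℝ) 1 := by
    intro i
    simp only [htf]
    have := snd_abs_le_one hp (ha ⟨min i m, Nat.lt_succ_of_le (Nat.min_le_right i m)⟩)
    exact ⟨by cases abs_le.mp this; linarith, by cases abs_le.mp this; linarith⟩
  have hθf : ∀ i : ℕ, θf i = 1 ∨ θf i = -1 := fun i => hθ _
  have hfst : ∀ i : Fin (m+1), a i 0 = g p (tf i.val) := by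
    intro i
    rw [hfin i]
    exact fst_eq_g hp (ha i) (hα i)
  -- coordinates of v
  have hsumapp : ∀ (F : Fin m → PiLp (ENNReal.ofReal p) (fun _ : Fin 2 => ℝ))
      (j : Fin 2), (∑ i : Fin m, F i) j = ∑ i : Fin m, F i j := by
    intro F j
    induction (Finset.univ : Finset (Fin m)) using Finset.cons_induction with
    | empty => simp
    | cons x s hx ih =>
      rw [Finset.sum_cons, Finset.sum_cons, PiLp.add_apply, ih]
  have hcoord : ∀ j : Fin 2, v j =
      θ 0 * (2⁻¹ * (a 0 j + a (Fin.last m) j)) +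
        ∑ i : Fin m, θ i.succ * (2⁻¹ * (a i.succ j - a i.castSucc j)) := by
    intro j
    rw [hvdef, PiLp.add_apply, hsumapp]
    simp only [PiLp.add_apply, PiLp.smul_apply, PiLp.sub_apply, smul_eq_mul]
  have hzerofin : tf 0 = a 0 1 := by simpa using hfin 0
  have hlastfin : tf m = a (Fin.last m) 1 := by simpa using hfin (Fin.last m)
  have hθ0 : θf 0 = θ 0 := hθfin 0
  have hsucc : ∀ i : Fin m, tf (i.val + 1) = a i.succ 1 := by
    intro i
    have := hfin i.succ
    rwa [Fin.val_succ] at this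
  have hcast : ∀ i : Fin m, tf i.val = a i.castSucc 1 := by
    intro i
    have := hfin i.castSucc
    rwa [Fin.coe_castSucc] at this
  have hθsucc : ∀ i : Fin m, θf (i.val + 1) = θ i.succ := by
    intro i
    have := hθfin i.succ
    rwa [Fin.val_succ] at this
  have hgsucc : ∀ i : Fin m, g p (tf (i.val + 1)) = a i.succ 0 := by
    intro i
    rw [hfst i.succ, Fin.val_succ]
  have hgcast : ∀ i : Fin m, g p (tf i.val) = a i.castSucc 0 := by
    intro i
    rw [hfst i.castSucc, Fin.coe_castSucc]
  have hg0 : g p (tf 0) = a 0 0 := by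
    have := hfst 0
    simp only [Fin.val_zero] at this
    exact this.symm
  have hglast : g p (tf m) = a (Fin.last m) 0 := by
    have := hfst (Fin.last m)
    simp only [Fin.val_last] at this
    exact this.symm
  -- second coordinate
  have hsum1 : ∑ i : Fin m, θ i.succ * (2⁻¹ * (a i.succ 1 - a i.castSucc 1)) =
      ∑ j ∈ Finset.range m, θf (j+1) * ((tf (j+1) - tf j)/2) := by
    rw [← Fin.sum_univ_eq_sum_range (fun j => θf (j+1) * ((tf (j+1) - tf j)/2)) m]
    refine Finset.sum_congr rfl (fun i _ => ?_)
    rw [hθsucc i, hsucc i, hcast i]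
    ring
  have hv1 : v 1 = θf 0 * ((tf 0 + tf m) / 2) +
      ∑ j ∈ Finset.range m, θf (j+1) * ((tf (j+1) - tf j)/2) := by
    rw [hcoord 1, hsum1, hθ0, ← hzerofin, ← hlastfin]
    ring
  -- first coordinate
  have hsum0 : ∑ i : Fin m, θ i.succ * (2⁻¹ * (a i.succ 0 - a i.castSucc 0)) =
      ∑ j ∈ Finset.range m, θf (j+1) * ((g p (tf (j+1)) - g p (tf j))/2) := by
    rw [← Fin.sum_univ_eq_sum_range
      (fun j => θf (j+1) * ((g p (tf (j+1)) - g p (tf j))/2)) m]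
    refine Finset.sum_congr rfl (fun i _ => ?_)
    rw [hθsucc i, hgsucc i, hgcast i]
    ring
  have hv0 : v 0 = θf 0 * ((g p (tf 0) + g p (tf m)) / 2) +
      ∑ j ∈ Finset.range m, θf (j+1) * ((g p (tf (j+1)) - g p (tf j))/2) := by
    rw [hcoord 0, hsum0, hθ0, ← hg0, ← hglast]
    ring
  -- the list
  obtain ⟨l, k, hodd, hchain, hhead, hk1, hk2, hS1, hS2⟩ := listlemma hp tf θf hanti hθf m
  set L := l.map tf with hL
  have hLodd : Odd L.length := by rw [hL, List.length_map]; exact hodd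
  have hLchain : L.Chain' (· ≤ ·) := by
    rw [hL]
    exact (List.isChain_map tf).mpr hchain
  have hLmem : ∀ x ∈ L, x ∈ Set.Icc (-1:ℝ) 1 := by
    intro x hx
    rw [hL] at hx
    obtain ⟨i, _, rfl⟩ := List.mem_map.mp hx
    exact hbd i
  have hLhead : L.head? = some (tf k) := by rw [hL, List.head?_map, hhead]; rfl
  have hLne : L ≠ [] := by
    intro h
    rw [h] at hLhead
    simp at hLhead
  obtain ⟨hi, hhi⟩ : ∃ z, L.getLast? = some z :=
    Option.isSome_iff_exists.mp (List.getLast?_isSome.mpr hLne)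
  obtain ⟨habs, hAI⟩ := blemma_abs hp L hLodd hLchain hLmem hLhead hhi
  have hcomp : L.map (g p) = l.map (fun i => g p (tf i)) := by
    rw [hL, List.map_map]; rfl
  rw [hcomp, hS2, hL, hS1] at habs
  rw [hL, hS1] at hAI
  rw [← hv1] at habs hAI
  rw [← hv0] at habs
  -- |θf 0| = 1 manipulations
  have habs1 : |v 1| ≤ 1 := by
    rcases hθf 0 with h | h <;> rw [h] at hAI
    · rw [one_mul] at hAI
      exact abs_le.mpr ⟨hAI.1, hAI.2⟩
    · rw [neg_one_mul] at hAI
      have h1 := hAI.1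
      have h2 := hAI.2
      exact abs_le.mpr ⟨by linarith, by linarith⟩
  have habs0 : |v 0| ≤ g p (v 1) := by
    rcases hθf 0 with h | h <;> rw [h] at habs
    · rw [one_mul, one_mul] at habs
      exact habs
    · rw [neg_one_mul, neg_one_mul, abs_neg, g_neg] at habs
      exact habs
  -- finish
  rw [norm_le_one_iff hp v]
  have h1 : |v 0| ^ p ≤ g p (v 1) ^ p :=
    Real.rpow_le_rpow (abs_nonneg _) habs0 (le_of_lt hp0)
  rw [g_rpow hp habs1] at h1
  linarith
end
end

section
/- Let 1 < p < ∞ and for a, b in the unit sphere of ℓ_p² let Θ_{a,b} := B ∩ (B + (a+b)), where B is the closed unit ball of ℓ_p². If a, b, c are pairwise distinct elements of the unit sphere of ℓ_p² and b ∈ Θ_{a,c}, then Θ_{a,b} ⊆ Θ_{a,c}. -/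
/-- The set `Θ_{a,b} = B ∩ (B + (a + b))`, where `B` is the closed unit ball. -/
def Theta {E : Type*} [NormedAddCommGroup E] (a b : E) : Set E :=
  Metric.closedBall (0 : E) 1 ∩ ((fun z => z + (a + b)) '' Metric.closedBall (0 : E) 1)

open Real Metric Set

noncomputable section

abbrev Ell (p : ℝ) := PiLp (ENNReal.ofReal p) (fun _ : Fin 2 => ℝ)

variable {p : ℝ}

lemma toReal_ofReal_p (hp : 1 < p) : (ENNReal.ofReal p).toReal = p :=
  ENNReal.toReal_ofReal (by linarith)

lemma abs_rpow_add_lt (hp : 1 < p) {s t : ℝ} (hst : s ≠ t) :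
    |s + t| ^ p < 2 ^ (p - 1) * (|s| ^ p + |t| ^ p) := by
  have hp0 : (0:ℝ) < p := by linarith
  rcases eq_or_ne |s| |t| with hST | hST
  · have hs0 : s ≠ 0 := by
      rintro rfl
      simp only [abs_zero] at hST
      exact hst (by rwa [eq_comm, abs_eq_zero, eq_comm] at hST)
    have hts : t = -s := by
      rcases abs_eq_abs.mp hST with h | h
      · exact absurd h hst
      · linarith
    subst hts
    rw [add_neg_cancel, abs_zero, Real.zero_rpow hp0.ne']
    have : (0:ℝ) < |s| ^ p := Real.rpow_pos_of_pos (abs_pos.mpr hs0) p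
    positivity
  · have h1 : |s + t| ^ p ≤ (|s| + |t|) ^ p :=
      Real.rpow_le_rpow (abs_nonneg _) (abs_add_le s t) hp0.le
    have h2 : ((1/2) * |s| + (1/2) * |t|) ^ p < (1/2) * |s| ^ p + (1/2) * |t| ^ p := by
      have := (strictConvexOn_rpow hp).2 (mem_Ici.mpr (abs_nonneg s))
        (mem_Ici.mpr (abs_nonneg t)) hST (show (0:ℝ) < 1/2 by norm_num) (show (0:ℝ) < 1/2 by norm_num)
        (show (1:ℝ)/2 + 1/2 = 1 by norm_num)
      simpa using this
    have h3 : (|s| + |t|) ^ p = 2 ^ p * ((1/2) * |s| + (1/2) * |t|) ^ p := by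
      rw [← Real.mul_rpow (by norm_num) (by positivity)]
      ring_nf
    have h4 : (2:ℝ) ^ p * ((1/2) * |s| ^ p + (1/2) * |t| ^ p)
        = 2 ^ (p - 1) * (|s| ^ p + |t| ^ p) := by
      rw [Real.rpow_sub (by norm_num), Real.rpow_one]
      ring
    calc |s + t| ^ p ≤ 2 ^ p * ((1/2) * |s| + (1/2) * |t|) ^ p := by rw [← h3]; exact h1
      _ < 2 ^ p * ((1/2) * |s| ^ p + (1/2) * |t| ^ p) := by
          exact mul_lt_mul_of_pos_left h2 (by positivity)
      _ = 2 ^ (p - 1) * (|s| ^ p + |t| ^ p) := h4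

lemma abs_rpow_add_le (hp : 1 < p) (s t : ℝ) :
    |s + t| ^ p ≤ 2 ^ (p - 1) * (|s| ^ p + |t| ^ p) := by
  rcases eq_or_ne s t with rfl | h
  · have : |s + s| = 2 * |s| := by rw [← two_mul, abs_mul]; norm_num
    rw [this, Real.mul_rpow (by norm_num) (abs_nonneg s), Real.rpow_sub (by norm_num),
      Real.rpow_one]
    ring_nf
    exact le_refl _
  · exact (abs_rpow_add_lt hp h).le

lemma ell_ext {x y : Ell p} (h0 : x 0 = y 0) (h1 : x 1 = y 1) : x = y := by
  apply (WithLp.equiv _ _).injective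
  funext i
  fin_cases i <;> simpa [WithLp.equiv_apply]

lemma ell_norm_eq [Fact (1 ≤ ENNReal.ofReal p)] (hp : 1 < p) (x : Ell p) :
    ‖x‖ = (|x 0| ^ p + |x 1| ^ p) ^ (1/p) := by
  rw [PiLp.norm_eq_sum (by rw [toReal_ofReal_p hp]; linarith), toReal_ofReal_p hp]
  simp [Fin.sum_univ_two, Real.norm_eq_abs]

lemma ell_sum_eq [Fact (1 ≤ ENNReal.ofReal p)] (hp : 1 < p) (x : Ell p) :
    |x 0| ^ p + |x 1| ^ p = ‖x‖ ^ p := by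
  have hA : (0:ℝ) ≤ |x 0| ^ p + |x 1| ^ p := by positivity
  rw [ell_norm_eq hp x, ← Real.rpow_mul hA, one_div,
    inv_mul_cancel₀ (show p ≠ 0 by linarith), Real.rpow_one]

lemma ell_strictConvex [Fact (1 ≤ ENNReal.ofReal p)] (hp : 1 < p) :
    StrictConvexSpace ℝ (Ell p) := by
  apply StrictConvexSpace.of_norm_add_ne_two
  intro x y hx hy hxy
  have hsx : |x 0| ^ p + |x 1| ^ p = 1 := by rw [ell_sum_eq hp x, hx, Real.one_rpow]
  have hsy : |y 0| ^ p + |y 1| ^ p = 1 := by rw [ell_sum_eq hp y, hy, Real.one_rpow]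
  have hlt : |(x+y) 0| ^ p + |(x+y) 1| ^ p < 2 ^ p := by
    have e0 : (x+y) 0 = x 0 + y 0 := rfl
    have e1 : (x+y) 1 = x 1 + y 1 := rfl
    rw [e0, e1]
    have hkey : |x 0 + y 0| ^ p + |x 1 + y 1| ^ p
        < 2 ^ (p-1) * ((|x 0| ^ p + |x 1| ^ p) + (|y 0| ^ p + |y 1| ^ p)) := by
      rcases ne_or_eq (x 0) (y 0) with h0 | h0
      · have := abs_rpow_add_lt hp h0
        have := abs_rpow_add_le hp (x 1) (y 1)
        nlinarith
      · have h1 : x 1 ≠ y 1 := fun h1 => hxy (ell_ext h0 h1)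
        have := abs_rpow_add_lt hp h1
        have := abs_rpow_add_le hp (x 0) (y 0)
        nlinarith
    rw [hsx, hsy] at hkey
    calc |x 0 + y 0| ^ p + |x 1 + y 1| ^ p < 2 ^ (p-1) * (1 + 1) := hkey
      _ = 2 ^ p := by rw [Real.rpow_sub (by norm_num), Real.rpow_one]; ring
  have : ‖x + y‖ < 2 := by
    rw [ell_norm_eq hp (x+y)]
    have h2 : ((2:ℝ) ^ p) ^ (1/p) = 2 := by
      rw [← Real.rpow_mul (by norm_num), mul_one_div, div_self (show p ≠ 0 by linarith),
        Real.rpow_one]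
    calc (|(x+y) 0| ^ p + |(x+y) 1| ^ p) ^ (1/p) < ((2:ℝ) ^ p) ^ (1/p) :=
          Real.rpow_lt_rpow (by positivity) hlt (by positivity)
      _ = 2 := h2
  linarith
/-- The functional vanishing on `d`. -/
def ff (d w : Ell p) : ℝ := d 1 * w 0 - d 0 * w 1
/-- The functional positive on `d`. -/
def gg (d w : Ell p) : ℝ := d 0 * w 0 + d 1 * w 1

lemma ff_sub (d x y : Ell p) : ff d (x - y) = ff d x - ff d y := by
  simp [ff]; ring
lemma ff_add (d x y : Ell p) : ff d (x + y) = ff d x + ff d y := by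
  simp [ff]; ring
lemma ff_smul (d : Ell p) (c : ℝ) (x : Ell p) : ff d (c • x) = c * ff d x := by
  simp [ff, smul_eq_mul]; ring
lemma ff_self (d : Ell p) : ff d d = 0 := by simp [ff]; ring
lemma gg_sub (d x y : Ell p) : gg d (x - y) = gg d x - gg d y := by
  simp [gg]; ring
lemma gg_add (d x y : Ell p) : gg d (x + y) = gg d x + gg d y := by
  simp [gg]; ring
lemma gg_smul (d : Ell p) (c : ℝ) (x : Ell p) : gg d (c • x) = c * gg d x := by
  simp [gg, smul_eq_mul]; ring

lemma coord_ne_zero {d : Ell p} (hd : d ≠ 0) : d 0 ≠ 0 ∨ d 1 ≠ 0 := by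
  by_contra h
  push_neg at h
  exact hd (ell_ext (by rw [h.1]; rfl) (by rw [h.2]; rfl))

lemma gg_self_pos {d : Ell p} (hd : d ≠ 0) : 0 < gg d d := by
  rcases coord_ne_zero hd with h | h <;> · simp only [gg]; nlinarith [mul_self_pos.mpr h, mul_self_nonneg (d 0), mul_self_nonneg (d 1)]

lemma ker_ff {d w : Ell p} (hd : d ≠ 0) (h : ff d w = 0) :
    w = (gg d w / gg d d) • d := by
  have hG := gg_self_pos hd
  simp only [ff] at h
  apply ell_ext
  · have : ((gg d w / gg d d) • d) 0 = (gg d w / gg d d) * d 0 := rfl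
    rw [this, div_mul_eq_mul_div, eq_div_iff hG.ne']
    simp only [gg]
    linear_combination (d 1) * h
  · have : ((gg d w / gg d d) • d) 1 = (gg d w / gg d d) * d 1 := rfl
    rw [this, div_mul_eq_mul_div, eq_div_iff hG.ne']
    simp only [gg]
    linear_combination (-(d 0)) * h

lemma order3 (hp : 1 < p) [Fact (1 ≤ ENNReal.ofReal p)] {d base : Ell p} (hd : d ≠ 0)
    {s1 s2 s3 : ℝ} (h12 : s1 < s2) (h23 : s2 < s3)
    (hn1 : ‖base + s1 • d‖ ≤ 1) (hn3 : ‖base + s3 • d‖ ≤ 1)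
    (hn2 : 1 ≤ ‖base + s2 • d‖) : False := by
  haveI := ell_strictConvex hp
  set μ := (s2 - s1)/(s3 - s1) with hμ
  have hμ0 : 0 < μ := div_pos (by linarith) (by linarith)
  have hμ1 : μ < 1 := (div_lt_one (by linarith)).mpr (by linarith)
  have hAB : base + s1 • d ≠ base + s3 • d := by
    intro h
    have h2 : (s3 - s1) • d = 0 := by
      have := sub_eq_zero.mpr h.symm
      rw [show base + s3 • d - (base + s1 • d) = (s3 - s1) • d by module] at this
      exact this
    rcases smul_eq_zero.mp h2 with h3 | h3
    · exact absurd (by linarith : s3 - s1 ≠ 0) (by simp [h3])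
    · exact hd h3
  have hμs : (1 - μ) * s1 + μ * s3 = s2 := by
    have h31 : s3 - s1 ≠ 0 := by linarith
    rw [hμ]; field_simp; ring
  have key : (1 - μ) • (base + s1 • d) + μ • (base + s3 • d)
      = base + ((1 - μ) * s1 + μ * s3) • d := by module
  rw [hμs] at key
  have := norm_combo_lt_of_ne (a := 1 - μ) (b := μ) hn1 hn3 hAB (by linarith) hμ0 (by ring)
  rw [key] at this
  linarith

lemma no_three (hp : 1 < p) [Fact (1 ≤ ENNReal.ofReal p)] {d : Ell p} (hd : d ≠ 0)
    {P Q R : Ell p} (hPQ : P ≠ Q) (hPR : P ≠ R) (hQR : Q ≠ R)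
    (nP : ‖P‖ = 1) (nQ : ‖Q‖ = 1) (nR : ‖R‖ = 1)
    (fPQ : ff d (Q - P) = 0) (fPR : ff d (R - P) = 0) : False := by
  have hQ' := ker_ff hd fPQ
  have hR' := ker_ff hd fPR
  set s := gg d (Q - P) / gg d d with hs
  set t := gg d (R - P) / gg d d with ht
  have hQ : Q = P + s • d := by rw [← hQ']; abel
  have hR : R = P + t • d := by rw [← hR']; abel
  have hs0 : s ≠ 0 := by
    intro h; rw [h, zero_smul, add_zero] at hQ; exact hPQ hQ.symm
  have ht0 : t ≠ 0 := by
    intro h; rw [h, zero_smul, add_zero] at hR; exact hPR hR.symm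
  have hst : s ≠ t := by
    intro h; rw [h] at hQ; rw [← hR] at hQ; exact hQR hQ
  have nP' : ‖P + (0:ℝ) • d‖ = 1 := by simpa using nP
  have nQ' : ‖P + s • d‖ = 1 := by rw [← hQ]; exact nQ
  have nR' : ‖P + t • d‖ = 1 := by rw [← hR]; exact nR
  rcases lt_trichotomy s t with h1 | h1 | h1
  · rcases lt_trichotomy 0 s with h2 | h2 | h2
    · exact order3 hp hd h2 h1 nP'.le nR'.le nQ'.symm.le
    · exact hs0 h2.symm
    · rcases lt_trichotomy 0 t with h3 | h3 | h3
      · exact order3 hp hd h2 h3 nQ'.le nR'.le nP'.symm.le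
      · exact ht0 h3.symm
      · exact order3 hp hd h1 h3 nQ'.le nP'.le nR'.symm.le
  · exact hst h1
  · rcases lt_trichotomy 0 t with h2 | h2 | h2
    · exact order3 hp hd h2 h1 nP'.le nQ'.le nR'.symm.le
    · exact ht0 h2.symm
    · rcases lt_trichotomy 0 s with h3 | h3 | h3
      · exact order3 hp hd h2 h3 nR'.le nQ'.le nP'.symm.le
      · exact hs0 h3.symm
      · exact order3 hp hd h1 h3 nR'.le nP'.le nQ'.symm.le
lemma chord_aux (hp : 1 < p) [Fact (1 ≤ ENNReal.ofReal p)] {d : Ell p} (hd : d ≠ 0)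
    {x1 x2 x3 : Ell p} (n1 : ‖x1‖ = 1) (n2 : ‖x2‖ = 1) (n3 : ‖x3‖ = 1)
    (m1 : ‖x1 - d‖ = 1) (m2 : ‖x2 - d‖ = 1) (m3 : ‖x3 - d‖ = 1)
    (h12 : ff d x1 < ff d x2) (h23 : ff d x2 < ff d x3) : False := by
  haveI := ell_strictConvex hp
  have hG := gg_self_pos hd
  set G := gg d d with hGdef
  set t1 := ff d x1
  set t2 := ff d x2
  set t3 := ff d x3
  have hd1 : 0 < ‖d‖ := norm_pos_iff.mpr hd
  set lam := (t3 - t2)/(t3 - t1) with hlam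
  have hl0 : 0 < lam := div_pos (by linarith) (by linarith)
  have hl1 : lam < 1 := (div_lt_one (by linarith)).mpr (by linarith)
  have hx13 : x1 ≠ x3 := by
    intro h
    have h' : t1 = t3 := congrArg (ff d) h
    linarith
  set P := lam • x1 + (1 - lam) • x3 with hPdef
  have hfP : ff d P = t2 := by
    rw [hPdef, ff_add, ff_smul, ff_smul]
    have h31 : t3 - t1 ≠ 0 := by linarith
    rw [hlam]; field_simp; ring
  have hPn : ‖P‖ < 1 :=
    norm_combo_lt_of_ne (a := lam) (b := 1 - lam) n1.le n3.le hx13 hl0 (by linarith) (by ring)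
  set Q := P - d with hQdef
  have hfQ : ff d Q = t2 := by rw [hQdef, ff_sub, ff_self, hfP, sub_zero]
  have hQn : ‖Q‖ < 1 := by
    have hQeq : Q = lam • (x1 - d) + (1 - lam) • (x3 - d) := by
      rw [hQdef, hPdef]; module
    rw [hQeq]
    refine norm_combo_lt_of_ne (a := lam) (b := 1 - lam) m1.le m3.le ?_ hl0 (by linarith) (by ring)
    exact fun h => hx13 (sub_left_injective h)
  -- max and min lemmas on level t2
  have hgy2 : gg d (x2 - d) = gg d x2 - G := by rw [gg_sub, hGdef]
  have hmax : ∀ w : Ell p, ‖w‖ ≤ 1 → ff d w = t2 → gg d w ≤ gg d x2 := by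
    intro w hw hfw
    by_contra hgw
    push_neg at hgw
    have hker : ff d (w - (x2 - d)) = 0 := by
      rw [ff_sub, hfw, ff_sub, ff_self]; ring
    have hs := ker_ff hd hker
    set s := gg d (w - (x2 - d)) / G with hsdef
    have hsval : gg d (w - (x2 - d)) = gg d w - gg d x2 + G := by
      rw [gg_sub, hgy2]; ring
    have hs1 : 1 < s := by
      rw [hsdef, hsval, lt_div_iff₀ hG]
      linarith
    have hs0 : s ≠ 0 := by linarith
    have hwy : w ≠ x2 - d := by
      intro h
      rw [h, hgy2] at hgw
      linarith
    have hcomb : (1 - 1/s) • (x2 - d) + (1/s) • w = x2 := by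
      have e1 : (1 - 1/s) • (x2 - d) + (1/s) • w = (x2 - d) + (1/s) • (w - (x2 - d)) := by
        module
      rw [e1, hs, smul_smul, one_div, inv_mul_cancel₀ hs0, one_smul]
      abel
    have := norm_combo_lt_of_ne (a := 1 - 1/s) (b := 1/s) m2.le hw
      (Ne.symm hwy) (by rw [sub_pos, div_lt_one (by linarith)]; linarith)
      (by positivity) (by ring)
    rw [hcomb, n2] at this
    linarith
  have hmin : ∀ w : Ell p, ‖w‖ ≤ 1 → ff d w = t2 → gg d x2 - G ≤ gg d w := by
    intro w hw hfw
    by_contra hgw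
    push_neg at hgw
    have hker : ff d (w - x2) = 0 := by rw [ff_sub, hfw]; ring
    have hs := ker_ff hd hker
    set s := gg d (w - x2) / G with hsdef
    have hs1 : s < -1 := by
      rw [hsdef, div_lt_iff₀ hG, gg_sub]
      linarith
    have hs0 : s ≠ 0 := by linarith
    have hwx : w ≠ x2 := by
      intro h
      rw [h] at hgw
      linarith
    have hcomb : (1 + 1/s) • x2 + (-1/s) • w = x2 - d := by
      have e1 : (1 + 1/s) • x2 + (-1/s) • w = x2 - (1/s) • (w - x2) := by module
      rw [e1, hs, smul_smul, one_div, inv_mul_cancel₀ hs0, one_smul]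
    have ha : 0 < 1 + 1/s := by
      have e2 : 1 + 1/s = (s+1)/s := by field_simp
      rw [e2]
      exact div_pos_iff.mpr (Or.inr ⟨by linarith, by linarith⟩)
    have hb : 0 < -1/s := div_pos_iff.mpr (Or.inr ⟨by norm_num, by linarith⟩)
    have := norm_combo_lt_of_ne (a := 1 + 1/s) (b := -1/s) n2.le hw
      (Ne.symm hwx) ha hb (by ring)
    rw [hcomb, m2] at this
    linarith
  -- endgame
  have hPmax := hmax P hPn.le hfP
  have hQmin := hmin Q hQn.le hfQ
  have hgQ : gg d Q = gg d P - G := by rw [hQdef, gg_sub, hGdef]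
  have hgP : gg d x2 ≤ gg d P := by linarith
  set eps := (1 - ‖P‖)/‖d‖ with he
  have heps : 0 < eps := div_pos (by linarith) hd1
  set W := P + eps • d with hW
  have hWn : ‖W‖ ≤ 1 := by
    calc ‖P + eps • d‖ ≤ ‖P‖ + ‖eps • d‖ := norm_add_le _ _
      _ = ‖P‖ + eps * ‖d‖ := by rw [norm_smul, Real.norm_eq_abs, abs_of_pos heps]
      _ = 1 := by rw [he, div_mul_cancel₀ _ hd1.ne']; ring
  have hWf : ff d W = t2 := by rw [hW, ff_add, ff_smul, ff_self, hfP]; ring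
  have hWg := hmax W hWn hWf
  have hgW : gg d W = gg d P + eps * G := by rw [hW, gg_add, gg_smul, hGdef]
  nlinarith [mul_pos heps hG]
lemma level_pair (hp : 1 < p) [Fact (1 ≤ ENNReal.ofReal p)] {d : Ell p} (hd : d ≠ 0)
    {x1 x2 : Ell p} (hne : x1 ≠ x2) (n1 : ‖x1‖ = 1) (n2 : ‖x2‖ = 1)
    (m1 : ‖x1 - d‖ = 1) (m2 : ‖x2 - d‖ = 1)
    (hlev : ff d x1 = ff d x2) : False := by
  have hy1 : x1 - d ≠ x1 := by
    intro h
    exact hd (by have := sub_eq_self.mp h; simpa using this)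
  have hy2 : x2 - d ≠ x2 := by
    intro h
    exact hd (by have := sub_eq_self.mp h; simpa using this)
  have f21 : ff d (x2 - x1) = 0 := by rw [ff_sub, hlev]; ring
  have fy1 : ff d ((x1 - d) - x1) = 0 := by
    rw [ff_sub, ff_sub, ff_self]; ring
  have fy2 : ff d ((x2 - d) - x1) = 0 := by
    rw [ff_sub, ff_sub, ff_self, hlev]; ring
  -- step 1 : x1 - d = x2
  have e1 : x1 - d = x2 := by
    by_contra hne1
    exact no_three hp hd hne (Ne.symm hy1) (fun h => hne1 h.symm) n1 n2 m1 f21 fy1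
  -- step 2 : x2 - d = x1
  have e2 : x2 - d = x1 := by
    by_contra hne2
    exact no_three hp hd hne (fun h => hne2 h.symm) (Ne.symm hy2) n1 n2 m2 f21 fy2
  -- then d + d = 0
  have hdd : (2:ℝ) • d = 0 := by
    have q1 : x1 - x2 = d := by rw [← e1]; abel
    have q2 : x2 - x1 = d := by rw [← e2]; abel
    have : d + d = 0 := by
      nth_rewrite 1 [← q1]
      rw [← q2]
      abel
    rw [two_smul]; exact this
  rcases smul_eq_zero.mp hdd with h | h
  · norm_num at h
  · exact hd h

lemma chord (hp : 1 < p) [Fact (1 ≤ ENNReal.ofReal p)] {d : Ell p} (hd : d ≠ 0)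
    {x1 x2 x3 : Ell p} (h12 : x1 ≠ x2) (h13 : x1 ≠ x3) (h23 : x2 ≠ x3)
    (n1 : ‖x1‖ = 1) (n2 : ‖x2‖ = 1) (n3 : ‖x3‖ = 1)
    (m1 : ‖x1 - d‖ = 1) (m2 : ‖x2 - d‖ = 1) (m3 : ‖x3 - d‖ = 1) : False := by
  rcases lt_trichotomy (ff d x1) (ff d x2) with a12 | a12 | a12
  · rcases lt_trichotomy (ff d x2) (ff d x3) with a23 | a23 | a23
    · exact chord_aux hp hd n1 n2 n3 m1 m2 m3 a12 a23
    · exact level_pair hp hd h23 n2 n3 m2 m3 a23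
    · rcases lt_trichotomy (ff d x1) (ff d x3) with a13 | a13 | a13
      · exact chord_aux hp hd n1 n3 n2 m1 m3 m2 a13 a23
      · exact level_pair hp hd h13 n1 n3 m1 m3 a13
      · exact chord_aux hp hd n3 n1 n2 m3 m1 m2 a13 a12
  · exact level_pair hp hd h12 n1 n2 m1 m2 a12
  · rcases lt_trichotomy (ff d x1) (ff d x3) with a13 | a13 | a13
    · exact chord_aux hp hd n2 n1 n3 m2 m1 m3 a12 a13
    · exact level_pair hp hd h13 n1 n3 m1 m3 a13
    · rcases lt_trichotomy (ff d x2) (ff d x3) with a23 | a23 | a23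
      · exact chord_aux hp hd n2 n3 n1 m2 m3 m1 a23 a13
      · exact level_pair hp hd h23 n2 n3 m2 m3 a23
      · exact chord_aux hp hd n3 n2 n1 m3 m2 m1 a23 a12

/-- The crossing points of the unit sphere and its translate by `w ≠ 0` are
exactly the two given ones. -/
lemma crossing_eq (hp : 1 < p) [Fact (1 ≤ ENNReal.ofReal p)] {w P Q : Ell p} (hw : w ≠ 0)
    (hPQ : P ≠ Q) (nP : ‖P‖ = 1) (mP : ‖P - w‖ = 1) (nQ : ‖Q‖ = 1) (mQ : ‖Q - w‖ = 1)
    {z : Ell p} (nz : ‖z‖ = 1) (mz : ‖z - w‖ = 1) : z = P ∨ z = Q := by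
  by_contra h
  push_neg at h
  exact chord hp hw h.1 h.2 hPQ nz nP nQ mz mP mQ
/-- basis vector `(1,0)`. -/
def ee0 (p : ℝ) : Ell p := (WithLp.equiv _ _).symm ![1, 0]
/-- basis vector `(0,1)`. -/
def ee1 (p : ℝ) : Ell p := (WithLp.equiv _ _).symm ![0, 1]

lemma ee0_apply0 : ee0 p 0 = 1 := rfl
lemma ee0_apply1 : ee0 p 1 = 0 := rfl
lemma ee1_apply0 : ee1 p 0 = 0 := rfl
lemma ee1_apply1 : ee1 p 1 = 1 := rfl

/-- The direction vector at angle `θ`. -/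
def Vv (p : ℝ) (θ : ℝ) : Ell p := Real.cos θ • ee0 p + Real.sin θ • ee1 p

lemma Vv_apply0 (θ : ℝ) : Vv p θ 0 = Real.cos θ := by
  simp [Vv, PiLp.add_apply, PiLp.smul_apply, ee0_apply0, ee1_apply0]
lemma Vv_apply1 (θ : ℝ) : Vv p θ 1 = Real.sin θ := by
  simp [Vv, PiLp.add_apply, PiLp.smul_apply, ee0_apply1, ee1_apply1]

lemma Vv_ne_zero (θ : ℝ) : Vv p θ ≠ 0 := by
  intro h
  have h0 : Real.cos θ = 0 := by
    have := congrArg (fun w : Ell p => w 0) h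
    simpa [Vv_apply0] using this
  have h1 : Real.sin θ = 0 := by
    have := congrArg (fun w : Ell p => w 1) h
    simpa [Vv_apply1] using this
  nlinarith [Real.sin_sq_add_cos_sq θ]

/-- The parametrization of the unit sphere of `ℓ_p²`. -/
def sph (p : ℝ) [Fact (1 ≤ ENNReal.ofReal p)] (θ : ℝ) : Ell p := ‖Vv p θ‖⁻¹ • Vv p θ

variable [Fact (1 ≤ ENNReal.ofReal p)]

lemma norm_Vv_pos (θ : ℝ) : 0 < ‖Vv p θ‖ := norm_pos_iff.mpr (Vv_ne_zero θ)

lemma norm_sph (θ : ℝ) : ‖sph p θ‖ = 1 := by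
  rw [sph, norm_smul, Real.norm_eq_abs, abs_of_pos (inv_pos.mpr (norm_Vv_pos θ)),
    inv_mul_cancel₀ (norm_Vv_pos θ).ne']

lemma continuous_sph : Continuous (sph p) := by
  have hV : Continuous (Vv p) :=
    (Real.continuous_cos.smul continuous_const).add (Real.continuous_sin.smul continuous_const)
  exact (hV.norm.inv₀ (fun θ => (norm_Vv_pos θ).ne')).smul hV

lemma sph_apply0 (θ : ℝ) : sph p θ 0 = ‖Vv p θ‖⁻¹ * Real.cos θ := by
  simp [sph, PiLp.smul_apply, Vv_apply0, smul_eq_mul]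
lemma sph_apply1 (θ : ℝ) : sph p θ 1 = ‖Vv p θ‖⁻¹ * Real.sin θ := by
  simp [sph, PiLp.smul_apply, Vv_apply1, smul_eq_mul]

lemma sph_surj {w : Ell p} (hw : ‖w‖ = 1) : ∃ θ, sph p θ = w := by
  have hw0 : w ≠ 0 := by
    intro h; rw [h, norm_zero] at hw; norm_num at hw
  set z : ℂ := ⟨w 0, w 1⟩ with hz
  have hz0 : z ≠ 0 := by
    intro h
    apply hw0
    apply ell_ext
    · have := congrArg Complex.re h; simpa using this
    · have := congrArg Complex.im h; simpa using this
  set r : ℝ := ‖z‖ with hr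
  have hrpos : 0 < r := by
    rw [hr]; exact norm_pos_iff.mpr hz0
  refine ⟨Complex.arg z, ?_⟩
  have hcos : Real.cos (Complex.arg z) = w 0 / r := by
    rw [Complex.cos_arg hz0]
  have hsin : Real.sin (Complex.arg z) = w 1 / r := by
    rw [Complex.sin_arg]
  have hVeq : Vv p (Complex.arg z) = r⁻¹ • w := by
    apply ell_ext
    · rw [Vv_apply0, hcos, PiLp.smul_apply, smul_eq_mul]; ring
    · rw [Vv_apply1, hsin, PiLp.smul_apply, smul_eq_mul]; ring
  rw [sph, hVeq, norm_smul, Real.norm_eq_abs, abs_of_pos (inv_pos.mpr hrpos), hw, mul_one,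
    inv_inv, smul_smul, mul_inv_cancel₀ hrpos.ne', one_smul]

lemma sph_inj {α θ₁ θ₂ : ℝ} (h1 : θ₁ ∈ Ico α (α + 2*π)) (h2 : θ₂ ∈ Ico α (α + 2*π))
    (h : sph p θ₁ = sph p θ₂) : θ₁ = θ₂ := by
  set k : ℝ := ‖Vv p θ₁‖ * ‖Vv p θ₂‖⁻¹ with hk
  have hkpos : 0 < k := mul_pos (norm_Vv_pos θ₁) (inv_pos.mpr (norm_Vv_pos θ₂))
  have hcs : Real.cos θ₁ = k * Real.cos θ₂ ∧ Real.sin θ₁ = k * Real.sin θ₂ := by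
    have hVeq : Vv p θ₁ = k • Vv p θ₂ := by
      have := congrArg (fun w => ‖Vv p θ₁‖ • w) h
      simp only [sph, smul_smul, mul_inv_cancel₀ (norm_Vv_pos θ₁).ne', one_smul] at this
      rw [hk]
      exact this
    constructor
    · have := congrArg (fun w : Ell p => w 0) hVeq
      simpa [Vv_apply0, PiLp.smul_apply, smul_eq_mul] using this
    · have := congrArg (fun w : Ell p => w 1) hVeq
      simpa [Vv_apply1, PiLp.smul_apply, smul_eq_mul] using this
  have hk1 : k = 1 := by
    have h1' := Real.sin_sq_add_cos_sq θ₁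
    have h2' := Real.sin_sq_add_cos_sq θ₂
    rw [hcs.1, hcs.2] at h1'
    have : k^2 = 1 := by nlinarith
    nlinarith
  rw [hk1, one_mul, one_mul] at hcs
  have hexp : Complex.exp (θ₁ * Complex.I) = Complex.exp (θ₂ * Complex.I) := by
    rw [Complex.exp_mul_I, Complex.exp_mul_I]
    rw [← Complex.ofReal_cos, ← Complex.ofReal_sin, ← Complex.ofReal_cos, ← Complex.ofReal_sin,
      hcs.1, hcs.2]
  obtain ⟨n, hn⟩ := Complex.exp_eq_exp_iff_exists_int.mp hexp
  have hreal : θ₁ = θ₂ + n * (2 * π) := by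
    have : (θ₁ : ℂ) = θ₂ + n * (2 * π) := by
      have hI : ((θ₁ : ℂ)) * Complex.I = ((θ₂ : ℂ) + n * (2*π)) * Complex.I := by
        rw [hn]; ring
      exact mul_right_cancel₀ Complex.I_ne_zero hI
    exact_mod_cast this
  have hpi := Real.pi_pos
  rcases h1 with ⟨ha1, hb1⟩
  rcases h2 with ⟨ha2, hb2⟩
  have hn0 : n = 0 := by
    by_contra hn0
    rcases Int.lt_or_lt_of_ne hn0 with hneg | hpos
    · have : (n:ℝ) ≤ -1 := by exact_mod_cast Int.le_sub_one_of_lt hneg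
      nlinarith
    · have : (1:ℝ) ≤ (n:ℝ) := by exact_mod_cast hpos
      nlinarith
  rw [hn0] at hreal
  simpa using hreal

lemma sph_period (θ : ℝ) (n : ℤ) : sph p (θ + n * (2*π)) = sph p θ := by
  have hV : Vv p (θ + n * (2*π)) = Vv p θ := by
    apply ell_ext
    · rw [Vv_apply0, Vv_apply0, Real.cos_add_int_mul_two_pi]
    · rw [Vv_apply1, Vv_apply1, Real.sin_add_int_mul_two_pi]
  rw [sph, sph, hV]

lemma exists_angle_in (α : ℝ) {w : Ell p} (hw : ‖w‖ = 1) :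
    ∃ θ ∈ Ico α (α + 2*π), sph p θ = w := by
  obtain ⟨θ₀, hθ₀⟩ := sph_surj hw
  have hpi : 0 < 2*π := by positivity
  refine ⟨toIcoMod hpi α θ₀, ?_, ?_⟩
  · have := toIcoMod_mem_Ico hpi α θ₀
    simpa using this
  · rw [toIcoMod, ← hθ₀]
    have : θ₀ - toIcoDiv hpi α θ₀ • (2*π) = θ₀ + ((-(toIcoDiv hpi α θ₀) : ℤ) : ℝ) * (2*π) := by
      rw [zsmul_eq_mul]; push_cast; ring
    rw [this, sph_period]
lemma sign_const {w P Q : Ell p}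
    (hcross : ∀ y : Ell p, ‖y‖ = 1 → ‖y - w‖ = 1 → y = P ∨ y = Q)
    {s t : ℝ} (havoid : ∀ θ ∈ uIcc s t, sph p θ ≠ P ∧ sph p θ ≠ Q)
    (hs : ‖sph p s - w‖ < 1) (ht : 1 < ‖sph p t - w‖) : False := by
  have hcont : Continuous fun θ => ‖sph p θ - w‖ :=
    (continuous_sph.sub continuous_const).norm
  have hIcc : (1:ℝ) ∈ uIcc ‖sph p s - w‖ ‖sph p t - w‖ :=
    mem_uIcc.mpr (Or.inl ⟨hs.le, ht.le⟩)
  obtain ⟨θ, hθmem, hθ⟩ := intermediate_value_uIcc (hcont.continuousOn) hIcc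
  rcases hcross (sph p θ) (norm_sph θ) hθ with h | h
  · exact (havoid θ hθmem).1 h
  · exact (havoid θ hθmem).2 h

lemma sign_const_Ioo {w P Q : Ell p}
    (hcross : ∀ y : Ell p, ‖y‖ = 1 → ‖y - w‖ = 1 → y = P ∨ y = Q)
    {lo hi s t : ℝ}
    (hwin : ∀ θ, lo < θ → θ < hi → sph p θ ≠ P ∧ sph p θ ≠ Q)
    (hs_lo : lo < s) (hs_hi : s < hi) (ht_lo : lo < t) (ht_hi : t < hi)
    (hs : ‖sph p s - w‖ < 1) (ht : 1 < ‖sph p t - w‖) : False := by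
  refine sign_const hcross (fun θ hθ => ?_) hs ht
  rcases mem_uIcc.mp hθ with ⟨h1, h2⟩ | ⟨h1, h2⟩ <;>
    exact hwin θ (by linarith) (by linarith)

lemma core (hp : 1 < p) {a b c z : Ell p}
    (na : ‖a‖ = 1) (nb : ‖b‖ = 1) (nc : ‖c‖ = 1) (nz : ‖z‖ = 1)
    (h1 : ‖b - (a + c)‖ ≤ 1) (h2 : ‖z - (a + b)‖ ≤ 1)
    (hba : b ≠ a) (hbc : b ≠ c) (hca : c ≠ a) (hcna : c ≠ -a) (hbna : b ≠ -a) :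
    ‖z - (a + c)‖ ≤ 1 := by
  by_contra hz
  push_neg at hz
  have hu : a + b ≠ 0 := by
    intro h
    exact hbna (by rw [eq_neg_iff_add_eq_zero, add_comm]; exact h)
  have hv : a + c ≠ 0 := by
    intro h
    exact hcna (by rw [eq_neg_iff_add_eq_zero, add_comm]; exact h)
  have maU : ‖a - (a + b)‖ = 1 := by rw [show a - (a+b) = -b by abel, norm_neg, nb]
  have mbU : ‖b - (a + b)‖ = 1 := by rw [show b - (a+b) = -a by abel, norm_neg, na]
  have maV : ‖a - (a + c)‖ = 1 := by rw [show a - (a+c) = -c by abel, norm_neg, nc]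
  have mcV : ‖c - (a + c)‖ = 1 := by rw [show c - (a+c) = -a by abel, norm_neg, na]
  have crossU : ∀ y : Ell p, ‖y‖ = 1 → ‖y - (a+b)‖ = 1 → y = a ∨ y = b :=
    fun y hy hy' => crossing_eq hp hu (Ne.symm hba) na maU nb mbU hy hy'
  have crossV : ∀ y : Ell p, ‖y‖ = 1 → ‖y - (a+c)‖ = 1 → y = a ∨ y = c :=
    fun y hy hy' => crossing_eq hp hv (Ne.symm hca) na maV nc mcV hy hy'
  -- b is strictly inside B + (a+c)
  have hbV : ‖b - (a + c)‖ < 1 := by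
    rcases lt_or_eq_of_le h1 with h | h
    · exact h
    · rcases crossV b nb h with rfl | rfl
      · exact absurd rfl hba
      · exact absurd rfl hbc
  -- z is strictly inside B + (a+b)
  have hzU : ‖z - (a + b)‖ < 1 := by
    rcases lt_or_eq_of_le h2 with h | h
    · exact h
    · rcases crossU z nz h with rfl | rfl
      · rw [maV] at hz; linarith
      · linarith
  -- z is distinct from a, b, c
  have hza : z ≠ a := by rintro rfl; rw [maV] at hz; linarith
  have hzb : z ≠ b := by rintro rfl; linarith
  have hzc : z ≠ c := by rintro rfl; rw [mcV] at hz; linarith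
  -- c is strictly outside B + (a+b)
  have hcU : 1 < ‖c - (a + b)‖ := by
    have T1 : ¬ ‖c - (a+b)‖ < 1 := by
      intro hcu
      have hsum : (2:ℝ) • a = ((a+b) - c) + ((a+c) - b) := by module
      have h2a : ‖(2:ℝ) • a‖ = 2 := by
        rw [norm_smul, Real.norm_eq_abs, na]; norm_num
      have htri : ‖(2:ℝ) • a‖ ≤ ‖(a+b) - c‖ + ‖(a+c) - b‖ := by
        rw [hsum]; exact norm_add_le _ _
      rw [norm_sub_rev] at htri
      nth_rewrite 2 [norm_sub_rev] at htri
      linarith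
    have hne : ‖c - (a+b)‖ ≠ 1 := by
      intro h
      rcases crossU c nc h with rfl | rfl
      · exact absurd rfl hca
      · exact absurd rfl (Ne.symm hbc)
    rcases lt_trichotomy ‖c - (a+b)‖ 1 with h | h | h
    · exact absurd h T1
    · exact absurd h hne
    · exact h
  -- angles
  obtain ⟨θa, hsa⟩ := sph_surj na
  obtain ⟨θb, hbmem, hsb⟩ := exists_angle_in θa nb
  obtain ⟨θc, hcmem, hsc⟩ := exists_angle_in θa nc
  obtain ⟨θz, hzmem, hsz⟩ := exists_angle_in θa nz
  have hpi := Real.pi_pos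
  have hamem : θa ∈ Ico θa (θa + 2*π) := ⟨le_refl _, by linarith⟩
  have hblo : θa < θb :=
    lt_of_le_of_ne hbmem.1 (fun h => hba (by rw [← hsb, ← h, hsa]))
  have hclo : θa < θc :=
    lt_of_le_of_ne hcmem.1 (fun h => hca (by rw [← hsc, ← h, hsa]))
  have hzlo : θa < θz :=
    lt_of_le_of_ne hzmem.1 (fun h => hza (by rw [← hsz, ← h, hsa]))
  have hbhi : θb < θa + 2*π := hbmem.2
  have hchi : θc < θa + 2*π := hcmem.2
  have hzhi : θz < θa + 2*π := hzmem.2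
  have hθbc : θb ≠ θc := fun h => hbc (by rw [← hsb, h, hsc])
  have hθbz : θb ≠ θz := fun h => hzb (by rw [← hsz, ← h, hsb])
  have hθcz : θc ≠ θz := fun h => hzc (by rw [← hsz, ← h, hsc])
  -- helper to identify angles
  have inj : ∀ {θ θ' : ℝ}, θ ∈ Ico θa (θa + 2*π) → θ' ∈ Ico θa (θa + 2*π) →
      sph p θ = sph p θ' → θ = θ' := fun h1 h2 h => sph_inj h1 h2 h
  -- sign data
  have sb : ‖sph p θb - (a+c)‖ < 1 := by rw [hsb]; exact hbV
  have sz : 1 < ‖sph p θz - (a+c)‖ := by rw [hsz]; exact hz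
  have sz' : ‖sph p θz - (a+b)‖ < 1 := by rw [hsz]; exact hzU
  have sc : 1 < ‖sph p θc - (a+b)‖ := by rw [hsc]; exact hcU
  -- case analysis on the cyclic order
  rcases lt_trichotomy θb θc with h1' | h1' | h1'
  · rcases lt_trichotomy θc θz with h2' | h2' | h2'
    · -- θb < θc < θz : pair {a,b}, points c z in (θb, θa+2π)
      refine sign_const_Ioo crossU (lo := θb) (hi := θa + 2*π) ?_
        (by linarith) hzhi h1' hchi sz' sc
      intro θ hθ1 hθ2
      constructor
      · intro h
        have := inj ⟨by linarith, by linarith⟩ hamem (h.trans hsa.symm)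
        linarith
      · intro h
        have := inj ⟨by linarith, by linarith⟩ hbmem (h.trans hsb.symm)
        linarith
    · exact hθcz h2'
    · rcases lt_trichotomy θb θz with h3' | h3' | h3'
      · -- θb < θz < θc : pair {a,c}, points b z in (θa, θc)
        refine sign_const_Ioo crossV (lo := θa) (hi := θc) ?_ hblo h1' hzlo h2' sb sz
        intro θ hθ1 hθ2
        constructor
        · intro h
          have := inj ⟨by linarith, by linarith⟩ hamem (h.trans hsa.symm)
          linarith
        · intro h
          have := inj ⟨by linarith, by linarith⟩ hcmem (h.trans hsc.symm)
          linarith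
      · exact hθbz h3'
      · -- θz < θb < θc : pair {a,c}, points b z in (θa, θc)
        refine sign_const_Ioo crossV (lo := θa) (hi := θc) ?_ hblo h1' hzlo (by linarith) sb sz
        intro θ hθ1 hθ2
        constructor
        · intro h
          have := inj ⟨by linarith, by linarith⟩ hamem (h.trans hsa.symm)
          linarith
        · intro h
          have := inj ⟨by linarith, by linarith⟩ hcmem (h.trans hsc.symm)
          linarith
  · exact hθbc h1'
  · rcases lt_trichotomy θb θz with h2' | h2' | h2'
    · -- θc < θb < θz : pair {a,c}, points b z in (θc, θa+2π)
      refine sign_const_Ioo crossV (lo := θc) (hi := θa + 2*π) ?_ h1' hbhi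
        (by linarith) hzhi sb sz
      intro θ hθ1 hθ2
      constructor
      · intro h
        have := inj ⟨by linarith, by linarith⟩ hamem (h.trans hsa.symm)
        linarith
      · intro h
        have := inj ⟨by linarith, by linarith⟩ hcmem (h.trans hsc.symm)
        linarith
    · exact hθbz h2'
    · rcases lt_trichotomy θz θc with h3' | h3' | h3'
      · -- θz < θc < θb : pair {a,b}, points c z in (θa, θb)
        refine sign_const_Ioo crossU (lo := θa) (hi := θb) ?_ hzlo h2' hclo h1' sz' sc
        intro θ hθ1 hθ2
        constructor
        · intro h
          have := inj ⟨by linarith, by linarith⟩ hamem (h.trans hsa.symm)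
          linarith
        · intro h
          have := inj ⟨by linarith, by linarith⟩ hbmem (h.trans hsb.symm)
          linarith
      · exact hθcz (h3'.symm)
      · -- θc < θz < θb : pair {a,c}, points b z in (θc, θa+2π)
        refine sign_const_Ioo crossV (lo := θc) (hi := θa + 2*π) ?_ h1' hbhi h3' hzhi sb sz
        intro θ hθ1 hθ2
        constructor
        · intro h
          have := inj ⟨by linarith, by linarith⟩ hamem (h.trans hsa.symm)
          linarith
        · intro h
          have := inj ⟨by linarith, by linarith⟩ hcmem (h.trans hsc.symm)
          linarith
end

lemma mem_Theta {E : Type*} [NormedAddCommGroup E] {a b x : E} :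
    x ∈ Theta a b ↔ ‖x‖ ≤ 1 ∧ ‖x - (a + b)‖ ≤ 1 := by
  simp only [Theta, Set.mem_inter_iff, Metric.mem_closedBall, dist_zero_right, Set.mem_image]
  constructor
  · rintro ⟨h1, y, hy, rfl⟩
    exact ⟨h1, by simpa using hy⟩
  · rintro ⟨h1, h2⟩
    exact ⟨h1, x - (a + b), by simpa using h2, by abel⟩

/-- In a strictly convex space, a unit vector `w` with `‖2 • a + w‖ ≤ 1` (for unit `a`)
must be `-a`. -/
lemma neg_of_close {E : Type*} [NormedAddCommGroup E] [NormedSpace ℝ E]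
    [StrictConvexSpace ℝ E] {a w : E} (ha : ‖a‖ = 1) (hw : ‖w‖ = 1)
    (h : ‖(2:ℝ) • a + w‖ ≤ 1) : w = -a := by
  have h2a : ‖(2:ℝ) • a‖ = 2 := by rw [norm_smul, Real.norm_eq_abs, ha]; norm_num
  have htri : ‖(2:ℝ) • a‖ ≤ ‖(2:ℝ) • a + w‖ + ‖w‖ := by
    have : (2:ℝ) • a = ((2:ℝ) • a + w) + (-w) := by abel
    calc ‖(2:ℝ) • a‖ = ‖((2:ℝ) • a + w) + (-w)‖ := by rw [← this]
      _ ≤ ‖(2:ℝ) • a + w‖ + ‖-w‖ := norm_add_le _ _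
      _ = ‖(2:ℝ) • a + w‖ + ‖w‖ := by rw [norm_neg]
  have hn1 : ‖(2:ℝ) • a + w‖ = 1 := by
    rw [h2a, hw] at htri; linarith
  have heq : (2:ℝ) • a + w = -w := by
    apply eq_of_norm_eq_of_norm_add_eq (by rw [hn1, norm_neg, hw])
    rw [show (2:ℝ) • a + w + -w = (2:ℝ) • a by abel, h2a, hn1, norm_neg, hw]
    norm_num
  have hfin : (2:ℝ) • w = (2:ℝ) • (-a) := by
    have h4 : (2:ℝ) • a + w + w = 0 := by rw [heq]; abel
    have h5 : (2:ℝ) • a + (2:ℝ) • w = 0 := by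
      rw [two_smul ℝ w, ← add_assoc]; exact h4
    have h6 : (2:ℝ) • (-a) = -((2:ℝ) • a) := by module
    rw [h6, eq_neg_iff_add_eq_zero, add_comm]
    exact h5
  exact smul_right_injective E (by norm_num : (2:ℝ) ≠ 0) hfin

/-- If `a`, `b`, `c` are pairwise distinct points of the unit sphere of `ℓ_p²` and
`b ∈ Θ_{a,c}`, then `Θ_{a,b} ⊆ Θ_{a,c}`. -/
theorem Theta_subset_Theta (p : ℝ) (hp : 1 < p) [Fact (1 ≤ ENNReal.ofReal p)]
    (a b c : PiLp (ENNReal.ofReal p) (fun _ : Fin 2 => ℝ))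
    (hanorm : ‖a‖ = 1) (hbnorm : ‖b‖ = 1) (hcnorm : ‖c‖ = 1)
    (hab : a ≠ b) (hac : a ≠ c) (hbc : b ≠ c)
    (hb : b ∈ Theta a c) :
    Theta a b ⊆ Theta a c := by
  haveI := ell_strictConvex hp
  rw [mem_Theta] at hb
  obtain ⟨-, hbv⟩ := hb
  intro x hx
  rw [mem_Theta] at hx
  obtain ⟨hx1, hxu⟩ := hx
  rw [mem_Theta]
  refine ⟨hx1, ?_⟩
  -- trivial case : c = -a
  rcases eq_or_ne c (-a) with rfl | hcna
  · rw [show a + -a = (0 : Ell p) by abel, sub_zero]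
    exact hx1
  -- b ≠ -a
  have hbna : b ≠ -a := by
    intro hbeq
    apply hcna
    have : ‖(2:ℝ) • a + c‖ ≤ 1 := by
      have : (2:ℝ) • a + c = -(b - (a + c)) := by rw [hbeq]; module
      rw [this, norm_neg]
      exact hbv
    exact neg_of_close hanorm hcnorm this
  -- b ≠ -c
  have hbnc : b ≠ -c := by
    intro hbeq
    apply hcna
    have h' : ‖(2:ℝ) • c + a‖ ≤ 1 := by
      have : (2:ℝ) • c + a = -(b - (a + c)) := by rw [hbeq]; module
      rw [this, norm_neg]
      exact hbv
    have hthis := neg_of_close hcnorm hanorm h'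
    rw [hthis, neg_neg]
  -- main ray argument
  by_contra hxv
  push_neg at hxv
  set D := x - (a + c) with hD
  have hDnorm : 1 < ‖D‖ := hxv
  have hD0 : (0:ℝ) < ‖D‖ := by linarith
  have hDne : D ≠ 0 := by
    intro h; rw [h, norm_zero] at hDnorm; linarith
  set T := {t : ℝ | 0 ≤ t ∧ ‖x + t • D‖ ≤ 1 ∧ ‖x + t • D - (a + b)‖ ≤ 1} with hT
  have hT0 : (0:ℝ) ∈ T := ⟨le_refl _, by simpa using hx1, by simpa using hxu⟩
  have hTbdd : BddAbove T := by
    refine ⟨2, fun t ht => ?_⟩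
    obtain ⟨ht1, ht2, _⟩ := ht
    have e : t • D = (x + t • D) - x := by abel
    have h2 : ‖t • D‖ ≤ 2 := by
      rw [e]
      exact le_trans (norm_sub_le _ _) (by linarith)
    rw [norm_smul, Real.norm_eq_abs, abs_of_nonneg ht1] at h2
    nlinarith
  have hTclosed : IsClosed T := by
    have hc1 : Continuous fun t : ℝ => ‖x + t • D‖ :=
      (continuous_const.add (continuous_id.smul continuous_const)).norm
    have hc2 : Continuous fun t : ℝ => ‖x + t • D - (a + b)‖ :=
      ((continuous_const.add (continuous_id.smul continuous_const)).sub continuous_const).norm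
    exact (isClosed_le continuous_const continuous_id).inter
      ((isClosed_le hc1 continuous_const).inter (isClosed_le hc2 continuous_const))
  set t0 := sSup T with ht0def
  have ht0 : t0 ∈ T := hTclosed.csSup_mem ⟨0, hT0⟩ hTbdd
  set y := x + t0 • D with hy
  have hyv : 1 < ‖y - (a + c)‖ := by
    have e : y - (a + c) = (1 + t0) • D := by rw [hy, hD]; module
    rw [e, norm_smul, Real.norm_eq_abs, abs_of_pos (by linarith [ht0.1] : (0:ℝ) < 1 + t0)]
    nlinarith [ht0.1]
  have hbound : ‖y‖ = 1 ∨ ‖y - (a + b)‖ = 1 := by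
    by_contra hcon
    push_neg at hcon
    have hlt1 : ‖y‖ < 1 := lt_of_le_of_ne ht0.2.1 hcon.1
    have hlt2 : ‖y - (a + b)‖ < 1 := lt_of_le_of_ne ht0.2.2 hcon.2
    set ε := min ((1 - ‖y‖)/‖D‖) ((1 - ‖y - (a + b)‖)/‖D‖) with hε
    have hεpos : 0 < ε :=
      lt_min (div_pos (by linarith) hD0) (div_pos (by linarith) hD0)
    have hmem : t0 + ε ∈ T := by
      refine ⟨by linarith [ht0.1], ?_, ?_⟩
      · have e : x + (t0 + ε) • D = y + ε • D := by rw [hy]; module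
        rw [e]
        have h1' : ε ≤ (1 - ‖y‖)/‖D‖ := min_le_left _ _
        calc ‖y + ε • D‖ ≤ ‖y‖ + ‖ε • D‖ := norm_add_le _ _
          _ = ‖y‖ + ε * ‖D‖ := by rw [norm_smul, Real.norm_eq_abs, abs_of_pos hεpos]
          _ ≤ 1 := by
              have : ε * ‖D‖ ≤ 1 - ‖y‖ := by
                rw [← div_mul_cancel₀ (1 - ‖y‖) hD0.ne']
                exact mul_le_mul_of_nonneg_right h1' hD0.le
              linarith
      · have e : x + (t0 + ε) • D - (a + b) = (y - (a + b)) + ε • D := by rw [hy]; module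
        rw [e]
        have h1' : ε ≤ (1 - ‖y - (a + b)‖)/‖D‖ := min_le_right _ _
        calc ‖(y - (a+b)) + ε • D‖ ≤ ‖y - (a+b)‖ + ‖ε • D‖ := norm_add_le _ _
          _ = ‖y - (a+b)‖ + ε * ‖D‖ := by rw [norm_smul, Real.norm_eq_abs, abs_of_pos hεpos]
          _ ≤ 1 := by
              have : ε * ‖D‖ ≤ 1 - ‖y - (a + b)‖ := by
                rw [← div_mul_cancel₀ (1 - ‖y - (a + b)‖) hD0.ne']
                exact mul_le_mul_of_nonneg_right h1' hD0.le
              linarith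
    have := le_csSup hTbdd hmem
    linarith
  rcases hbound with hy1 | hy1
  · have := core hp hanorm hbnorm hcnorm hy1 hbv ht0.2.2
      (Ne.symm hab) hbc (Ne.symm hac) hcna hbna
    linarith
  · set z' := (a + b) - y with hz'
    have nz' : ‖z'‖ = 1 := by rw [hz', norm_sub_rev]; exact hy1
    have h2' : ‖z' - (b + a)‖ ≤ 1 := by
      have e : z' - (b + a) = -y := by rw [hz']; module
      rw [e, norm_neg]
      exact ht0.2.1
    have h1' : ‖a - (b + -c)‖ ≤ 1 := by
      have e : a - (b + -c) = -(b - (a + c)) := by module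
      rw [e, norm_neg]
      exact hbv
    have hcore := core hp hbnorm hanorm (by rw [norm_neg]; exact hcnorm) nz' h1' h2'
      hab (fun h => hcna (by rw [h, neg_neg])) (fun h => hbnc h.symm)
      (fun h => hbc ((neg_injective h).symm)) (fun h => hbna (by rw [h, neg_neg]))
    have e : z' - (b + -c) = -(y - (a + c)) := by rw [hz']; module
    rw [e, norm_neg] at hcore
    linarith
end

section
/- Let X and Y be nontrivial real Banach spaces, let H be a closed linear subspace of L(X,Y) containing all finite rank operators, and let δ > 0. If H (with the induced operator norm) is δ-average rough and the dual space X* is non-rough, then Y is δ-average rough. -/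
open scoped BigOperators

lemma nonrough_extract {Z : Type*} [NormedAddCommGroup Z] (h : NonRough Z) (r : ℝ) (hr : 0 < r) :
    ∃ f : Z, ‖f‖ = 1 ∧ ∃ η₀ > (0:ℝ), ∀ g : Z, ‖g‖ < η₀ → ‖f + g‖ + ‖f - g‖ ≤ 2 + r * ‖g‖ := by
  have h1 : ¬ IsRough Z r := fun hh => h ⟨r, hr, hh⟩
  unfold IsRough at h1
  push_neg at h1
  obtain ⟨f, hf, ε, hε, η₀, hη₀, hg⟩ := h1
  refine ⟨f, hf, η₀, hη₀, fun g hgη => ?_⟩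
  rcases eq_or_ne g 0 with rfl | hg0
  · simp only [norm_zero, add_zero, sub_zero, hf, mul_zero]; norm_num
  · have h2 := hg g (norm_pos_iff.mpr hg0) hgη
    have h3 : (r - ε) * ‖g‖ ≤ r * ‖g‖ := by nlinarith [norm_nonneg g]
    linarith

lemma slice_diam {X : Type*} [NormedAddCommGroup X] [NormedSpace ℝ X]
    (f : X →L[ℝ] ℝ) (r η₀ β : ℝ) (hr : 0 ≤ r) (hη₀ : 0 < η₀) (hβ : 0 ≤ β)
    (hsm : ∀ g : X →L[ℝ] ℝ, ‖g‖ < η₀ → ‖f + g‖ + ‖f - g‖ ≤ 2 + r * ‖g‖)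
    (u v : X) (hu : ‖u‖ ≤ 1) (hv : ‖v‖ ≤ 1) (hfu : 1 - β ≤ f u) (hfv : 1 - β ≤ f v) :
    ‖u - v‖ ≤ r + 4 * β / η₀ := by
  rcases eq_or_ne u v with rfl | huv
  · simp; positivity
  obtain ⟨g₀, hg₀norm, hg₀⟩ := exists_dual_vector ℝ (u - v) (norm_ne_zero_iff.mpr (sub_ne_zero.mpr huv))
  set g : X →L[ℝ] ℝ := (η₀ / 2) • g₀ with hgdef
  have hgnorm : ‖g‖ = η₀ / 2 := by
    have h := norm_smul (η₀ / 2) g₀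
    rw [hgdef]
    rw [h, hg₀norm, Real.norm_eq_abs, abs_of_pos (by positivity), mul_one]
  have hsm' := hsm g (by rw [hgnorm]; linarith)
  have hguv : g u - g v = (η₀ / 2) * ‖u - v‖ := by
    have : g (u - v) = (η₀ / 2) * ‖u - v‖ := by
      rw [hgdef]; simp only [ContinuousLinearMap.smul_apply, smul_eq_mul]
      rw [hg₀]
      norm_num
    rw [← this, map_sub]
  have h1 : (f + g) u ≤ ‖f + g‖ := by
    have h := (f + g).le_opNorm u
    have : (f + g) u ≤ ‖(f + g) u‖ := le_abs_self _
    nlinarith [norm_nonneg (f + g)]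
  have h2 : (f - g) v ≤ ‖f - g‖ := by
    have h := (f - g).le_opNorm v
    have : (f - g) v ≤ ‖(f - g) v‖ := le_abs_self _
    nlinarith [norm_nonneg (f - g)]
  have h3 : (f + g) u = f u + g u := rfl
  have h4 : (f - g) v = f v - g v := rfl
  have key : (η₀ / 2) * ‖u - v‖ ≤ r * (η₀ / 2) + 2 * β := by
    rw [← hguv]
    rw [h3] at h1; rw [h4] at h2
    rw [hgnorm] at hsm'
    linarith
  have hmul : ‖u - v‖ * (η₀ / 2) ≤ (r + 4 * β / η₀) * (η₀ / 2) := by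
    have hx : (r + 4 * β / η₀) * (η₀ / 2) = r * (η₀ / 2) + 2 * β := by
      field_simp; ring
    rw [hx]; linarith
  exact le_of_mul_le_mul_right hmul (by positivity)

lemma key_point {X Y : Type*} [NormedAddCommGroup X] [NormedSpace ℝ X]
    [NormedAddCommGroup Y] [NormedSpace ℝ Y]
    (f : X →L[ℝ] ℝ) (hf : ‖f‖ = 1) (y₀ : Y) (hy₀ : ‖y₀‖ = 1)
    (S : X →L[ℝ] Y) (α : ℝ) (hα : 0 < α) :
    ∃ x : X, ‖x‖ ≤ 1 ∧ 0 ≤ f x ∧ f x ≤ 1 ∧ 1 - (2 * ‖S‖ + α) ≤ f x ∧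
      ‖f.smulRight y₀ + S‖ ≤ ‖f x • y₀ + S x‖ + α := by
  set A := f.smulRight y₀ + S with hA
  have hlt : ‖A‖ - α < ‖A‖ := by linarith
  obtain ⟨x'', hx1, hx2⟩ := A.exists_lt_apply_of_lt_opNorm hlt
  obtain ⟨x, hxle, hfx0, hAx⟩ : ∃ x : X, ‖x‖ ≤ 1 ∧ 0 ≤ f x ∧ ‖A‖ - α < ‖A x‖ := by
    rcases le_or_gt 0 (f x'') with hpos | hneg
    · exact ⟨x'', hx1.le, hpos, hx2⟩
    · refine ⟨-x'', by simpa using hx1.le, by simp; linarith, ?_⟩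
      rw [map_neg, norm_neg]; exact hx2
  have hAxeq : A x = f x • y₀ + S x := by
    simp [hA, ContinuousLinearMap.add_apply, ContinuousLinearMap.smulRight_apply]
  have hfx1 : f x ≤ 1 := by
    have h := f.le_opNorm x
    have h2 : f x ≤ ‖f x‖ := le_abs_self _
    nlinarith [norm_nonneg (f x)]
  have hTnorm : ‖f.smulRight y₀‖ = 1 := by
    rw [ContinuousLinearMap.norm_smulRight_apply, hf, hy₀, mul_one]
  have hAlow : 1 - ‖S‖ ≤ ‖A‖ := by
    have : ‖f.smulRight y₀‖ = ‖A - S‖ := by rw [hA, add_sub_cancel_right]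
    rw [hTnorm] at this
    have h2 := norm_sub_le A S
    linarith
  have hSx : ‖S x‖ ≤ ‖S‖ := by
    have := S.le_opNorm x
    nlinarith [norm_nonneg S]
  have hup : ‖A x‖ ≤ f x + ‖S x‖ := by
    rw [hAxeq]
    have h := norm_add_le (f x • y₀) (S x)
    rw [norm_smul, Real.norm_eq_abs, abs_of_nonneg hfx0, hy₀, mul_one] at h
    exact h
  refine ⟨x, hxle, hfx0, hfx1, by linarith, by rw [← hAxeq]; linarith⟩


lemma decomp_bound {X Y : Type*} [NormedAddCommGroup X] [NormedSpace ℝ X]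
    [NormedAddCommGroup Y] [NormedSpace ℝ Y]
    (f : X →L[ℝ] ℝ) (S : X →L[ℝ] Y) (y₀ : Y) (q x₀ : X) (β D : ℝ)
    (hq : ‖q‖ ≤ 1) (hx₀ : ‖x₀‖ ≤ 1) (h0 : 0 ≤ f q) (h1 : f q ≤ 1) (hfβ : 1 - β ≤ f q)
    (hD : ‖q - x₀‖ ≤ D) :
    ‖f q • y₀ + S q‖ ≤ ‖y₀ + S x₀‖ + ‖S‖ * D + β * ‖S‖ := by
  have hdec : f q • y₀ + S q
      = f q • (y₀ + S x₀) + S (q - x₀) + (1 - f q) • (S x₀) := by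
    rw [map_sub]; module
  rw [hdec]
  have t1 : ‖f q • (y₀ + S x₀)‖ ≤ ‖y₀ + S x₀‖ := by
    rw [norm_smul, Real.norm_eq_abs, abs_of_nonneg h0]
    nlinarith [norm_nonneg (y₀ + S x₀)]
  have t2 : ‖S (q - x₀)‖ ≤ ‖S‖ * D := by
    have := S.le_opNorm (q - x₀)
    nlinarith [norm_nonneg S]
  have t3 : ‖(1 - f q) • (S x₀)‖ ≤ β * ‖S‖ := by
    rw [norm_smul, Real.norm_eq_abs, abs_of_nonneg (by linarith)]
    have hSx : ‖S x₀‖ ≤ ‖S‖ := by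
      have := S.le_opNorm x₀
      nlinarith [norm_nonneg S]
    nlinarith [norm_nonneg (S x₀)]
  calc ‖f q • (y₀ + S x₀) + S (q - x₀) + (1 - f q) • (S x₀)‖
      ≤ ‖f q • (y₀ + S x₀) + S (q - x₀)‖ + ‖(1 - f q) • (S x₀)‖ := norm_add_le _ _
    _ ≤ ‖f q • (y₀ + S x₀)‖ + ‖S (q - x₀)‖ + ‖(1 - f q) • (S x₀)‖ := by
        have := norm_add_le (f q • (y₀ + S x₀)) (S (q - x₀)); linarith
    _ ≤ _ := by linarith

lemma decomp_bound_neg {X Y : Type*} [NormedAddCommGroup X] [NormedSpace ℝ X]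
    [NormedAddCommGroup Y] [NormedSpace ℝ Y]
    (f : X →L[ℝ] ℝ) (S : X →L[ℝ] Y) (y₀ : Y) (q x₀ : X) (β D : ℝ)
    (hq : ‖q‖ ≤ 1) (hx₀ : ‖x₀‖ ≤ 1) (h0 : 0 ≤ f q) (h1 : f q ≤ 1) (hfβ : 1 - β ≤ f q)
    (hD : ‖q - x₀‖ ≤ D) :
    ‖f q • y₀ - S q‖ ≤ ‖y₀ - S x₀‖ + ‖S‖ * D + β * ‖S‖ := by
  have h := decomp_bound f (-S) y₀ q x₀ β D hq hx₀ h0 h1 hfβ hD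
  rw [ContinuousLinearMap.neg_apply, ContinuousLinearMap.neg_apply, norm_neg] at h
  rw [← sub_eq_add_neg, ← sub_eq_add_neg] at h
  exact h

set_option maxHeartbeats 2000000 in
theorem stmt8
    (X Y : Type*) [NormedAddCommGroup X] [NormedSpace ℝ X] [CompleteSpace X] [Nontrivial X]
    [NormedAddCommGroup Y] [NormedSpace ℝ Y] [CompleteSpace Y] [Nontrivial Y]
    (H : Submodule ℝ (X →L[ℝ] Y)) (hHclosed : IsClosed (H : Set (X →L[ℝ] Y)))
    (hHfin : ∀ T : X →L[ℝ] Y, FiniteDimensional ℝ (LinearMap.range (T : X →ₗ[ℝ] Y)) → T ∈ H)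
    (δ : ℝ) (hδ : 0 < δ)
    (hH : IsAverageRough H δ) (hX : NonRough (StrongDual ℝ X)) :
    IsAverageRough Y δ := by
  intro n hn y hy ε hε η hη
  have hn' : (0:ℝ) < n := by exact_mod_cast hn
  -- a lower bound on the average, valid for any w
  have havg : ∀ w : Y, (2:ℝ) ≤ (1 / (n : ℝ)) * ∑ i, (‖y i + w‖ + ‖y i - w‖) := by
    intro w
    have hterm : ∀ i, (2:ℝ) ≤ ‖y i + w‖ + ‖y i - w‖ := by
      intro i
      have he : (y i + w) + (y i - w) = (2:ℝ) • y i := by module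
      have h := norm_add_le (y i + w) (y i - w)
      rw [he, norm_smul, hy i] at h
      simpa using h
    have hsum : (n:ℝ) * 2 ≤ ∑ i, (‖y i + w‖ + ‖y i - w‖) := by
      calc (n:ℝ) * 2 = ∑ _i : Fin n, (2:ℝ) := by
            rw [Finset.sum_const, Finset.card_univ, Fintype.card_fin, nsmul_eq_mul]
        _ ≤ _ := Finset.sum_le_sum (fun i _ => hterm i)
    calc (2:ℝ) = (1/(n:ℝ)) * ((n:ℝ) * 2) := by field_simp
      _ ≤ _ := by
          apply mul_le_mul_of_nonneg_left hsum
          positivity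
  rcases le_or_gt δ ε with hcase | hcase
  · -- trivial case : δ ≤ ε
    obtain ⟨v, hv⟩ := exists_ne (0 : Y)
    have hv' : (0:ℝ) < ‖v‖ := norm_pos_iff.mpr hv
    have hnorm : ‖(η / (2 * ‖v‖)) • v‖ = η / 2 := by
      rw [norm_smul, Real.norm_eq_abs, abs_of_pos (by positivity)]
      field_simp
    refine ⟨(η / (2 * ‖v‖)) • v, ?_, ?_, ?_⟩
    · rw [hnorm]; positivity
    · rw [hnorm]; linarith
    · have h1 : (δ - ε) * ‖(η / (2 * ‖v‖)) • v‖ ≤ 0 := by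
        apply mul_nonpos_of_nonpos_of_nonneg (by linarith) (norm_nonneg _)
      have h2 := havg ((η / (2 * ‖v‖)) • v)
      linarith
  · -- main case : ε < δ
    set r : ℝ := ε / 8 with hrdef
    have hr : 0 < r := by positivity
    obtain ⟨f, hf, η₀, hη₀, hsm⟩ := nonrough_extract hX r hr
    set ρ : ℝ := ε / 16 with hρdef
    have hρ : 0 < ρ := by positivity
    set C : ℝ := 8 * (2 + ρ) / η₀ + 2 * (2 + ρ) with hCdef
    have hC : 0 < C := by positivity
    set η' : ℝ := min η ((ε / 8) / C) with hη'def
    have hη' : 0 < η' := lt_min hη (by positivity)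
    -- the rank one operators
    set T : Fin n → (X →L[ℝ] Y) := fun i => f.smulRight (y i) with hTdef
    have hTH : ∀ i, T i ∈ H := by
      intro i
      apply hHfin
      have hle : LinearMap.range ((T i : X →ₗ[ℝ] Y)) ≤ Submodule.span ℝ {y i} := by
        rintro z ⟨x, rfl⟩
        have : (T i : X →ₗ[ℝ] Y) x = f x • y i := rfl
        rw [this]
        exact Submodule.smul_mem _ _ (Submodule.mem_span_singleton_self _)
      exact Submodule.finiteDimensional_of_le hle
    set xH : Fin n → H := fun i => ⟨T i, hTH i⟩ with hxHdef
    have hTnorm : ∀ i, ‖T i‖ = 1 := by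
      intro i
      rw [hTdef]
      rw [ContinuousLinearMap.norm_smulRight_apply, hf, hy i, mul_one]
    have hxHnorm : ∀ i, ‖xH i‖ = 1 := fun i => hTnorm i
    obtain ⟨SH, hS0, hSη, hSineq⟩ := hH n hn xH hxHnorm (ε/2) (by positivity) η' hη'
    set S : X →L[ℝ] Y := (SH : X →L[ℝ] Y) with hSdef
    have hS0' : 0 < ‖S‖ := hS0
    have hSη' : ‖S‖ < η' := hSη
    set α : ℝ := ρ * ‖S‖ with hαdef
    have hα : 0 < α := by positivity
    set β : ℝ := 2 * ‖S‖ + α with hβdef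
    have hβ : 0 < β := by positivity
    set D : ℝ := r + 4 * β / η₀ with hDdef
    -- norming points
    have hkeyp : ∀ i, ∃ x : X, ‖x‖ ≤ 1 ∧ 0 ≤ f x ∧ f x ≤ 1 ∧ 1 - (2 * ‖S‖ + α) ≤ f x ∧
        ‖f.smulRight (y i) + S‖ ≤ ‖f x • y i + S x‖ + α :=
      fun i => key_point f hf (y i) (hy i) S α hα
    choose p hp1 hp2 hp3 hp4 hp5 using hkeyp
    have hkeym : ∀ i, ∃ x : X, ‖x‖ ≤ 1 ∧ 0 ≤ f x ∧ f x ≤ 1 ∧ 1 - (2 * ‖S‖ + α) ≤ f x ∧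
        ‖f.smulRight (y i) - S‖ ≤ ‖f x • y i - S x‖ + α := by
      intro i
      obtain ⟨x, h1, h2, h3, h4, h5⟩ := key_point f hf (y i) (hy i) (-S) α hα
      rw [norm_neg] at h4
      refine ⟨x, h1, h2, h3, h4, ?_⟩
      have e1 : f.smulRight (y i) + -S = f.smulRight (y i) - S := by rw [sub_eq_add_neg]
      have e2 : f x • y i + (-S) x = f x • y i - S x := by
        rw [ContinuousLinearMap.neg_apply, sub_eq_add_neg]
      rw [e1, e2] at h5
      exact h5
    choose m hm1 hm2 hm3 hm4 hm5 using hkeym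
    set i0 : Fin n := ⟨0, hn⟩ with hi0def
    set x₀ : X := p i0 with hx₀def
    set w : Y := S x₀ with hwdef
    have hw : ‖w‖ ≤ ‖S‖ := by
      calc ‖w‖ = ‖S x₀‖ := rfl
        _ ≤ ‖S‖ * ‖x₀‖ := S.le_opNorm x₀
        _ ≤ ‖S‖ * 1 := mul_le_mul_of_nonneg_left (hp1 i0) (norm_nonneg S)
        _ = ‖S‖ := mul_one _
    -- distance bounds
    have hdp : ∀ i, ‖p i - x₀‖ ≤ D :=
      fun i => slice_diam f r η₀ β hr.le hη₀ hβ.le hsm (p i) x₀ (hp1 i) (hp1 i0) (hp4 i) (hp4 i0)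
    have hdm : ∀ i, ‖m i - x₀‖ ≤ D :=
      fun i => slice_diam f r η₀ β hr.le hη₀ hβ.le hsm (m i) x₀ (hm1 i) (hp1 i0) (hm4 i) (hp4 i0)
    have hD0 : 0 ≤ D := by positivity
    -- per-index estimates
    set E : ℝ := 2 * α + 2 * ‖S‖ * D + 2 * β * ‖S‖ with hEdef
    have hper : ∀ i, ‖T i + S‖ + ‖T i - S‖ ≤ ‖y i + w‖ + ‖y i - w‖ + E := by
      intro i
      have hplus : ‖T i + S‖ ≤ ‖y i + w‖ + (‖S‖ * D + β * ‖S‖ + α) := by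
        have h5 := hp5 i
        have hb := decomp_bound f S (y i) (p i) x₀ β D (hp1 i) (hp1 i0) (hp2 i) (hp3 i)
          (by have := hp4 i; rw [hβdef]; linarith) (hdp i)
        have hT : T i + S = f.smulRight (y i) + S := rfl
        rw [hT]
        have hwob : w = S x₀ := rfl
        rw [← hwob] at hb
        linarith
      have hminus : ‖T i - S‖ ≤ ‖y i - w‖ + (‖S‖ * D + β * ‖S‖ + α) := by
        have h5 := hm5 i
        have hb := decomp_bound_neg f S (y i) (m i) x₀ β D (hm1 i) (hp1 i0) (hm2 i) (hm3 i)
          (by have := hm4 i; rw [hβdef]; linarith) (hdm i)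
        have hT : T i - S = f.smulRight (y i) - S := rfl
        rw [hT]
        have hwob : w = S x₀ := rfl
        rw [← hwob] at hb
        linarith
      rw [hEdef]; linarith
    -- from the roughness of H
    have hcoe : ∀ i, ‖xH i + SH‖ = ‖T i + S‖ ∧ ‖xH i - SH‖ = ‖T i - S‖ := fun i => ⟨rfl, rfl⟩
    have hSineq' : (δ - ε/2) * ‖S‖ ≤ (1 / (n:ℝ)) * ∑ i, (‖T i + S‖ + ‖T i - S‖) - 2 := by
      have : ∑ i, (‖xH i + SH‖ + ‖xH i - SH‖) = ∑ i, (‖T i + S‖ + ‖T i - S‖) := by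
        apply Finset.sum_congr rfl
        intro i _
        rw [(hcoe i).1, (hcoe i).2]
      rw [this] at hSineq
      exact hSineq
    -- bound on E
    have hSC : ‖S‖ * C ≤ ε / 8 := by
      have h1 : ‖S‖ < (ε / 8) / C := lt_of_lt_of_le hSη' (min_le_right _ _)
      calc ‖S‖ * C ≤ ((ε / 8) / C) * C := mul_le_mul_of_nonneg_right h1.le hC.le
        _ = ε / 8 := div_mul_cancel₀ _ (ne_of_gt hC)
    have hE : E ≤ (ε / 2) * ‖S‖ := by
      have hEeq : E = ‖S‖ * (2 * ρ + 2 * r) + ‖S‖^2 * C := by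
        rw [hEdef, hDdef, hβdef, hαdef, hCdef]
        field_simp
        ring
      have h2ρ : 2 * ρ = ε / 8 := by rw [hρdef]; ring
      have h2r : 2 * r = ε / 4 := by rw [hrdef]; ring
      have : ‖S‖^2 * C = ‖S‖ * (‖S‖ * C) := by ring
      rw [hEeq, h2ρ, h2r, this]
      nlinarith [hS0'.le]
    -- combine
    have hsum2 : ∑ i, (‖T i + S‖ + ‖T i - S‖) ≤ ∑ i, (‖y i + w‖ + ‖y i - w‖) + (n:ℝ) * E := by
      calc ∑ i, (‖T i + S‖ + ‖T i - S‖)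
          ≤ ∑ i, (‖y i + w‖ + ‖y i - w‖ + E) := Finset.sum_le_sum (fun i _ => hper i)
        _ = ∑ i, (‖y i + w‖ + ‖y i - w‖) + (n:ℝ) * E := by
            rw [Finset.sum_add_distrib, Finset.sum_const, Finset.card_univ, Fintype.card_fin,
              nsmul_eq_mul]
    have hmain : 2 + (δ - ε) * ‖S‖ ≤ (1 / (n:ℝ)) * ∑ i, (‖y i + w‖ + ‖y i - w‖) := by
      have hdiv : (1 / (n:ℝ)) * ∑ i, (‖T i + S‖ + ‖T i - S‖)
          ≤ (1 / (n:ℝ)) * ∑ i, (‖y i + w‖ + ‖y i - w‖) + E := by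
        have h1 : (1 / (n:ℝ)) * ∑ i, (‖T i + S‖ + ‖T i - S‖)
            ≤ (1 / (n:ℝ)) * (∑ i, (‖y i + w‖ + ‖y i - w‖) + (n:ℝ) * E) := by
          apply mul_le_mul_of_nonneg_left hsum2 (by positivity)
        have h2 : (1 / (n:ℝ)) * (∑ i, (‖y i + w‖ + ‖y i - w‖) + (n:ℝ) * E)
            = (1 / (n:ℝ)) * ∑ i, (‖y i + w‖ + ‖y i - w‖) + E := by
          field_simp
        linarith
      nlinarith [hE]
    -- w is nonzero
    have hwpos : 0 < ‖w‖ := by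
      rcases (norm_nonneg w).lt_or_eq with hpos | heq
      · exact hpos
      · exfalso
        have hw0 : w = 0 := norm_eq_zero.mp heq.symm
        rw [hw0] at hmain
        have : ∑ i, (‖y i + (0:Y)‖ + ‖y i - (0:Y)‖) = (n:ℝ) * 2 := by
          have : ∀ i, ‖y i + (0:Y)‖ + ‖y i - (0:Y)‖ = 2 := by
            intro i; rw [add_zero, sub_zero, hy i]; norm_num
          rw [Finset.sum_congr rfl (fun i _ => this i), Finset.sum_const, Finset.card_univ,
            Fintype.card_fin, nsmul_eq_mul, mul_comm]
        rw [this] at hmain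
        have h3 : (1 / (n:ℝ)) * ((n:ℝ) * 2) = 2 := by field_simp
        rw [h3] at hmain
        nlinarith
    refine ⟨w, hwpos, lt_of_le_of_lt hw (lt_of_lt_of_le hSη' (min_le_left _ _)), ?_⟩
    have : (δ - ε) * ‖w‖ ≤ (δ - ε) * ‖S‖ :=
      mul_le_mul_of_nonneg_left hw (by linarith)
    linarith
end
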